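/- arXiv:1109.0392 — 8 statements merged into one kernel-verified Lean document; each statement's English description precedes it below -/
import Mathlib

section
/- Let μ be the Gaussian mixture probability measure on ℝ with density g(y) = Σ_{x=1}^k π_x φ_{m_x,σ²}(y), where σ² > 0, π_x > 0 and Σ_{x=1}^k π_x = 1. For a partition (I_1, …, I_k) of ℝ into k pairwise disjoint intervals whose union is ℝ, set σ²_{I_1,…,I_k} = Σ_{j=1}^k μ(I_j) · Var(μ ∣ I_j), with the convention that terms with μ(I_j) = 0 equal 0. Then the infimum of σ²_{I_1,…,I_k} over all partitions of ℝ into k intervals is strictly positive. -/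
open MeasureTheory ProbabilityTheory
open scoped NNReal ENNReal

private lemma aux_integrable_sq_exp {b : ℝ} (hb : 0 < b) (c : ℝ) :
    Integrable (fun x : ℝ => x ^ 2 * Real.exp (-b * (x - c) ^ 2)) := by
  have e2 : Integrable (fun y : ℝ => y ^ 2 * Real.exp (-b * y ^ 2)) := by
    have h := integrable_rpow_mul_exp_neg_mul_sq hb (s := 2) (by norm_num)
    rw [show ((2 : ℝ)) = ((2 : ℕ) : ℝ) by norm_num] at h
    simpa [Real.rpow_natCast] using h
  have e1 : Integrable (fun y : ℝ => y * Real.exp (-b * y ^ 2)) :=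
    integrable_mul_exp_neg_mul_sq hb
  have e0 : Integrable (fun y : ℝ => Real.exp (-b * y ^ 2)) :=
    integrable_exp_neg_mul_sq hb
  have h2 : Integrable (fun y : ℝ => (y + c) ^ 2 * Real.exp (-b * y ^ 2)) := by
    have heq : (fun y : ℝ => (y + c) ^ 2 * Real.exp (-b * y ^ 2))
        = fun y : ℝ => y ^ 2 * Real.exp (-b * y ^ 2)
          + ((2 * c) * (y * Real.exp (-b * y ^ 2)) + (c ^ 2) * Real.exp (-b * y ^ 2)) := by
      funext y; ring
    rw [heq]
    exact e2.add ((e1.const_mul (2 * c)).add (e0.const_mul (c ^ 2)))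
  have h3 := h2.comp_sub_right c
  simpa using h3

private lemma aux_lintegral_sq_gaussian_lt_top (c : ℝ) {v : ℝ≥0} (hv : v ≠ 0) :
    ∫⁻ x : ℝ, (‖x‖₊ : ℝ≥0∞) ^ 2 ∂(gaussianReal c v) < ⊤ := by
  have hv' : (0 : ℝ) < (v : ℝ) := by positivity
  have hb : (0 : ℝ) < (2 * (v : ℝ))⁻¹ := by positivity
  have hmeas : Measurable (fun x : ℝ => (‖x‖₊ : ℝ≥0∞) ^ 2) :=
    measurable_nnnorm.coe_nnreal_ennreal.pow_const 2
  rw [gaussianReal_of_var_ne_zero _ hv,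
    lintegral_withDensity_eq_lintegral_mul _ (measurable_gaussianPDF _ _) hmeas]
  have heq : ∀ x : ℝ, (gaussianPDF c v * fun x : ℝ => (‖x‖₊ : ℝ≥0∞) ^ 2) x
      = ENNReal.ofReal (gaussianPDFReal c v x * x ^ 2) := by
    intro x
    have h1 : ((‖x‖₊ : ℝ≥0∞)) ^ 2 = ENNReal.ofReal (x ^ 2) := by
      rw [← ENNReal.ofReal_coe_nnreal, coe_nnnorm, ← ENNReal.ofReal_pow (norm_nonneg x),
        Real.norm_eq_abs, sq_abs]
    simp only [Pi.mul_apply, gaussianPDF, h1,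
      ← ENNReal.ofReal_mul (gaussianPDFReal_nonneg c v x)]
  calc ∫⁻ x : ℝ, (gaussianPDF c v * fun x : ℝ => (‖x‖₊ : ℝ≥0∞) ^ 2) x
      = ∫⁻ x : ℝ, ENNReal.ofReal (gaussianPDFReal c v x * x ^ 2) := by
        simp_rw [heq]
    _ < ⊤ := by
        refine Integrable.lintegral_lt_top ?_
        have hint := (aux_integrable_sq_exp hb c).const_mul (Real.sqrt (2 * Real.pi * v))⁻¹
        have heq2 : (fun x : ℝ => gaussianPDFReal c v x * x ^ 2)
            = fun x : ℝ => (Real.sqrt (2 * Real.pi * v))⁻¹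
              * (x ^ 2 * Real.exp (-(2 * (v : ℝ))⁻¹ * (x - c) ^ 2)) := by
          funext x
          rw [gaussianPDFReal]
          rw [show -(x - c) ^ 2 / (2 * (v : ℝ)) = -(2 * (v : ℝ))⁻¹ * (x - c) ^ 2 by
            field_simp]
          ring
        rw [heq2]
        exact hint

/-- For a Gaussian mixture `μ` on `ℝ`, the infimum, over all partitions of `ℝ` into `k`
intervals, of the mean within-interval conditional variance
`∑ j, μ(I j) * Var(μ | I j)` is strictly positive. -/
theorem inf_partition_condVar_pos
    (k : ℕ) (hk : 1 ≤ k) (σ2 : ℝ) (hσ2 : 0 < σ2) (m : Fin k → ℝ)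
    (π' : Fin k → ℝ) (hπ : ∀ x, 0 < π' x) (hπsum : ∑ x, π' x = 1)
    (μ : Measure ℝ)
    (hμ : μ = ∑ x, ENNReal.ofReal (π' x) • gaussianReal (m x) (⟨σ2, hσ2.le⟩ : ℝ≥0)) :
    ∃ ε > 0, ∀ I : Fin k → Set ℝ,
      (∀ j, (I j).OrdConnected) → Pairwise (Function.onFun Disjoint I) →
      (⋃ j, I j) = Set.univ →
      ε ≤ ∑ j, (μ (I j)).toReal * variance id (μ[|I j]) := by
  set v : ℝ≥0 := (⟨σ2, hσ2.le⟩ : ℝ≥0) with hv_def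
  have hv : v ≠ 0 := by
    simp only [hv_def, ne_eq, ← NNReal.coe_eq_zero]
    exact fun h => hσ2.ne' (congrArg NNReal.toReal h)
  have hvσ : (v : ℝ) = σ2 := rfl
  have hkpos : (0 : ℝ) < (k : ℝ) := by exact_mod_cast hk
  -- upper bound for the density
  set C : ℝ := (Real.sqrt (2 * Real.pi * σ2))⁻¹ with hC_def
  have hCpos : 0 < C := by
    have h := Real.sqrt_pos.mpr (show 0 < 2 * Real.pi * σ2 by positivity)
    positivity
  have hpdf_le : ∀ (c x : ℝ), gaussianPDFReal c v x ≤ C := by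
    intro c x
    rw [gaussianPDFReal, hvσ]
    calc (Real.sqrt (2 * Real.pi * σ2))⁻¹ * Real.exp (-(x - c) ^ 2 / (2 * σ2))
        ≤ (Real.sqrt (2 * Real.pi * σ2))⁻¹ * 1 := by
          refine mul_le_mul_of_nonneg_left ?_ (by positivity)
          rw [Real.exp_le_one_iff]
          exact div_nonpos_of_nonpos_of_nonneg (neg_nonpos.mpr (by positivity)) (by positivity)
      _ = C := by rw [mul_one]
  -- μ is a probability measure
  have hsum_ofReal : ∑ x : Fin k, ENNReal.ofReal (π' x) = 1 := by
    rw [← ENNReal.ofReal_sum_of_nonneg (fun x _ => (hπ x).le), hπsum, ENNReal.ofReal_one]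
  have hμs : ∀ s : Set ℝ,
      μ s = ∑ x : Fin k, ENNReal.ofReal (π' x) * gaussianReal (m x) v s := by
    intro s
    rw [hμ, Measure.finset_sum_apply]
    simp [Measure.smul_apply, smul_eq_mul]
  have hprob : IsProbabilityMeasure μ := by
    constructor
    rw [hμs Set.univ]
    simp [measure_univ, hsum_ofReal]
  -- upper bound: μ s ≤ C * volume s
  have hupper : ∀ s : Set ℝ, μ s ≤ ENNReal.ofReal C * volume s := by
    intro s
    rw [hμs s]
    have h1 : ∀ x : Fin k, gaussianReal (m x) v s ≤ ENNReal.ofReal C * volume s := by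
      intro x
      rw [gaussianReal_apply _ hv s]
      calc ∫⁻ y in s, gaussianPDF (m x) v y
          ≤ ∫⁻ _ in s, ENNReal.ofReal C := by
            refine setLIntegral_mono measurable_const (fun y _ => ?_)
            exact ENNReal.ofReal_le_ofReal (hpdf_le (m x) y)
        _ = ENNReal.ofReal C * volume s := setLIntegral_const s _
    calc ∑ x : Fin k, ENNReal.ofReal (π' x) * gaussianReal (m x) v s
        ≤ ∑ x : Fin k, ENNReal.ofReal (π' x) * (ENNReal.ofReal C * volume s) :=
          Finset.sum_le_sum (fun x _ => mul_le_mul_right (h1 x) _)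
      _ = ENNReal.ofReal C * volume s := by
          rw [← Finset.sum_mul, hsum_ofReal, one_mul]
  -- choose a window W = [-n, n] with μ W > 1/2
  obtain ⟨n, hn⟩ : ∃ n : ℕ, 1 / 2 < μ (Set.Icc (-(n : ℝ)) n) := by
    have hmono : Monotone (fun n : ℕ => Set.Icc (-(n : ℝ)) n) := by
      intro a b hab
      exact Set.Icc_subset_Icc (by simp [Nat.cast_le.mpr hab]) (Nat.cast_le.mpr hab)
    have hunion : (⋃ n : ℕ, Set.Icc (-(n : ℝ)) n) = Set.univ := by
      ext x
      simp only [Set.mem_iUnion, Set.mem_Icc, Set.mem_univ, iff_true]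
      obtain ⟨n, hn⟩ := exists_nat_ge |x|
      obtain ⟨h1, h2⟩ := abs_le.mp hn
      exact ⟨n, by linarith, by linarith⟩
    have htend := tendsto_measure_iUnion_atTop (μ := μ) hmono
    rw [hunion, measure_univ] at htend
    have h2 : ∀ᶠ nn : ℕ in Filter.atTop,
        1 / 2 < (μ ∘ fun n : ℕ => Set.Icc (-(n : ℝ)) n) nn :=
      htend.eventually_const_lt (by norm_num)
    obtain ⟨n, hn⟩ := h2.exists
    exact ⟨n, hn⟩
  set W : Set ℝ := Set.Icc (-(n : ℝ)) n with hW_def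
  have hWm : MeasurableSet W := measurableSet_Icc
  -- lower bound for the density on W
  set x0 : Fin k := ⟨0, hk⟩ with hx0_def
  set c1 : ℝ := C * Real.exp (-((n : ℝ) + |m x0|) ^ 2 / (2 * σ2)) with hc1_def
  set c0 : ℝ := π' x0 * c1 with hc0_def
  have hc1pos : 0 < c1 := by positivity
  have hc0pos : 0 < c0 := mul_pos (hπ x0) hc1pos
  have hlower : ∀ s : Set ℝ, s ⊆ W → ENNReal.ofReal c0 * volume s ≤ μ s := by
    intro s hsW
    have hpdf_ge : ∀ x ∈ s, c1 ≤ gaussianPDFReal (m x0) v x := by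
      intro x hx
      obtain ⟨hx1, hx2⟩ := hsW hx
      rw [gaussianPDFReal, hvσ, hc1_def]
      refine mul_le_mul_of_nonneg_left ?_ (by positivity)
      apply Real.exp_le_exp.mpr
      have habs : (x - m x0) ^ 2 ≤ ((n : ℝ) + |m x0|) ^ 2 := by
        have h1 : |x - m x0| ≤ (n : ℝ) + |m x0| := by
          calc |x - m x0| ≤ |x| + |m x0| := abs_sub _ _
            _ ≤ (n : ℝ) + |m x0| := by
                have : |x| ≤ (n : ℝ) := abs_le.mpr ⟨hx1, hx2⟩
                linarith
        calc (x - m x0) ^ 2 = |x - m x0| ^ 2 := (sq_abs _).symm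
          _ ≤ ((n : ℝ) + |m x0|) ^ 2 := by
              exact pow_le_pow_left₀ (abs_nonneg _) h1 2
      have h2σ : (0 : ℝ) < 2 * σ2 := by positivity
      exact (div_le_div_iff_of_pos_right h2σ).mpr (neg_le_neg habs)
    have h1 : ENNReal.ofReal c1 * volume s ≤ gaussianReal (m x0) v s := by
      rw [gaussianReal_apply _ hv s]
      calc ENNReal.ofReal c1 * volume s
          = ∫⁻ _ in s, ENNReal.ofReal c1 := (setLIntegral_const s _).symm
        _ ≤ ∫⁻ y in s, gaussianPDF (m x0) v y := by
            refine setLIntegral_mono (measurable_gaussianPDF _ _) (fun y hy => ?_)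
            exact ENNReal.ofReal_le_ofReal (hpdf_ge y hy)
    rw [hμs s]
    calc ENNReal.ofReal c0 * volume s
        = ENNReal.ofReal (π' x0) * (ENNReal.ofReal c1 * volume s) := by
          rw [hc0_def, ENNReal.ofReal_mul (hπ x0).le, mul_assoc]
      _ ≤ ENNReal.ofReal (π' x0) * gaussianReal (m x0) v s := mul_le_mul_right h1 _
      _ ≤ ∑ x : Fin k, ENNReal.ofReal (π' x) * gaussianReal (m x) v s :=
          Finset.single_le_sum
            (f := fun x : Fin k => ENNReal.ofReal (π' x) * gaussianReal (m x) v s)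
            (fun x _ => zero_le) (Finset.mem_univ x0)
  -- the constants
  set β : ℝ := (2 * (k : ℝ))⁻¹ with hβ_def
  have hβpos : 0 < β := by positivity
  set ℓ : ℝ := β / C with hℓ_def
  have hℓpos : 0 < ℓ := by positivity
  set Vlb : ℝ := (ℓ / 6) ^ 2 * (c0 * (ℓ / 3)) with hVlb_def
  have hVpos : 0 < Vlb := by positivity
  refine ⟨β * Vlb, by positivity, ?_⟩
  intro I hc hd hcov
  have hIm : ∀ j, MeasurableSet (I j) := fun j => (hc j).measurableSet
  set S : Fin k → Set ℝ := fun j => I j ∩ W with hS_def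
  have hSm : ∀ j, MeasurableSet (S j) := fun j => (hIm j).inter hWm
  have hSd : Pairwise (Function.onFun Disjoint S) := fun i j hij =>
    ((hd hij).mono Set.inter_subset_left Set.inter_subset_left)
  have hWeq : W = ⋃ j, S j := by
    rw [hS_def]
    rw [← Set.iUnion_inter, hcov, Set.univ_inter]
  have hWsum : μ W = ∑ j, μ (S j) := by
    rw [hWeq, measure_iUnion hSd hSm, tsum_fintype]
  -- pigeonhole: some S j has measure at least β
  obtain ⟨j, hj⟩ : ∃ j, ENNReal.ofReal β ≤ μ (S j) := by
    by_contra hcon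
    push_neg at hcon
    have hle : μ W ≤ 1 / 2 := by
      rw [hWsum]
      calc ∑ j, μ (S j) ≤ ∑ _j : Fin k, ENNReal.ofReal β :=
            Finset.sum_le_sum (fun j _ => (hcon j).le)
        _ = (k : ℝ≥0∞) * ENNReal.ofReal β := by
            rw [Finset.sum_const, Finset.card_univ, Fintype.card_fin, nsmul_eq_mul]
        _ = ENNReal.ofReal ((k : ℝ) * β) := by
            rw [ENNReal.ofReal_mul (by positivity), ENNReal.ofReal_natCast]
        _ = ENNReal.ofReal (1 / 2 : ℝ) := by
            congr 1
            rw [hβ_def]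
            field_simp
        _ = 1 / 2 := by
            rw [show (1 : ℝ) / 2 = 2⁻¹ by norm_num,
              ENNReal.ofReal_inv_of_pos (by norm_num), ENNReal.ofReal_ofNat, one_div]
    exact absurd (hn.trans_le hle) (lt_irrefl _)
  have hjI : ENNReal.ofReal β ≤ μ (I j) := hj.trans (measure_mono Set.inter_subset_left)
  have hμI0 : μ (I j) ≠ 0 :=
    ((ENNReal.ofReal_pos.mpr hβpos).trans_le hjI).ne'
  have hνprob : IsProbabilityMeasure (μ[|I j]) := cond_isProbabilityMeasure hμI0
  -- the selected piece has diameter at least ℓ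
  have hvolS : ENNReal.ofReal ℓ ≤ volume (S j) := by
    have h1 : ENNReal.ofReal β ≤ ENNReal.ofReal C * volume (S j) := hj.trans (hupper (S j))
    rw [hℓ_def, ENNReal.ofReal_div_of_pos hCpos]
    exact ENNReal.div_le_of_le_mul (h1.trans_eq (mul_comm _ _))
  have hSne : (S j).Nonempty := by
    rw [Set.nonempty_iff_ne_empty]
    intro h0
    rw [h0, measure_empty, nonpos_iff_eq_zero] at hj
    exact (ENNReal.ofReal_pos.mpr hβpos).ne' hj
  have hSbddA : BddAbove (S j) := BddAbove.mono Set.inter_subset_right bddAbove_Icc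
  have hSbddB : BddBelow (S j) := BddBelow.mono Set.inter_subset_right bddBelow_Icc
  set a : ℝ := sInf (S j) with ha_def
  set b : ℝ := sSup (S j) with hb_def
  have hab_sub : S j ⊆ Set.Icc a b := fun x hx => ⟨csInf_le hSbddB hx, le_csSup hSbddA hx⟩
  have haleb : a ≤ b := csInf_le_csSup hSne hSbddB hSbddA
  have hba : ℓ ≤ b - a := by
    have h1 : ENNReal.ofReal ℓ ≤ ENNReal.ofReal (b - a) := by
      refine hvolS.trans ?_
      rw [← Real.volume_Icc]
      exact measure_mono hab_sub
    exact (ENNReal.ofReal_le_ofReal_iff (by linarith)).mp h1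
  have hIoo : Set.Ioo a b ⊆ S j := by
    intro x hx
    obtain ⟨s1, hs1S, hs1⟩ := exists_lt_of_csInf_lt hSne hx.1
    obtain ⟨s2, hs2S, hs2⟩ := exists_lt_of_lt_csSup hSne hx.2
    exact ((hc j).inter Set.ordConnected_Icc).out hs1S hs2S ⟨hs1.le, hs2.le⟩
  set ν : Measure ℝ := μ[|I j] with hν_def
  set mν : ℝ := ∫ x, id x ∂ν with hmν_def
  -- choose a third of the interval far from the mean
  obtain ⟨J, hJS, hJvol, hJfar⟩ : ∃ J : Set ℝ, J ⊆ S j ∧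
      volume J = ENNReal.ofReal (ℓ / 3) ∧ ∀ x ∈ J, ℓ / 6 ≤ |x - mν| := by
    rcases le_or_gt mν (a + ℓ / 2) with hm | hm
    · refine ⟨Set.Ioo (a + 2 * ℓ / 3) (a + ℓ), ?_, ?_, ?_⟩
      · intro x hx
        exact hIoo ⟨by linarith [hx.1], by linarith [hx.2]⟩
      · rw [Real.volume_Ioo]
        congr 1
        ring
      · intro x hx
        have h1 : ℓ / 6 ≤ x - mν := by linarith [hx.1]
        exact h1.trans (le_abs_self _)
    · refine ⟨Set.Ioo a (a + ℓ / 3), ?_, ?_, ?_⟩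
      · intro x hx
        exact hIoo ⟨hx.1, by linarith [hx.2]⟩
      · rw [Real.volume_Ioo]
        congr 1
        ring
      · intro x hx
        have h1 : ℓ / 6 ≤ mν - x := by linarith [hx.2]
        calc ℓ / 6 ≤ mν - x := h1
          _ ≤ |mν - x| := le_abs_self _
          _ = |x - mν| := abs_sub_comm _ _
  have hJI : J ⊆ I j := fun x hx => (hJS hx).1
  have hJW : J ⊆ W := fun x hx => (hJS hx).2
  -- the conditional measure of J is bounded below
  have hμJ : ENNReal.ofReal (c0 * (ℓ / 3)) ≤ μ J := by
    have h1 := hlower J hJW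
    rwa [hJvol, ← ENNReal.ofReal_mul hc0pos.le] at h1
  have hνJ : ENNReal.ofReal (c0 * (ℓ / 3)) ≤ ν J := by
    rw [hν_def, cond_apply (hIm j) μ J, Set.inter_eq_self_of_subset_right hJI]
    calc ENNReal.ofReal (c0 * (ℓ / 3)) ≤ μ J := hμJ
      _ = 1 * μ J := (one_mul _).symm
      _ ≤ (μ (I j))⁻¹ * μ J := mul_le_mul_left (ENNReal.one_le_inv.mpr prob_le_one) _
  -- lower bound on the evariance
  have hev_low : ENNReal.ofReal Vlb ≤ evariance id ν := by
    rw [evariance]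
    have hmeasv : Measurable fun x : ℝ => ((‖id x - ν[id]‖₊ : ℝ≥0∞)) ^ 2 :=
      ((measurable_id.sub_const _).nnnorm.coe_nnreal_ennreal.pow_const 2)
    calc ENNReal.ofReal Vlb
        = ENNReal.ofReal ((ℓ / 6) ^ 2) * ENNReal.ofReal (c0 * (ℓ / 3)) := by
          rw [hVlb_def, ENNReal.ofReal_mul (by positivity)]
      _ ≤ ENNReal.ofReal ((ℓ / 6) ^ 2) * ν J := mul_le_mul_right hνJ _
      _ = ∫⁻ _ in J, ENNReal.ofReal ((ℓ / 6) ^ 2) ∂ν := (setLIntegral_const _ _).symm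
      _ ≤ ∫⁻ x in J, (‖id x - ν[id]‖₊ : ℝ≥0∞) ^ 2 ∂ν := by
          refine setLIntegral_mono hmeasv (fun x hx => ?_)
          rw [← ENNReal.ofReal_coe_nnreal, coe_nnnorm, ← ENNReal.ofReal_pow (norm_nonneg _)]
          refine ENNReal.ofReal_le_ofReal ?_
          rw [Real.norm_eq_abs]
          have h1 : ℓ / 6 ≤ |id x - mν| := hJfar x hx
          calc (ℓ / 6) ^ 2 ≤ |id x - mν| ^ 2 := pow_le_pow_left₀ (by positivity) h1 2
            _ = |id x - ν[id]| ^ 2 := by rw [hmν_def]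
      _ ≤ ∫⁻ x, (‖id x - ν[id]‖₊ : ℝ≥0∞) ^ 2 ∂ν := setLIntegral_le_lintegral _ _
  -- the evariance is finite
  have hμsq : ∫⁻ x, (‖x‖₊ : ℝ≥0∞) ^ 2 ∂μ < ⊤ := by
    rw [hμ, lintegral_finset_sum_measure]
    refine ENNReal.sum_lt_top.mpr (fun x _ => ?_)
    rw [lintegral_smul_measure]
    exact ENNReal.mul_lt_top ENNReal.ofReal_lt_top (aux_lintegral_sq_gaussian_lt_top (m x) hv)
  have hsqν : ∫⁻ x, (‖x‖₊ : ℝ≥0∞) ^ 2 ∂ν < ⊤ := by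
    have hcond : ν = (μ (I j))⁻¹ • μ.restrict (I j) := rfl
    rw [hcond, lintegral_smul_measure]
    refine ENNReal.mul_lt_top ?_ ((setLIntegral_le_lintegral _ _).trans_lt hμsq)
    exact (ENNReal.inv_ne_top.mpr hμI0).lt_top
  have hmem : MemLp id 2 ν := by
    rw [memLp_two_iff_integrable_sq aestronglyMeasurable_id]
    refine ⟨(measurable_id.pow_const 2).aestronglyMeasurable, ?_⟩
    show (∫⁻ x, (‖(fun x : ℝ => id x ^ 2) x‖₊ : ℝ≥0∞) ∂ν) < ⊤
    simp only [id_eq, nnnorm_pow, ENNReal.coe_pow]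
    exact hsqν
  have hev_top : evariance id ν ≠ ⊤ := hmem.evariance_lt_top.ne
  -- conclude
  have hvar : Vlb ≤ variance id ν := by
    rw [variance]
    calc Vlb = (ENNReal.ofReal Vlb).toReal := by rw [ENNReal.toReal_ofReal hVpos.le]
      _ ≤ (evariance id ν).toReal := ENNReal.toReal_mono hev_top hev_low
  have hμIR : β ≤ (μ (I j)).toReal := by
    have h1 := ENNReal.toReal_mono (measure_ne_top μ (I j)) hjI
    rwa [ENNReal.toReal_ofReal hβpos.le] at h1
  calc β * Vlb ≤ (μ (I j)).toReal * variance id ν :=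
        mul_le_mul hμIR hvar hVpos.le ENNReal.toReal_nonneg
    _ ≤ ∑ j', (μ (I j')).toReal * variance id (μ[|I j']) :=
        Finset.single_le_sum
          (f := fun j' : Fin k => (μ (I j')).toReal * variance id (μ[|I j']))
          (fun j' _ => mul_nonneg ENNReal.toReal_nonneg (variance_nonneg _ _))
          (Finset.mem_univ j)
end

section
/- Let μ be the Gaussian mixture probability measure on ℝ with density g(y) = Σ_{x=1}^k π_x φ_{m_x,σ²}(y), where σ² > 0, π_x > 0 and Σ_{x=1}^k π_x = 1, and let c ∈ (0, 1]. Then inf { Var(μ ∣ I) : I an interval of ℝ with μ(I) ≥ c } > 0. -/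
open MeasureTheory ProbabilityTheory Real
open scoped NNReal ENNReal

lemma integrable_sq_gaussianReal (m : ℝ) (v : ℝ≥0) (hv : v ≠ 0) :
    Integrable (fun x : ℝ => x ^ 2) (gaussianReal m v) := by
  have hvpos : (0 : ℝ) < (v : ℝ) := by positivity
  rw [gaussianReal_of_var_ne_zero _ hv,
    integrable_withDensity_iff (measurable_gaussianPDF m v)
      (ae_of_all _ fun x => ENNReal.ofReal_lt_top)]
  have heq : (fun x : ℝ => x ^ 2 * (gaussianPDF m v x).toReal)
      = fun x : ℝ => x ^ 2 * gaussianPDFReal m v x := by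
    funext x
    rw [gaussianPDF, ENNReal.toReal_ofReal (gaussianPDFReal_nonneg _ _ _)]
  rw [heq]
  set C : ℝ := (Real.sqrt (2 * π * v))⁻¹ with hC
  set b : ℝ := (2 * (v : ℝ))⁻¹ with hb
  have hbpos : 0 < b := by positivity
  have h2 : Integrable (fun y : ℝ => y ^ 2 * Real.exp (-b * y ^ 2)) := by
    have := integrable_rpow_mul_exp_neg_mul_sq hbpos (s := 2) (by norm_num)
    have h22 : ∀ y : ℝ, y ^ (2 : ℝ) = y ^ 2 := fun y => by
      rw [show (2 : ℝ) = ((2 : ℕ) : ℝ) by norm_num, Real.rpow_natCast]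
    simpa [h22] using this
  have h1 : Integrable (fun y : ℝ => y * Real.exp (-b * y ^ 2)) :=
    integrable_mul_exp_neg_mul_sq hbpos
  have h0 : Integrable (fun y : ℝ => Real.exp (-b * y ^ 2)) :=
    integrable_exp_neg_mul_sq hbpos
  have hsum : Integrable (fun y : ℝ =>
      C * (y ^ 2 * Real.exp (-b * y ^ 2)) + (2 * m * C) * (y * Real.exp (-b * y ^ 2))
        + (m ^ 2 * C) * Real.exp (-b * y ^ 2)) :=
    ((h2.const_mul C).add (h1.const_mul (2 * m * C))).add (h0.const_mul (m ^ 2 * C))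
  have hshift := hsum.comp_sub_right m
  refine hshift.congr (ae_of_all _ fun x => ?_)
  have hexp : Real.exp (-b * (x - m) ^ 2) = Real.exp (-(x - m) ^ 2 / (2 * (v : ℝ))) := by
    congr 1
    rw [hb]
    field_simp
  simp only [gaussianPDFReal]
  rw [hexp]
  ring

lemma gaussianPDFReal_le (m : ℝ) (v : ℝ≥0) (x : ℝ) :
    gaussianPDFReal m v x ≤ (Real.sqrt (2 * π * v))⁻¹ := by
  rw [gaussianPDFReal]
  have h1 : Real.exp (-(x - m) ^ 2 / (2 * (v : ℝ))) ≤ 1 := by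
    rcases eq_or_ne (v : ℝ) 0 with hv | hv
    · rcases eq_or_ne ((x - m) ^ 2) 0 with h | h
      · simp [hv, h]
      · simp [hv]
    · have hvpos : (0 : ℝ) < (v : ℝ) := lt_of_le_of_ne v.2 (Ne.symm hv)
      rw [Real.exp_le_one_iff]
      apply div_nonpos_of_nonpos_of_nonneg
      · simpa using sq_nonneg (x - m)
      · positivity
  calc (Real.sqrt (2 * π * v))⁻¹ * Real.exp (-(x - m) ^ 2 / (2 * (v : ℝ)))
      ≤ (Real.sqrt (2 * π * v))⁻¹ * 1 := by
        apply mul_le_mul_of_nonneg_left h1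
        positivity
    _ = (Real.sqrt (2 * π * v))⁻¹ := mul_one _

/-- For a Gaussian mixture `μ` on `ℝ` and any `c ∈ (0,1]`, the infimum of the conditional
variances `Var(μ | I)` over all intervals `I` with `μ(I) ≥ c` is strictly positive. -/
theorem inf_condVar_interval_pos
    (k : ℕ) (hk : 1 ≤ k) (σ2 : ℝ) (hσ2 : 0 < σ2) (m : Fin k → ℝ)
    (π' : Fin k → ℝ) (hπ : ∀ x, 0 < π' x) (hπsum : ∑ x, π' x = 1)
    (μ : Measure ℝ)
    (hμ : μ = ∑ x, ENNReal.ofReal (π' x) • gaussianReal (m x) (⟨σ2, hσ2.le⟩ : ℝ≥0))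
    (c : ℝ) (hc0 : 0 < c) (hc1 : c ≤ 1) :
    0 < sInf {v : ℝ | ∃ I : Set ℝ, I.OrdConnected ∧ c ≤ (μ I).toReal ∧
      v = variance id (μ[|I])} := by
  set v : ℝ≥0 := (⟨σ2, hσ2.le⟩ : ℝ≥0) with hvdef
  have hv : v ≠ 0 := by
    intro h
    have : (v : ℝ) = 0 := by rw [h]; simp
    exact absurd this (ne_of_gt hσ2)
  have hπsum' : (∑ x, ENNReal.ofReal (π' x)) = 1 := by
    rw [← ENNReal.ofReal_sum_of_nonneg (fun x _ => (hπ x).le), hπsum, ENNReal.ofReal_one]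
  -- μ is a probability measure
  have hprob : IsProbabilityMeasure μ := by
    constructor
    rw [hμ]
    simp only [Measure.finset_sum_apply, Measure.smul_apply, smul_eq_mul, measure_univ, mul_one]
    exact hπsum'
  -- second moment of μ is finite
  have hint_sq : Integrable (fun x : ℝ => x ^ 2) μ := by
    rw [hμ]
    rw [integrable_finset_sum_measure]
    intro x _
    exact (integrable_sq_gaussianReal (m x) v hv).smul_measure ENNReal.ofReal_ne_top
  have hmemμ : MemLp id 2 μ := by
    rw [memLp_two_iff_integrable_sq measurable_id.aestronglyMeasurable]
    simpa using hint_sq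
  -- density bound
  set M : ℝ := (Real.sqrt (2 * π * σ2))⁻¹ with hMdef
  have hMpos : 0 < M := by
    have : 0 < Real.sqrt (2 * π * σ2) := Real.sqrt_pos.2 (by positivity)
    positivity
  have hdens : ∀ s : Set ℝ, MeasurableSet s → μ s ≤ ENNReal.ofReal M * volume s := by
    intro s hs
    rw [hμ]
    simp only [Measure.finset_sum_apply, Measure.smul_apply, smul_eq_mul]
    have hgauss : ∀ x : Fin k, gaussianReal (m x) v s ≤ ENNReal.ofReal M * volume s := by
      intro x
      rw [gaussianReal_apply _ hv s]
      calc ∫⁻ y in s, gaussianPDF (m x) v y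
          ≤ ∫⁻ _ in s, ENNReal.ofReal M := by
            refine setLIntegral_mono measurable_const (fun y _ => ?_)
            exact ENNReal.ofReal_le_ofReal (gaussianPDFReal_le (m x) v y)
        _ = ENNReal.ofReal M * volume s := setLIntegral_const s _
    calc ∑ x, ENNReal.ofReal (π' x) * gaussianReal (m x) v s
        ≤ ∑ x, ENNReal.ofReal (π' x) * (ENNReal.ofReal M * volume s) := by
          exact Finset.sum_le_sum fun x _ => mul_le_mul_right (hgauss x) _
      _ = (∑ x, ENNReal.ofReal (π' x)) * (ENNReal.ofReal M * volume s) := by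
          rw [Finset.sum_mul]
      _ = ENNReal.ofReal M * volume s := by rw [hπsum', one_mul]
  -- the lower bound
  set r : ℝ := c / (4 * M) with hrdef
  have hrpos : 0 < r := by positivity
  set ε : ℝ := r ^ 2 / 2 with hεdef
  have hεpos : 0 < ε := by positivity
  -- key claim: every element of the set is at least ε
  have hkey : ∀ w ∈ {w : ℝ | ∃ I : Set ℝ, I.OrdConnected ∧ c ≤ (μ I).toReal ∧
      w = variance id (μ[|I])}, ε ≤ w := by
    rintro w ⟨I, hIord, hIc, rfl⟩
    have hImeas : MeasurableSet I := hIord.measurableSet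
    have hμI0 : μ I ≠ 0 := by
      intro h
      rw [h] at hIc
      simp at hIc
      linarith
    have hμIc : ENNReal.ofReal c ≤ μ I :=
      ENNReal.ofReal_le_of_le_toReal hIc
    have hν : IsProbabilityMeasure (μ[|I]) := cond_isProbabilityMeasure hμI0
    set ν := μ[|I] with hνdef
    have hmemν : MemLp id 2 ν := by
      have h1 : MemLp id 2 (μ.restrict I) := hmemμ.restrict I
      have h2 := h1.smul_measure (c := (μ I)⁻¹) (by simp [hμI0])
      exact h2
    set mb : ℝ := ∫ x, id x ∂ν with hmb
    set A : Set ℝ := {ω : ℝ | r ≤ |ω - mb|} with hA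
    have hAmeas : MeasurableSet A := by
      have : A = (fun ω : ℝ => |ω - mb|) ⁻¹' Set.Ici r := rfl
      rw [this]
      exact (((measurable_id.sub_const mb)).abs) measurableSet_Ici
    -- complement bound
    have hcomplsub : Aᶜ ⊆ Set.Ioo (mb - r) (mb + r) := by
      intro ω hω
      simp only [hA, Set.mem_compl_iff, Set.mem_setOf_eq, not_le] at hω
      rw [abs_lt] at hω
      constructor <;> [linarith [hω.1]; linarith [hω.2]]
    have hvolIoo : volume (Set.Ioo (mb - r) (mb + r)) = ENNReal.ofReal (2 * r) := by
      rw [Real.volume_Ioo]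
      congr 1
      ring
    have hcompl : ν Aᶜ ≤ ENNReal.ofReal (1 / 2) := by
      have h1 : ν Aᶜ = (μ I)⁻¹ * μ (I ∩ Aᶜ) := cond_apply hImeas μ Aᶜ
      have h2 : μ (I ∩ Aᶜ) ≤ μ (Set.Ioo (mb - r) (mb + r)) :=
        measure_mono (Set.Subset.trans Set.inter_subset_right hcomplsub)
      have h3 : μ (Set.Ioo (mb - r) (mb + r)) ≤ ENNReal.ofReal M * ENNReal.ofReal (2 * r) := by
        rw [← hvolIoo]
        exact hdens _ measurableSet_Ioo
      have h4 : ENNReal.ofReal M * ENNReal.ofReal (2 * r) = ENNReal.ofReal (c / 2) := by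
        rw [← ENNReal.ofReal_mul hMpos.le]
        congr 1
        rw [hrdef]
        field_simp
        ring
      have h5 : (μ I)⁻¹ ≤ (ENNReal.ofReal c)⁻¹ := ENNReal.inv_le_inv' hμIc
      calc ν Aᶜ = (μ I)⁻¹ * μ (I ∩ Aᶜ) := h1
        _ ≤ (ENNReal.ofReal c)⁻¹ * ENNReal.ofReal (c / 2) := by
            refine mul_le_mul' h5 ((h2.trans h3).trans_eq h4)
        _ = (ENNReal.ofReal c)⁻¹ * (ENNReal.ofReal c * ENNReal.ofReal (1 / 2)) := by
            rw [← ENNReal.ofReal_mul hc0.le]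
            congr 1
            ring
        _ = ENNReal.ofReal (1 / 2) := by
            rw [← mul_assoc, ENNReal.inv_mul_cancel (by simp [hc0]) ENNReal.ofReal_ne_top,
              one_mul]
    have hhalf : ENNReal.ofReal (1 / 2) + ENNReal.ofReal (1 / 2) = 1 := by
      rw [← ENNReal.ofReal_add (by norm_num) (by norm_num)]
      norm_num
    have hAbig : ENNReal.ofReal (1 / 2) ≤ ν A := by
      have hsum : ν A + ν Aᶜ = 1 := by
        rw [measure_add_measure_compl hAmeas, measure_univ]
      have h6 : ENNReal.ofReal (1 / 2) + ENNReal.ofReal (1 / 2) ≤ ν A + ENNReal.ofReal (1 / 2) := by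
        rw [hhalf, ← hsum]
        exact add_le_add_right hcompl _
      exact (ENNReal.add_le_add_iff_right ENNReal.ofReal_ne_top).1 h6
    -- lower bound on evariance
    have hevar : ENNReal.ofReal ε ≤ evariance id ν := by
      have h7 : ENNReal.ofReal (r ^ 2) * ν A ≤ evariance id ν := by
        rw [evariance]
        calc ENNReal.ofReal (r ^ 2) * ν A = ∫⁻ _ in A, ENNReal.ofReal (r ^ 2) ∂ν :=
              (setLIntegral_const A _).symm
          _ ≤ ∫⁻ ω in A, (‖id ω - mb‖₊ : ℝ≥0∞) ^ 2 ∂ν := by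
              refine setLIntegral_mono (by fun_prop) (fun ω hω => ?_)
              have hω' : r ≤ |ω - mb| := hω
              have : ENNReal.ofReal (r ^ 2) ≤ ENNReal.ofReal (|ω - mb| ^ 2) := by
                apply ENNReal.ofReal_le_ofReal
                exact pow_le_pow_left₀ hrpos.le hω' 2
              refine this.trans_eq ?_
              rw [ENNReal.ofReal_pow (abs_nonneg _), ← Real.enorm_eq_ofReal_abs]
              simp [enorm_eq_nnnorm]
          _ ≤ ∫⁻ ω, (‖id ω - mb‖₊ : ℝ≥0∞) ^ 2 ∂ν := setLIntegral_le_lintegral _ _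
      calc ENNReal.ofReal ε = ENNReal.ofReal (r ^ 2) * ENNReal.ofReal (1 / 2) := by
            rw [← ENNReal.ofReal_mul (by positivity)]
            congr 1
            rw [hεdef]; ring
        _ ≤ ENNReal.ofReal (r ^ 2) * ν A := mul_le_mul_right hAbig _
        _ ≤ evariance id ν := h7
    have hfin : evariance id ν ≠ ∞ := hmemν.evariance_lt_top.ne
    have := ENNReal.toReal_mono hfin hevar
    rw [ENNReal.toReal_ofReal hεpos.le] at this
    exact this
  -- nonemptiness
  have hne : {w : ℝ | ∃ I : Set ℝ, I.OrdConnected ∧ c ≤ (μ I).toReal ∧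
      w = variance id (μ[|I])}.Nonempty := by
    refine ⟨variance id (μ[|(Set.univ : Set ℝ)]), Set.univ, Set.ordConnected_univ, ?_, rfl⟩
    simp [measure_univ]
    exact hc1
  exact lt_of_lt_of_le hεpos (le_csInf hne hkey)
end

section
/- Let μ be the Gaussian mixture probability measure on ℝ with density g(y) = Σ_{x=1}^k π_x φ_{m_x,σ²}(y), where σ² > 0, π_x > 0 and Σ_{x=1}^k π_x = 1. Then the map (a, b) ↦ Var(μ ∣ (a, b)) is continuous on the set {(a, b) ∈ ℝ² : a < b}. -/
open MeasureTheory ProbabilityTheory Real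
open scoped NNReal ENNReal

lemma integ_pow_exp {b : ℝ} (hb : 0 < b) (n : ℕ) :
    Integrable fun x : ℝ => x ^ n * Real.exp (-b * x ^ 2) := by
  have h := integrable_rpow_mul_exp_neg_mul_sq hb (s := (n : ℝ))
    (by exact_mod_cast neg_one_lt_zero.trans_le (Nat.cast_nonneg n))
  simpa [Real.rpow_natCast] using h

lemma integrable_pow_mul_gaussian (n : ℕ) (m : ℝ) (v : ℝ≥0) (hv : 0 < (v : ℝ)) :
    Integrable fun y : ℝ => y ^ n * gaussianPDFReal m v y := by
  have hb : 0 < (2 * (v : ℝ))⁻¹ := by positivity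
  have key : Integrable fun y : ℝ => (y + m) ^ n * gaussianPDFReal m v (y + m) := by
    have heq : (fun y : ℝ => (y + m) ^ n * gaussianPDFReal m v (y + m))
        = fun y : ℝ => ∑ j ∈ Finset.range (n + 1),
            (m ^ (n - j) * (n.choose j : ℝ) * (Real.sqrt (2 * Real.pi * v))⁻¹) *
              (y ^ j * Real.exp (-(2 * (v : ℝ))⁻¹ * y ^ 2)) := by
      funext y
      have harg : -(y + m - m) ^ 2 / (2 * (v : ℝ)) = -(2 * (v : ℝ))⁻¹ * y ^ 2 := by
        field_simp
        ring
      rw [gaussianPDFReal, harg, add_pow, Finset.sum_mul]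
      refine Finset.sum_congr rfl fun j hj => by ring
    rw [heq]
    exact integrable_finset_sum _ fun j hj => (integ_pow_exp hb j).const_mul _
  have := key.comp_sub_right m
  simpa using this

/-- For a Gaussian mixture `μ` on `ℝ`, the map `(a, b) ↦ Var(μ | (a, b))` is continuous on
`{(a, b) : a < b}`. -/
theorem continuousOn_condVar_Ioo
    (k : ℕ) (hk : 1 ≤ k) (σ2 : ℝ) (hσ2 : 0 < σ2) (m : Fin k → ℝ)
    (π' : Fin k → ℝ) (hπ : ∀ x, 0 < π' x) (hπsum : ∑ x, π' x = 1)
    (μ : Measure ℝ)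
    (hμ : μ = ∑ x, ENNReal.ofReal (π' x) • gaussianReal (m x) (⟨σ2, hσ2.le⟩ : ℝ≥0)) :
    ContinuousOn (fun p : ℝ × ℝ => variance id (μ[|Set.Ioo p.1 p.2]))
      {p : ℝ × ℝ | p.1 < p.2} := by
  set v : ℝ≥0 := ⟨σ2, hσ2.le⟩ with hv_def
  have hvpos : 0 < (v : ℝ) := hσ2
  have hvne : v ≠ 0 := by
    intro h
    rw [h] at hvpos
    simp at hvpos
  -- the density
  set f : ℝ → ℝ := fun y => ∑ x, π' x * gaussianPDFReal (m x) v y with hf_def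
  have hf_cont : Continuous f := by
    refine continuous_finset_sum _ fun x _ => Continuous.mul continuous_const ?_
    unfold gaussianPDFReal
    fun_prop
  have hf_pos : ∀ y, 0 < f y := fun y =>
    Finset.sum_pos (fun x _ => mul_pos (hπ x) (gaussianPDFReal_pos _ _ _ hvne))
      ⟨⟨0, hk⟩, Finset.mem_univ _⟩
  have hf_meas : Measurable f := hf_cont.measurable
  -- integrability of moments
  have hInt : ∀ n : ℕ, Integrable fun y : ℝ => y ^ n * f y := by
    intro n
    have : (fun y : ℝ => y ^ n * f y)
        = fun y : ℝ => ∑ x, π' x * (y ^ n * gaussianPDFReal (m x) v y) := by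
      funext y
      rw [hf_def, Finset.mul_sum]
      exact Finset.sum_congr rfl fun x _ => by ring
    rw [this]
    exact integrable_finset_sum _ fun x _ =>
      (integrable_pow_mul_gaussian n (m x) v hvpos).const_mul _
  have hIntf : Integrable f := by simpa using hInt 0
  -- density representation of μ
  have hμd : μ = (volume : Measure ℝ).withDensity fun y => ENNReal.ofReal (f y) := by
    have hpt : ∀ y, ENNReal.ofReal (f y)
        = ∑ x, ENNReal.ofReal (π' x) * gaussianPDF (m x) v y := by
      intro y
      rw [hf_def]
      rw [ENNReal.ofReal_sum_of_nonneg fun x _ =>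
        mul_nonneg (hπ x).le (gaussianPDFReal_nonneg _ _ _)]
      exact Finset.sum_congr rfl fun x _ => ENNReal.ofReal_mul (hπ x).le
    rw [hμ]
    ext s hs
    rw [withDensity_apply _ hs]
    simp_rw [hpt]
    rw [lintegral_finset_sum _ fun x _ => (measurable_gaussianPDF _ _).const_mul _,
      Measure.finset_sum_apply]
    refine Finset.sum_congr rfl fun x _ => ?_
    rw [Measure.smul_apply, smul_eq_mul, gaussianReal_of_var_ne_zero _ hvne,
      withDensity_apply _ hs, ← lintegral_const_mul _ (measurable_gaussianPDF _ _)]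
  -- μ is a probability measure
  have hprob : IsProbabilityMeasure μ := by
    constructor
    rw [hμd, withDensity_apply _ MeasurableSet.univ, Measure.restrict_univ,
      ← ofReal_integral_eq_lintegral_ofReal hIntf (ae_of_all _ fun y => (hf_pos y).le)]
    have : ∫ y, f y = 1 := by
      rw [hf_def, integral_finset_sum _ fun x _ =>
        (integrable_gaussianPDFReal _ _).const_mul _]
      simp_rw [integral_const_mul, integral_gaussianPDFReal_eq_one _ hvne, mul_one]
      exact hπsum
    rw [this]
    simp
  haveI := hprob
  -- measure of Ioo
  have hμIoo : ∀ a b : ℝ, μ (Set.Ioo a b) = ENNReal.ofReal (∫ y in Set.Ioo a b, f y) := by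
    intro a b
    rw [hμd, withDensity_apply _ measurableSet_Ioo,
      ← ofReal_integral_eq_lintegral_ofReal hIntf.integrableOn
        (ae_of_all _ fun y => (hf_pos y).le)]
  -- moments w.r.t. μ
  have hmom : ∀ (n : ℕ) (a b : ℝ),
      ∫ y in Set.Ioo a b, y ^ n ∂μ = ∫ y in Set.Ioo a b, y ^ n * f y := by
    intro n a b
    rw [hμd, restrict_withDensity measurableSet_Ioo]
    rw [show (fun y => ENNReal.ofReal (f y))
        = fun y => ((fun y => Real.toNNReal (f y)) y : ℝ≥0∞) from rfl,
      integral_withDensity_eq_integral_smul hf_meas.real_toNNReal]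
    refine integral_congr_ae (ae_of_all _ fun y => ?_)
    simp [NNReal.smul_def, Real.coe_toNNReal _ (hf_pos y).le, mul_comm]
  -- primitives
  have hFcont : ∀ n : ℕ, Continuous fun t : ℝ => ∫ y in (0:ℝ)..t, y ^ n * f y :=
    fun n => (hInt n).continuous_primitive 0
  have hGeq : ∀ (n : ℕ) (p : ℝ × ℝ), p.1 < p.2 →
      (∫ y in Set.Ioo p.1 p.2, y ^ n * f y)
        = (∫ y in (0:ℝ)..p.2, y ^ n * f y) - ∫ y in (0:ℝ)..p.1, y ^ n * f y := by
    intro n p hp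
    rw [intervalIntegral.integral_interval_sub_left ((hInt n).intervalIntegrable)
      ((hInt n).intervalIntegrable),
      intervalIntegral.integral_of_le hp.le, integral_Ioc_eq_integral_Ioo]
  have hG0pos : ∀ p : ℝ × ℝ, p.1 < p.2 → 0 < ∫ y in Set.Ioo p.1 p.2, f y := by
    intro p hp
    have := intervalIntegral.intervalIntegral_pos_of_pos (f := f) hIntf.intervalIntegrable hf_pos hp
    rwa [intervalIntegral.integral_of_le hp.le, integral_Ioc_eq_integral_Ioo] at this
  -- variance formula
  have hvar : ∀ p ∈ {p : ℝ × ℝ | p.1 < p.2},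
      variance id (μ[|Set.Ioo p.1 p.2]) =
        (∫ y in Set.Ioo p.1 p.2, f y)⁻¹ * (∫ y in Set.Ioo p.1 p.2, y ^ 2 * f y)
          - ((∫ y in Set.Ioo p.1 p.2, f y)⁻¹ * (∫ y in Set.Ioo p.1 p.2, y ^ 1 * f y)) ^ 2 := by
    intro p hp
    have hp' : p.1 < p.2 := hp
    set I := Set.Ioo p.1 p.2 with hI
    have hpos : 0 < ∫ y in I, f y := hG0pos p hp'
    have hμI : μ I = ENNReal.ofReal (∫ y in I, f y) := hμIoo _ _
    have hne : μ I ≠ 0 := by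
      rw [hμI]
      simp only [ne_eq, ENNReal.ofReal_eq_zero, not_le]
      exact hpos
    haveI : IsProbabilityMeasure (μ[|I]) := cond_isProbabilityMeasure hne
    have hmem : MemLp id 2 (μ[|I]) := by
      refine (memLp_top_of_bound aestronglyMeasurable_id (max |p.1| |p.2|)
        ?_).mono_exponent le_top
      have h1 : ∀ᵐ y ∂(μ.restrict I), y ∈ I := ae_restrict_mem measurableSet_Ioo
      have h2 : ∀ᵐ y ∂(μ[|I]), y ∈ I := by
        rw [ProbabilityTheory.cond]
        exact Measure.ae_smul_measure h1 _
      filter_upwards [h2] with y hy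
      simpa [Real.norm_eq_abs] using abs_le_max_abs_abs hy.1.le hy.2.le
    have hint : ∀ n : ℕ,
        ∫ y, y ^ n ∂(μ[|I]) = (∫ y in I, f y)⁻¹ * ∫ y in I, y ^ n * f y := by
      intro n
      rw [show (μ[|I]) = (μ I)⁻¹ • μ.restrict I from rfl, integral_smul_measure,
        ← hmom n, hμI, ← ENNReal.ofReal_inv_of_pos hpos,
        ENNReal.toReal_ofReal (inv_nonneg.mpr hpos.le), smul_eq_mul]
    rw [variance_eq_sub hmem]
    simp only [Pi.pow_apply, id_eq]
    rw [hint 2, show (∫ y, y ∂(μ[|I])) = ∫ y, y ^ 1 ∂(μ[|I]) by simp, hint 1]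
  -- conclude
  refine ContinuousOn.congr (g := fun p : ℝ × ℝ => variance id (μ[|Set.Ioo p.1 p.2]))
    (f := fun p : ℝ × ℝ =>
      ((∫ y in (0:ℝ)..p.2, y ^ 0 * f y) - ∫ y in (0:ℝ)..p.1, y ^ 0 * f y)⁻¹ *
          ((∫ y in (0:ℝ)..p.2, y ^ 2 * f y) - ∫ y in (0:ℝ)..p.1, y ^ 2 * f y)
        - (((∫ y in (0:ℝ)..p.2, y ^ 0 * f y) - ∫ y in (0:ℝ)..p.1, y ^ 0 * f y)⁻¹ *
            ((∫ y in (0:ℝ)..p.2, y ^ 1 * f y) - ∫ y in (0:ℝ)..p.1, y ^ 1 * f y)) ^ 2)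
    ?_ ?_
  · have hc : ∀ n : ℕ, Continuous fun p : ℝ × ℝ =>
        (∫ y in (0:ℝ)..p.2, y ^ n * f y) - ∫ y in (0:ℝ)..p.1, y ^ n * f y :=
      fun n => ((hFcont n).comp continuous_snd).sub ((hFcont n).comp continuous_fst)
    have hne : ∀ p ∈ {p : ℝ × ℝ | p.1 < p.2},
        ((∫ y in (0:ℝ)..p.2, y ^ 0 * f y) - ∫ y in (0:ℝ)..p.1, y ^ 0 * f y) ≠ 0 := by
      intro p hp
      rw [← hGeq 0 p hp]
      have := hG0pos p hp
      simp only [pow_zero, one_mul]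
      exact this.ne'
    exact (((hc 0).continuousOn.inv₀ hne).mul (hc 2).continuousOn).sub
      ((((hc 0).continuousOn.inv₀ hne).mul (hc 1).continuousOn).pow 2)
  · intro p hp
    dsimp only
    rw [hvar p hp, ← hGeq 0 p hp, ← hGeq 1 p hp, ← hGeq 2 p hp]
    simp only [pow_zero, one_mul]
end

section
/- Let (Ω, 𝓕, P) be a probability space, T : Ω → Ω an ergodic measure-preserving map, and f : Ω → ℝ measurable with law μ. Assume μ is atomless and ∫ x² dμ(x) < ∞. For i ≥ 1 set Y_i = f ∘ T^{i−1}. Then for each a ∈ {0, 1, 2}, for P-almost every ω, sup_I | (1/n) Σ_{i=1}^n Y_i(ω)^a · 1_I(Y_i(ω)) − ∫ x^a 1_I(x) dμ(x) | → 0 as n → ∞, where the supremum is over all intervals I ⊆ ℝ. -/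
open MeasureTheory ProbabilityTheory Filter Set
open scoped NNReal ENNReal Topology

set_option linter.unusedSectionVars false

namespace ErgodicGC

variable {Ω : Type*} [MeasurableSpace Ω] {P : Measure Ω} [IsProbabilityMeasure P]
  {T : Ω → Ω} {g : Ω → ℝ}

/-- Running maximum of Birkhoff sums, with `maxSum 0 = 0`. -/
noncomputable def maxSum (T : Ω → Ω) (g : Ω → ℝ) : ℕ → Ω → ℝ
  | 0 => fun _ => 0
  | (N+1) => fun ω => max (maxSum T g N ω) (birkhoffSum T g (N+1) ω)

lemma maxSum_succ (N : ℕ) (ω : Ω) :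
    maxSum T g (N+1) ω = max (maxSum T g N ω) (birkhoffSum T g (N+1) ω) := rfl

lemma maxSum_nonneg (N : ℕ) (ω : Ω) : 0 ≤ maxSum T g N ω := by
  induction N with
  | zero => simp [maxSum]
  | succ N ih => exact le_trans ih (le_max_left _ _)

lemma maxSum_mono (ω : Ω) : Monotone (fun N => maxSum T g N ω) :=
  monotone_nat_of_le_succ fun _ => le_max_left _ _

lemma birkhoffSum_le_maxSum (ω : Ω) {k N : ℕ} (h : k ≤ N) :
    birkhoffSum T g k ω ≤ maxSum T g N ω := by
  induction N with
  | zero =>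
    interval_cases k
    simp [birkhoffSum, maxSum]
  | succ N ih =>
    rcases Nat.le_succ_iff.mp h with h'|h'
    · exact (ih h').trans (le_max_left _ _)
    · rw [h', maxSum_succ]; exact le_max_right _ _

lemma measurable_birkhoffSum (hT : Measurable T) (hg : Measurable g) (n : ℕ) :
    Measurable (birkhoffSum T g n) := by
  unfold birkhoffSum
  exact Finset.measurable_sum _ fun i _ => hg.comp (hT.iterate i)

lemma measurable_maxSum (hT : Measurable T) (hg : Measurable g) (N : ℕ) :
    Measurable (maxSum T g N) := by
  induction N with
  | zero => exact measurable_const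
  | succ N ih => exact ih.max (measurable_birkhoffSum hT hg (N+1))

lemma integrable_comp_iterate (hT : MeasurePreserving T P P) (hg : Measurable g)
    (hgi : Integrable g P) (i : ℕ) : Integrable (fun ω => g (T^[i] ω)) P :=
  ((hT.iterate i).integrable_comp hg.aestronglyMeasurable).2 hgi

lemma integrable_birkhoffSum (hT : MeasurePreserving T P P) (hg : Measurable g)
    (hgi : Integrable g P) (n : ℕ) : Integrable (birkhoffSum T g n) P := by
  unfold birkhoffSum
  exact integrable_finset_sum _ fun i _ => integrable_comp_iterate hT hg hgi i

lemma integrable_maxSum (hT : MeasurePreserving T P P) (hg : Measurable g)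
    (hgi : Integrable g P) (N : ℕ) : Integrable (maxSum T g N) P := by
  induction N with
  | zero => simp only [maxSum]; exact integrable_const (0:ℝ)
  | succ N ih =>
    have := ih.sup (integrable_birkhoffSum hT hg hgi (N+1))
    exact this.congr (by filter_upwards with ω; rfl)

lemma maxSum_le_key (N : ℕ) (ω : Ω) :
    maxSum T g N ω ≤ max 0 (g ω + maxSum T g N (T ω)) := by
  induction N with
  | zero => simp [maxSum]
  | succ N ih =>
    rw [maxSum_succ]
    refine max_le ?_ ?_
    · refine le_trans ih (max_le_max le_rfl ?_)
      have := maxSum_mono (T := T) (g := g) (T ω) (Nat.le_succ N)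
      linarith
    · have h1 : birkhoffSum T g (N+1) ω = g ω + birkhoffSum T g N (T ω) :=
        birkhoffSum_succ' T g N ω
      have h2 : birkhoffSum T g N (T ω) ≤ maxSum T g (N+1) (T ω) :=
        birkhoffSum_le_maxSum (T ω) (Nat.le_succ N)
      calc birkhoffSum T g (N+1) ω = g ω + birkhoffSum T g N (T ω) := h1
        _ ≤ g ω + maxSum T g (N+1) (T ω) := by linarith
        _ ≤ max 0 (g ω + maxSum T g (N+1) (T ω)) := le_max_right _ _

/-- pointwise key inequality for the maximal ergodic theorem -/
lemma maxSum_le_indicator (N : ℕ) (ω : Ω) :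
    maxSum T g N ω ≤ ({ω' | 0 < maxSum T g N ω'}).indicator g ω + maxSum T g N (T ω) := by
  by_cases h : 0 < maxSum T g N ω
  · have key := maxSum_le_key (T := T) (g := g) N ω
    have hle : maxSum T g N ω ≤ g ω + maxSum T g N (T ω) := by
      rcases le_or_gt (g ω + maxSum T g N (T ω)) 0 with h'|h'
      · have h0 : max 0 (g ω + maxSum T g N (T ω)) = 0 := max_eq_left h'
        rw [h0] at key; linarith
      · rwa [max_eq_right h'.le] at key
    rw [Set.indicator_of_mem (show ω ∈ {ω' | 0 < maxSum T g N ω'} from h)]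
    exact hle
  · rw [Set.indicator_of_notMem (show ω ∉ {ω' | 0 < maxSum T g N ω'} from h)]
    have h0 : maxSum T g N ω = 0 := le_antisymm (not_lt.1 h) (maxSum_nonneg N ω)
    rw [h0]
    simpa using maxSum_nonneg N (T ω)

/-- Maximal ergodic theorem (Garsia's proof). -/
theorem maximal_ergodic (hT : MeasurePreserving T P P) (hg : Measurable g)
    (hgi : Integrable g P) :
    0 ≤ ∫ ω, ({ω' | ∃ n, 0 < birkhoffSum T g n ω'}).indicator g ω ∂P := by
  have hAN : ∀ N : ℕ, MeasurableSet {ω' | 0 < maxSum T g N ω'} := fun N =>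
    measurableSet_lt measurable_const (measurable_maxSum hT.measurable hg N)
  have step : ∀ N : ℕ, 0 ≤ ∫ ω, ({ω' | 0 < maxSum T g N ω'}).indicator g ω ∂P := by
    intro N
    have hMi := integrable_maxSum hT hg hgi N
    have hMTi : Integrable (fun ω => maxSum T g N (T ω)) P :=
      (hT.integrable_comp (measurable_maxSum hT.measurable hg N).aestronglyMeasurable).2 hMi
    have hIi : Integrable (({ω' | 0 < maxSum T g N ω'}).indicator g) P :=
      hgi.indicator (hAN N)
    have hint : ∫ ω, maxSum T g N ω ∂P ≤
        ∫ ω, (({ω' | 0 < maxSum T g N ω'}).indicator g ω + maxSum T g N (T ω)) ∂P :=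
      integral_mono hMi (hIi.add hMTi) (fun ω => maxSum_le_indicator N ω)
    rw [integral_add hIi hMTi] at hint
    have hcomp : ∫ ω, maxSum T g N (T ω) ∂P = ∫ ω, maxSum T g N ω ∂P := by
      rw [← integral_map hT.measurable.aemeasurable
        (measurable_maxSum hT.measurable hg N).aestronglyMeasurable, hT.map_eq]
    rw [hcomp] at hint
    linarith
  -- pass to the limit N → ∞
  have hAmem : ∀ ω, (∃ n, 0 < birkhoffSum T g n ω) ↔ ∃ N, 0 < maxSum T g N ω := by
    intro ω
    constructor
    · rintro ⟨n, hn⟩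
      exact ⟨n, lt_of_lt_of_le hn (birkhoffSum_le_maxSum ω le_rfl)⟩
    · rintro ⟨N, hN⟩
      induction N with
      | zero => simp [maxSum] at hN
      | succ M ih =>
        rw [maxSum_succ, lt_max_iff] at hN
        rcases hN with h|h
        · exact ih h
        · exact ⟨M+1, h⟩
  have htend : Tendsto (fun N => ∫ ω, ({ω' | 0 < maxSum T g N ω'}).indicator g ω ∂P) atTop
      (𝓝 (∫ ω, ({ω' | ∃ n, 0 < birkhoffSum T g n ω'}).indicator g ω ∂P)) := by
    refine tendsto_integral_of_dominated_convergence (fun ω => |g ω|)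
      (fun N => (hgi.indicator (hAN N)).1) hgi.abs ?_ ?_
    · intro N
      filter_upwards with ω
      rw [Real.norm_eq_abs]
      classical
      by_cases hmem : ω ∈ {ω' | 0 < maxSum T g N ω'}
      · rw [Set.indicator_of_mem hmem]
      · rw [Set.indicator_of_notMem hmem]; simp [abs_nonneg]
    · filter_upwards with ω
      by_cases h : ∃ N, 0 < maxSum T g N ω
      · obtain ⟨N0, hN0⟩ := h
        have hmem : ω ∈ {ω' | ∃ n, 0 < birkhoffSum T g n ω'} := (hAmem ω).2 ⟨N0, hN0⟩
        rw [Set.indicator_of_mem hmem]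
        have : ∀ N ≥ N0, ({ω' | 0 < maxSum T g N ω'}).indicator g ω = g ω := by
          intro N hN
          exact Set.indicator_of_mem
            (show ω ∈ {ω' | 0 < maxSum T g N ω'} from lt_of_lt_of_le hN0 (maxSum_mono ω hN)) _
        exact tendsto_const_nhds.congr' (by
          filter_upwards [eventually_ge_atTop N0] with N hN using (this N hN).symm)
      · push_neg at h
        have hnmem : ω ∉ {ω' | ∃ n, 0 < birkhoffSum T g n ω'} := by
          rw [Set.mem_setOf_eq, hAmem ω]; push_neg; exact h
        rw [Set.indicator_of_notMem hnmem]
        have hz : ∀ N : ℕ, ({ω' | 0 < maxSum T g N ω'}).indicator g ω = 0 := fun N =>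
          Set.indicator_of_notMem
            (show ω ∉ {ω' | 0 < maxSum T g N ω'} from fun hc => absurd hc (not_lt.2 (h N))) _
        simpa [hz] using (tendsto_const_nhds : Tendsto (fun _ : ℕ => (0:ℝ)) atTop (𝓝 0))
  exact le_of_tendsto_of_tendsto tendsto_const_nhds htend (by
    filter_upwards with N using step N)

/-! ### Part B: Birkhoff's pointwise ergodic theorem (ergodic case) -/

lemma limsup_coe_le_of_tendsto_sub {u v : ℕ → ℝ}
    (h : Tendsto (fun n => v n - u n) atTop (𝓝 0)) :
    limsup (fun n => ((v n : EReal))) atTop ≤ limsup (fun n => ((u n : EReal))) atTop := by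
  by_contra hlt
  push_neg at hlt
  obtain ⟨x, hx1, hx2⟩ := EReal.exists_between_coe_real hlt
  obtain ⟨y, hy1, hy2⟩ := EReal.exists_between_coe_real hx2
  have hxy : x < y := EReal.coe_lt_coe_iff.1 hy1
  have hu : ∀ᶠ n in atTop, ((u n : EReal)) < (x : EReal) :=
    eventually_lt_of_limsup_lt hx1
  have hd : ∀ᶠ n in atTop, |v n - u n| < y - x := by
    have := Metric.tendsto_atTop.1 h (y - x) (by linarith)
    obtain ⟨N, hN⟩ := this
    filter_upwards [eventually_ge_atTop N] with n hn
    simpa [Real.dist_eq] using hN n hn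
  have hv : ∀ᶠ n in atTop, ((v n : EReal)) ≤ (y : EReal) := by
    filter_upwards [hu, hd] with n h1 h2
    have h1' : u n < x := EReal.coe_lt_coe_iff.1 h1
    have : v n ≤ y := by
      have := abs_lt.1 h2
      linarith [this.2]
    exact EReal.coe_le_coe_iff.2 this
  have : limsup (fun n => ((v n : EReal))) atTop ≤ (y : EReal) := limsup_le_of_le (by isBoundedDefault) hv
  exact absurd (hy2.trans_le this) (lt_irrefl _)

lemma limsup_coe_eq_of_tendsto_sub {u v : ℕ → ℝ}
    (h : Tendsto (fun n => v n - u n) atTop (𝓝 0)) :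
    limsup (fun n => ((v n : EReal))) atTop = limsup (fun n => ((u n : EReal))) atTop := by
  refine le_antisymm (limsup_coe_le_of_tendsto_sub h) (limsup_coe_le_of_tendsto_sub ?_)
  have : (fun n => u n - v n) = fun n => -(v n - u n) := by funext n; ring
  rw [this]
  simpa using h.neg

/-- a.e., `g (T^[n] ω) / n → 0` (Borel–Cantelli). -/
lemma ae_tendsto_comp_iterate_div (hT : MeasurePreserving T P P) (hg : Measurable g)
    (hgi : Integrable g P) :
    ∀ᵐ ω ∂P, Tendsto (fun n => g (T^[n] ω) / n) atTop (𝓝 0) := by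
  have key : ∀ ε : ℝ, 0 < ε → ∀ᵐ ω ∂P, ∀ᶠ n : ℕ in atTop, |g (T^[n] ω)| ≤ ε * n := by
    intro ε hε
    set X : Ω → ℝ := fun ω => |g ω| / ε with hX
    have hXi : Integrable X P := hgi.abs.div_const ε
    have hXnn : 0 ≤ X := fun ω => div_nonneg (abs_nonneg _) hε.le
    have htsum : ∑' j : ℕ, P {ω | X ω ∈ Set.Ioi (j : ℝ)} < ⊤ := by
      letI : MeasureSpace Ω := ⟨P⟩
      exact ProbabilityTheory.tsum_prob_mem_Ioi_lt_top hXi hXnn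
    have hset : ∀ n : ℕ, {ω | ε * n < |g (T^[n] ω)|} = (T^[n]) ⁻¹' {ω | X ω ∈ Set.Ioi (n : ℝ)} := by
      intro n
      ext ω
      simp only [Set.mem_setOf_eq, Set.mem_preimage, Set.mem_Ioi, hX]
      rw [lt_div_iff₀ hε, mul_comm]
    have hmeasset : ∀ n : ℕ, MeasurableSet {ω | X ω ∈ Set.Ioi (n : ℝ)} := fun n =>
      ((hg.abs.div_const ε)) measurableSet_Ioi
    have hsum2 : ∑' n : ℕ, P {ω | ε * n < |g (T^[n] ω)|} < ⊤ := by
      have : ∀ n : ℕ, P {ω | ε * n < |g (T^[n] ω)|} = P {ω | X ω ∈ Set.Ioi (n : ℝ)} := by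
        intro n
        rw [hset n]
        exact (hT.iterate n).measure_preimage (hmeasset n).nullMeasurableSet
      simpa [this] using htsum
    have := measure_setOf_frequently_eq_zero (p := fun n ω => ε * n < |g (T^[n] ω)|) hsum2.ne
    have hae : ∀ᵐ ω ∂P, ¬ (∃ᶠ n in atTop, ε * n < |g (T^[n] ω)|) := by
      rw [ae_iff]
      convert this using 2
      ext ω
      simp [Filter.frequently_atTop]
    filter_upwards [hae] with ω hω
    rw [not_frequently] at hω
    filter_upwards [hω] with n hn
    exact le_of_not_gt hn
  have keyk : ∀ᵐ ω ∂P, ∀ k : ℕ, ∀ᶠ n : ℕ in atTop, |g (T^[n] ω)| ≤ (1 / (k+1)) * n := by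
    rw [ae_all_iff]
    intro k
    exact key (1 / (k+1)) (by positivity)
  filter_upwards [keyk] with ω hω
  rw [Metric.tendsto_atTop]
  intro ε hε
  obtain ⟨k, hk⟩ := exists_nat_one_div_lt hε
  obtain ⟨N, hN⟩ := (hω k).exists_forall_of_atTop
  refine ⟨max N 1, fun n hn => ?_⟩
  have hn1 : 1 ≤ n := le_trans (le_max_right _ _) hn
  have hnN : N ≤ n := le_trans (le_max_left _ _) hn
  have hnpos : (0:ℝ) < n := by exact_mod_cast hn1
  have hb := hN n hnN
  rw [Real.dist_eq, sub_zero, abs_div, abs_of_pos hnpos]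
  calc |g (T^[n] ω)| / n ≤ 1 / (k+1) := (div_le_iff₀ hnpos).2 (by
        have : (1 / ((k:ℝ)+1)) * n = 1 / (k+1) * n := rfl
        simpa using hb)
    _ < ε := hk

lemma birkhoffSum_sub_const (n : ℕ) (ω : Ω) (c : ℝ) :
    birkhoffSum T (fun ω' => g ω' - c) n ω = birkhoffSum T g n ω - n * c := by
  unfold birkhoffSum
  rw [Finset.sum_sub_distrib, Finset.sum_const, Finset.card_range]
  simp [nsmul_eq_mul]

/-- key a.e. bound on the limsup of Birkhoff averages. -/
lemma ae_limsup_avg_le (hT : Ergodic T P) (hg : Measurable g) (hgi : Integrable g P)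
    {c : ℝ} (hc : ∫ ω, g ω ∂P < c) :
    ∀ᵐ ω ∂P, limsup (fun n => ((birkhoffSum T g n ω / n : ℝ) : EReal)) atTop ≤ (c : EReal) := by
  set L : Ω → EReal := fun ω => limsup (fun n => ((birkhoffSum T g n ω / n : ℝ) : EReal)) atTop
    with hL
  have hLmeas : Measurable L :=
    Measurable.limsup fun n => measurable_coe_real_ereal.comp
      ((measurable_birkhoffSum hT.toMeasurePreserving.measurable hg n).div_const n)
  set B : Set Ω := {ω | (c : EReal) < L ω} with hBdef
  have hB : MeasurableSet B := measurableSet_lt measurable_const hLmeas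
  have hLinv : ∀ᵐ ω ∂P, L (T ω) = L ω := by
    filter_upwards [ae_tendsto_comp_iterate_div hT.toMeasurePreserving hg hgi] with ω hω
    refine limsup_coe_eq_of_tendsto_sub ?_
    have hdiff : ∀ n : ℕ, birkhoffSum T g n (T ω) / n - birkhoffSum T g n ω / n
        = g (T^[n] ω) / n - g ω / n := by
      intro n
      rw [div_sub_div_same, div_sub_div_same, birkhoffSum_apply_sub_birkhoffSum]
    simp only [hdiff]
    simpa using hω.sub (tendsto_const_div_atTop_nhds_zero_nat (g ω))
  have hinv : T ⁻¹' B =ᵐ[P] B := by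
    rw [Filter.eventuallyEq_set]
    filter_upwards [hLinv] with ω hω
    simp only [Set.mem_preimage, hBdef, Set.mem_setOf_eq, hω]
  rcases hT.quasiErgodic.ae_empty_or_univ₀ hB.nullMeasurableSet hinv with hempty|huniv
  · have : P B = 0 := by rwa [← ae_eq_empty]
    filter_upwards [measure_eq_zero_iff_ae_notMem.mp this] with ω hω
    exact not_lt.1 hω
  · exfalso
    set h : Ω → ℝ := fun ω => g ω - c with hh
    have hhm : Measurable h := hg.sub measurable_const
    have hhi : Integrable h P := hgi.sub (integrable_const c)
    set A : Set Ω := {ω' | ∃ n, 0 < birkhoffSum T h n ω'} with hA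
    have hBA : B ⊆ A := by
      intro ω hω
      have hfreq : ∃ᶠ n in atTop, (c : EReal) < ((birkhoffSum T g n ω / n : ℝ) : EReal) :=
        frequently_lt_of_lt_limsup (by isBoundedDefault) hω
      obtain ⟨n, hn, hn1⟩ := (hfreq.and_eventually (eventually_ge_atTop 1)).exists
      have hnpos : (0:ℝ) < n := by exact_mod_cast hn1
      have : c < birkhoffSum T g n ω / n := EReal.coe_lt_coe_iff.1 hn
      refine ⟨n, ?_⟩
      rw [birkhoffSum_sub_const]
      have := (lt_div_iff₀ hnpos).1 this
      nlinarith
    have hPA : P Aᶜ = 0 := by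
      have hPB : P Bᶜ = 0 := by
        have := huniv
        rw [ae_eq_univ] at this
        exact this
      exact measure_mono_null (Set.compl_subset_compl.2 hBA) hPB
    have h0 : 0 ≤ ∫ ω, A.indicator h ω ∂P :=
      maximal_ergodic hT.toMeasurePreserving hhm hhi
    have heq : ∫ ω, A.indicator h ω ∂P = ∫ ω, h ω ∂P := by
      refine integral_congr_ae ?_
      filter_upwards [measure_eq_zero_iff_ae_notMem.mp hPA] with ω hω
      exact Set.indicator_of_mem (Set.not_notMem.mp hω) h
    rw [heq] at h0
    have : ∫ ω, h ω ∂P = (∫ ω, g ω ∂P) - c := by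
      rw [hh]
      rw [integral_sub hgi (integrable_const c), integral_const]
      simp
    rw [this] at h0
    linarith

lemma ereal_le_of_forall (x : EReal) (r : ℝ)
    (h : ∀ k : ℕ, x ≤ ((r + 1 / (k+1) : ℝ) : EReal)) : x ≤ (r : EReal) := by
  by_contra hlt
  push_neg at hlt
  obtain ⟨z, hz1, hz2⟩ := EReal.exists_between_coe_real hlt
  obtain ⟨k, hk⟩ := exists_nat_one_div_lt (show (0:ℝ) < z - r from by
    have := EReal.coe_lt_coe_iff.1 hz1; linarith)
  have : x ≤ ((r + 1 / (k+1) : ℝ) : EReal) := h k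
  have h2 : ((r + 1 / (k+1) : ℝ) : EReal) < (z : EReal) := EReal.coe_lt_coe_iff.2 (by
    have : 1 / ((k:ℝ)+1) < z - r := hk
    linarith)
  exact absurd ((this.trans_lt h2).trans hz2) (lt_irrefl _)

/-- Birkhoff's pointwise ergodic theorem, ergodic case. -/
theorem birkhoff_ergodic (hT : Ergodic T P) (hg : Measurable g) (hgi : Integrable g P) :
    ∀ᵐ ω ∂P, Tendsto (fun n => birkhoffSum T g n ω / n) atTop (𝓝 (∫ ω, g ω ∂P)) := by
  set r : ℝ := ∫ ω, g ω ∂P with hr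
  have hsup : ∀ᵐ ω ∂P, ∀ k : ℕ,
      limsup (fun n => ((birkhoffSum T g n ω / n : ℝ) : EReal)) atTop
        ≤ ((r + 1 / (k+1) : ℝ) : EReal) := by
    rw [ae_all_iff]
    intro k
    refine ae_limsup_avg_le hT hg hgi ?_
    have : (0:ℝ) < 1 / (k+1) := by positivity
    rw [← hr]
    linarith
  have hneg : ∀ᵐ ω ∂P, ∀ k : ℕ,
      limsup (fun n => ((birkhoffSum T (fun ω' => -g ω') n ω / n : ℝ) : EReal)) atTop
        ≤ ((-r + 1 / (k+1) : ℝ) : EReal) := by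
    rw [ae_all_iff]
    intro k
    refine ae_limsup_avg_le hT hg.neg hgi.neg ?_
    have h' : ∫ ω, (fun ω' => -g ω') ω ∂P = -∫ ω, g ω ∂P := integral_neg g
    simp only [Pi.neg_apply] at h' ⊢; rw [h']
    have : (0:ℝ) < 1 / (k+1) := by positivity
    rw [hr]
    linarith
  filter_upwards [hsup, hneg] with ω h1 h2
  set u : ℕ → EReal := fun n => ((birkhoffSum T g n ω / n : ℝ) : EReal) with hu
  have hbsneg : ∀ n : ℕ, birkhoffSum T (fun ω' => -g ω') n ω = -birkhoffSum T g n ω := by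
    intro n; unfold birkhoffSum; rw [← Finset.sum_neg_distrib]
  have hnegu : (fun n => ((birkhoffSum T (fun ω' => -g ω') n ω / n : ℝ) : EReal)) = -u := by
    funext n
    simp only [hu, hbsneg n, Pi.neg_apply, neg_div, EReal.coe_neg]
  have hliminf : (r : EReal) ≤ liminf u atTop := by
    have h2' : ∀ k : ℕ, -liminf u atTop ≤ ((-r + 1 / (k+1) : ℝ) : EReal) := by
      intro k
      have := h2 k
      rwa [hnegu, EReal.limsup_neg] at this
    have h3 : -liminf u atTop ≤ ((-r : ℝ) : EReal) := ereal_le_of_forall _ _ h2'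
    rw [EReal.coe_neg] at h3
    simpa using EReal.neg_le.mp h3
  have hlimsup : limsup u atTop ≤ (r : EReal) := ereal_le_of_forall _ _ h1
  have hll : liminf u atTop ≤ limsup u atTop := liminf_le_limsup
  have hlow : liminf u atTop = (r : EReal) :=
    le_antisymm (hll.trans hlimsup) hliminf
  have hhigh : limsup u atTop = (r : EReal) :=
    le_antisymm hlimsup (hliminf.trans hll)
  have : Tendsto u atTop (𝓝 ((r : ℝ) : EReal)) := tendsto_of_liminf_eq_limsup hlow hhigh
  exact EReal.tendsto_coe.mp this

/-! ### Part C: uniform convergence over lower sets and intervals -/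

lemma isLowerSet_cases {J : Set ℝ} (hJ : IsLowerSet J) :
    J = ∅ ∨ J = Set.univ ∨ (∃ s : ℝ, Set.Iio s ⊆ J ∧ J ⊆ Set.Iic s ∧ MeasurableSet J) := by
  rcases Set.eq_empty_or_nonempty J with h|hne
  · exact Or.inl h
  by_cases hbdd : BddAbove J
  · refine Or.inr (Or.inr ⟨sSup J, ?_, ?_, ?_⟩)
    · intro x hx
      obtain ⟨y, hyJ, hxy⟩ := exists_lt_of_lt_csSup hne hx
      exact hJ hxy.le hyJ
    · exact fun x hx => le_csSup hbdd hx
    · by_cases hs : sSup J ∈ J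
      · have : J = Set.Iic (sSup J) := by
          ext x
          exact ⟨fun hx => le_csSup hbdd hx, fun hx => hJ hx hs⟩
        rw [this]; exact measurableSet_Iic
      · have : J = Set.Iio (sSup J) := by
          ext x
          constructor
          · intro hx
            rcases lt_or_eq_of_le (le_csSup hbdd hx) with h|h
            · exact h
            · exact absurd (h ▸ hx) hs
          · intro hx
            obtain ⟨y, hyJ, hxy⟩ := exists_lt_of_lt_csSup hne hx
            exact hJ hxy.le hyJ
        rw [this]; exact measurableSet_Iio
  · refine Or.inr (Or.inl ?_)
    rw [Set.eq_univ_iff_forall]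
    intro x
    obtain ⟨y, hyJ, hxy⟩ := not_bddAbove_iff.1 hbdd x
    exact hJ hxy.le hyJ

lemma ordConnected_indicator_decomp {I : Set ℝ} (hI : I.OrdConnected) :
    ∃ J J' : Set ℝ, IsLowerSet J ∧ IsLowerSet J' ∧
      ∀ x : ℝ, I.indicator (fun _ => (1:ℝ)) x
        = J.indicator (fun _ => (1:ℝ)) x - J'.indicator (fun _ => (1:ℝ)) x := by
  classical
  refine ⟨{x | ∃ s ∈ I, x ≤ s}, {x | (∃ s ∈ I, x ≤ s) ∧ x ∉ I}, ?_, ?_, ?_⟩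
  · intro x y hyx ⟨s, hs, hxs⟩
    exact ⟨s, hs, hyx.trans hxs⟩
  · rintro x y hyx ⟨⟨s, hs, hxs⟩, hxI⟩
    refine ⟨⟨s, hs, hyx.trans hxs⟩, fun hyI => hxI ?_⟩
    exact hI.out hyI hs ⟨hyx, hxs⟩
  · intro x
    by_cases hx : x ∈ I
    · rw [Set.indicator_of_mem hx, Set.indicator_of_mem (show x ∈ {x | ∃ s ∈ I, x ≤ s} from
        ⟨x, hx, le_rfl⟩), Set.indicator_of_notMem (show x ∉ {x | (∃ s ∈ I, x ≤ s) ∧ x ∉ I}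
        from fun h => h.2 hx)]
      norm_num
    · rw [Set.indicator_of_notMem hx]
      by_cases hxJ : ∃ s ∈ I, x ≤ s
      · rw [Set.indicator_of_mem (show x ∈ {x | ∃ s ∈ I, x ≤ s} from hxJ),
          Set.indicator_of_mem (show x ∈ {x | (∃ s ∈ I, x ≤ s) ∧ x ∉ I} from ⟨hxJ, hx⟩)]
        norm_num
      · rw [Set.indicator_of_notMem (show x ∉ {x | ∃ s ∈ I, x ≤ s} from hxJ),
          Set.indicator_of_notMem (show x ∉ {x | (∃ s ∈ I, x ≤ s) ∧ x ∉ I} from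
            fun h => hxJ h.1)]
        norm_num

section Nu

variable {μ : Measure ℝ} [IsProbabilityMeasure μ] {v : ℝ → ℝ}

/-- weighted measure of a set -/
noncomputable def nu (μ : Measure ℝ) (v : ℝ → ℝ) (S : Set ℝ) : ℝ :=
  ∫ x, v x * S.indicator (fun _ => (1:ℝ)) x ∂μ

lemma integrable_mul_indicator (hv : Measurable v) (hvi : Integrable v μ)
    {S : Set ℝ} (hS : MeasurableSet S) :
    Integrable (fun x => v x * S.indicator (fun _ => (1:ℝ)) x) μ := by
  refine Integrable.mono' hvi.abs
    ((hv.mul ((measurable_const.indicator hS))).aestronglyMeasurable) ?_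
  filter_upwards with x
  rw [Real.norm_eq_abs, abs_mul]
  by_cases hx : x ∈ S
  · rw [Set.indicator_of_mem hx]; simp
  · rw [Set.indicator_of_notMem hx]; simp [abs_nonneg]

lemma nu_mono (hv : Measurable v) (hv0 : ∀ x, 0 ≤ v x) (hvi : Integrable v μ)
    {S S' : Set ℝ} (hS : MeasurableSet S) (hS' : MeasurableSet S') (h : S ⊆ S') :
    nu μ v S ≤ nu μ v S' := by
  refine integral_mono (integrable_mul_indicator hv hvi hS)
    (integrable_mul_indicator hv hvi hS') fun x => ?_
  refine mul_le_mul_of_nonneg_left ?_ (hv0 x)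
  exact Set.indicator_le_indicator_of_subset h (fun _ => zero_le_one) x

lemma nu_univ : nu μ v Set.univ = ∫ x, v x ∂μ := by
  unfold nu; simp

lemma nu_empty : nu μ v (∅ : Set ℝ) = 0 := by
  unfold nu; simp

lemma nu_Iic_continuous (hv : Measurable v) (hvi : Integrable v μ)
    (hatom : ∀ x : ℝ, μ {x} = 0) :
    Continuous (fun t => nu μ v (Set.Iic t)) := by
  apply SeqContinuous.continuous
  intro u t hu
  refine tendsto_integral_of_dominated_convergence (fun x => |v x|)
    (fun n => (integrable_mul_indicator hv hvi measurableSet_Iic).1) hvi.abs ?_ ?_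
  · intro n
    filter_upwards with x
    rw [Real.norm_eq_abs, abs_mul]
    by_cases hx : x ∈ Set.Iic (u n)
    · rw [Set.indicator_of_mem hx]; simp
    · rw [Set.indicator_of_notMem hx]; simp [abs_nonneg]
  · filter_upwards [measure_eq_zero_iff_ae_notMem.mp (hatom t)] with x hx
    have hxt : x ≠ t := hx
    rcases lt_or_gt_of_ne hxt with h|h
    · have : ∀ᶠ n in atTop, v x * (Set.Iic (u n)).indicator (fun _ => (1:ℝ)) x
          = v x * (Set.Iic t).indicator (fun _ => (1:ℝ)) x := by
        filter_upwards [hu.eventually (Ioi_mem_nhds h)] with n hn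
        rw [Set.indicator_of_mem (show x ∈ Set.Iic (u n) from le_of_lt hn),
          Set.indicator_of_mem (show x ∈ Set.Iic t from h.le)]
      exact tendsto_const_nhds.congr' (by filter_upwards [this] with n hn using hn.symm)
    · have : ∀ᶠ n in atTop, v x * (Set.Iic (u n)).indicator (fun _ => (1:ℝ)) x
          = v x * (Set.Iic t).indicator (fun _ => (1:ℝ)) x := by
        filter_upwards [hu.eventually (Iio_mem_nhds h)] with n hn
        rw [Set.indicator_of_notMem (show x ∉ Set.Iic (u n) by
            simp only [Set.mem_Iic, not_le]; exact hn),
          Set.indicator_of_notMem (show x ∉ Set.Iic t by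
            simp only [Set.mem_Iic, not_le]; exact h)]
      exact tendsto_const_nhds.congr' (by filter_upwards [this] with n hn using hn.symm)

lemma tendsto_nu_Iic_atTop (hv : Measurable v) (hvi : Integrable v μ) :
    Tendsto (fun k : ℕ => nu μ v (Set.Iic (k:ℝ))) atTop (𝓝 (∫ x, v x ∂μ)) := by
  refine tendsto_integral_of_dominated_convergence (fun x => |v x|)
    (fun n => (integrable_mul_indicator hv hvi measurableSet_Iic).1) hvi.abs ?_ ?_
  · intro n
    filter_upwards with x
    rw [Real.norm_eq_abs, abs_mul]
    by_cases hx : x ∈ Set.Iic ((n:ℝ))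
    · rw [Set.indicator_of_mem hx]; simp
    · rw [Set.indicator_of_notMem hx]; simp [abs_nonneg]
  · filter_upwards with x
    have : ∀ᶠ k : ℕ in atTop, v x * (Set.Iic ((k:ℝ))).indicator (fun _ => (1:ℝ)) x = v x := by
      filter_upwards [tendsto_natCast_atTop_atTop.eventually_ge_atTop x] with k hk
      rw [Set.indicator_of_mem (show x ∈ Set.Iic ((k:ℝ)) from hk)]
      ring
    exact tendsto_const_nhds.congr' (by filter_upwards [this] with k hk using hk.symm)

lemma tendsto_nu_Iic_atBot (hv : Measurable v) (hvi : Integrable v μ) :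
    Tendsto (fun k : ℕ => nu μ v (Set.Iic (-(k:ℝ)))) atTop (𝓝 0) := by
  have h0 : (0:ℝ) = ∫ x, (0:ℝ) ∂μ := by simp
  rw [h0]
  refine tendsto_integral_of_dominated_convergence (fun x => |v x|)
    (fun n => (integrable_mul_indicator hv hvi measurableSet_Iic).1) hvi.abs ?_ ?_
  · intro n
    filter_upwards with x
    rw [Real.norm_eq_abs, abs_mul]
    by_cases hx : x ∈ Set.Iic (-(n:ℝ))
    · rw [Set.indicator_of_mem hx]; simp
    · rw [Set.indicator_of_notMem hx]; simp [abs_nonneg]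
  · filter_upwards with x
    have : ∀ᶠ k : ℕ in atTop, v x * (Set.Iic (-(k:ℝ))).indicator (fun _ => (1:ℝ)) x = 0 := by
      filter_upwards [tendsto_natCast_atTop_atTop.eventually_gt_atTop (-x)] with k hk
      rw [Set.indicator_of_notMem (show x ∉ Set.Iic (-(k:ℝ)) by
        simp only [Set.mem_Iic, not_le]; linarith)]
      ring
    exact tendsto_const_nhds.congr' (by filter_upwards [this] with k hk using hk.symm)

lemma nu_nonneg (hv0 : ∀ x, 0 ≤ v x) (S : Set ℝ) : 0 ≤ nu μ v S := by
  refine integral_nonneg fun x => ?_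
  by_cases hx : x ∈ S
  · rw [Set.indicator_of_mem hx]; simpa using hv0 x
  · rw [Set.indicator_of_notMem hx]; simp

/-- existence of an ε-grid for the weighted distribution function -/
lemma exists_grid (hv : Measurable v) (hv0 : ∀ x, 0 ≤ v x) (hvi : Integrable v μ)
    (hatom : ∀ x : ℝ, μ {x} = 0) {ε : ℝ} (hε : 0 < ε) :
    ∃ m : ℕ, 1 ≤ m ∧ (∫ x, v x ∂μ) / m ≤ ε ∧ ∃ t : ℕ → ℝ,
      ∀ j, 1 ≤ j → j ≤ m - 1 → nu μ v (Set.Iic (t j)) = j * (∫ x, v x ∂μ) / m := by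
  classical
  set C : ℝ := ∫ x, v x ∂μ with hC
  have hC0 : 0 ≤ C := integral_nonneg fun x => hv0 x
  refine ⟨max 1 ⌈C / ε⌉₊, le_max_left _ _, ?_, ?_⟩
  · rw [div_le_iff₀ (by positivity)]
    have h1 : C / ε ≤ (⌈C / ε⌉₊ : ℝ) := Nat.le_ceil _
    have h2 : (⌈C / ε⌉₊ : ℝ) ≤ ((max 1 ⌈C / ε⌉₊ : ℕ) : ℝ) := by
      exact_mod_cast le_max_right _ _
    calc C = (C / ε) * ε := by field_simp
      _ ≤ ε * ((max 1 ⌈C / ε⌉₊ : ℕ) : ℝ) := by nlinarith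
  · set m : ℕ := max 1 ⌈C / ε⌉₊ with hm
    rcases eq_or_lt_of_le hC0 with hCzero|hCpos
    · refine ⟨fun _ => 0, fun j _ _ => ?_⟩
      have hle : nu μ v (Set.Iic (0:ℝ)) ≤ C := by
        rw [hC, ← nu_univ]
        exact nu_mono hv hv0 hvi measurableSet_Iic MeasurableSet.univ (Set.subset_univ _)
      have hge : 0 ≤ nu μ v (Set.Iic (0:ℝ)) := nu_nonneg hv0 _
      rw [← hCzero] at hle ⊢
      rw [le_antisymm hle hge]
      simp
    · have key : ∀ j : ℕ, 1 ≤ j → j ≤ m - 1 → ∃ s, nu μ v (Set.Iic s) = j * C / m := by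
        intro j hj1 hj2
        have hmpos : (0:ℝ) < m := by positivity
        have hjm : (j:ℝ) < m := by
          have hmge : 1 ≤ m := le_max_left _ _
          have : j < m := by omega
          exact_mod_cast this
        have hy0 : 0 < (j:ℝ) * C / m := by
          have : (0:ℝ) < j := by exact_mod_cast hj1
          positivity
        have hyC : (j:ℝ) * C / m < C := by
          rw [div_lt_iff₀ hmpos]
          nlinarith
        obtain ⟨k₀, hk₀⟩ := (tendsto_nu_Iic_atBot hv hvi).eventually
          (eventually_lt_nhds hy0) |>.exists
        obtain ⟨k₁, hk₁⟩ := (tendsto_nu_Iic_atTop hv hvi).eventually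
          (eventually_gt_nhds hyC) |>.exists
        have hab : (-(k₀:ℝ)) ≤ (k₁:ℝ) := by
          by_contra hcon
          push_neg at hcon
          have := nu_mono hv hv0 hvi measurableSet_Iic measurableSet_Iic
            (Set.Iic_subset_Iic.2 hcon.le)
          linarith
        have := intermediate_value_Icc hab (nu_Iic_continuous hv hvi hatom).continuousOn
        obtain ⟨s, _, hs⟩ := this ⟨hk₀.le, hk₁.le⟩
        exact ⟨s, hs⟩
      choose! t ht using key
      exact ⟨t, ht⟩

end Nu

/-- Uniform convergence of weighted empirical averages over all lower sets. -/
lemma unif_lower_eps {f : Ω → ℝ} (hT : Ergodic T P) (hf : Measurable f)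
    (hatomless : ∀ x : ℝ, P.map f {x} = 0)
    {v : ℝ → ℝ} (hv : Measurable v) (hv0 : ∀ x, 0 ≤ v x)
    (hvi : Integrable v (P.map f)) {ε : ℝ} (hε : 0 < ε) :
    ∀ᵐ ω ∂P, ∀ᶠ n : ℕ in atTop, ∀ J : Set ℝ, IsLowerSet J →
      |(1 / (n : ℝ)) * ∑ i ∈ Finset.range n,
          v (f (T^[i] ω)) * J.indicator (fun _ => (1:ℝ)) (f (T^[i] ω))
        - nu (P.map f) v J| ≤ ε := by
  classical
  set μ := P.map f with hμ
  haveI : IsProbabilityMeasure μ := Measure.isProbabilityMeasure_map hf.aemeasurable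
  set C : ℝ := ∫ x, v x ∂μ with hCdef
  have hC0 : 0 ≤ C := integral_nonneg fun x => hv0 x
  obtain ⟨m, hm1, hCm, t, ht⟩ := exists_grid hv hv0 hvi hatomless (half_pos hε)
  set g : ℕ → Ω → ℝ :=
    fun j ω => v (f ω) * (Set.Iic (t j)).indicator (fun _ => (1:ℝ)) (f ω) with hgdef
  have hvmeas : ∀ j : ℕ, Measurable fun x => v x * (Set.Iic (t j)).indicator (fun _ => (1:ℝ)) x :=
    fun j => hv.mul (measurable_const.indicator measurableSet_Iic)
  have hgmeas : ∀ j, Measurable (g j) := fun j => (hvmeas j).comp hf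
  have hgint : ∀ j, Integrable (g j) P := fun j =>
    (integrable_map_measure (hvmeas j).aestronglyMeasurable hf.aemeasurable).mp
      (integrable_mul_indicator hv hvi measurableSet_Iic)
  have hgval : ∀ j, ∫ ω, g j ω ∂P = nu μ v (Set.Iic (t j)) := fun j => by
    rw [nu, hμ, integral_map hf.aemeasurable (hvmeas j).aestronglyMeasurable]
  have hUint : Integrable (fun ω => v (f ω)) P :=
    (integrable_map_measure hv.aestronglyMeasurable hf.aemeasurable).mp hvi
  have hUval : ∫ ω, v (f ω) ∂P = C := by
    rw [hCdef, hμ, integral_map hf.aemeasurable hv.aestronglyMeasurable]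
  have hBirk : ∀ᵐ ω ∂P,
      (∀ j : ℕ, Tendsto (fun n => birkhoffSum T (g j) n ω / n) atTop
        (𝓝 (nu μ v (Set.Iic (t j))))) ∧
      Tendsto (fun n => birkhoffSum T (fun ω' => v (f ω')) n ω / n) atTop (𝓝 C) := by
    refine (ae_all_iff.2 fun j => ?_).and ?_
    · have := birkhoff_ergodic hT (hgmeas j) (hgint j)
      rwa [hgval j] at this
    · have := birkhoff_ergodic (g := fun ω => v (f ω)) hT (hv.comp hf) hUint
      rwa [hUval] at this
  filter_upwards [hBirk] with ω hω
  obtain ⟨hωg, hωU⟩ := hω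
  have hev1 : ∀ᶠ n : ℕ in atTop, ∀ j ∈ Finset.Icc 1 (m-1),
      |birkhoffSum T (g j) n ω / n - nu μ v (Set.Iic (t j))| ≤ ε/4 := by
    rw [eventually_all_finset]
    intro j _
    filter_upwards [(hωg j).eventually
      (Metric.closedBall_mem_nhds _ (by positivity : (0:ℝ) < ε/4))] with n hn
    simpa [Metric.mem_closedBall, Real.dist_eq] using hn
  have hev2 : ∀ᶠ n : ℕ in atTop,
      |birkhoffSum T (fun ω' => v (f ω')) n ω / n - C| ≤ ε/4 := by
    filter_upwards [hωU.eventually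
      (Metric.closedBall_mem_nhds _ (by positivity : (0:ℝ) < ε/4))] with n hn
    simpa [Metric.mem_closedBall, Real.dist_eq] using hn
  filter_upwards [hev1, hev2] with n hn1 hn2
  intro J hJ
  set E : Set ℝ → ℝ := fun S => (1 / (n : ℝ)) * ∑ i ∈ Finset.range n,
    v (f (T^[i] ω)) * S.indicator (fun _ => (1:ℝ)) (f (T^[i] ω)) with hEdef
  show |E J - nu μ v J| ≤ ε
  have hEmono : ∀ S S' : Set ℝ, S ⊆ S' → E S ≤ E S' := by
    intro S S' hSS
    refine mul_le_mul_of_nonneg_left (Finset.sum_le_sum fun i _ => ?_) (by positivity)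
    exact mul_le_mul_of_nonneg_left
      (Set.indicator_le_indicator_of_subset hSS (fun _ => zero_le_one) _) (hv0 _)
  have hEg : ∀ j : ℕ, E (Set.Iic (t j)) = birkhoffSum T (g j) n ω / n := by
    intro j
    have hb : birkhoffSum T (g j) n ω = ∑ i ∈ Finset.range n,
        v (f (T^[i] ω)) * (Set.Iic (t j)).indicator (fun _ => (1:ℝ)) (f (T^[i] ω)) := rfl
    simp only [hEdef]
    rw [hb, one_div_mul_eq_div]
  have hEU : E Set.univ = birkhoffSum T (fun ω' => v (f ω')) n ω / n := by
    have hb : birkhoffSum T (fun ω' => v (f ω')) n ω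
        = ∑ i ∈ Finset.range n, v (f (T^[i] ω)) := rfl
    simp only [hEdef]
    rw [hb, one_div_mul_eq_div]
    simp
  have hEempty : E (∅ : Set ℝ) = 0 := by
    simp only [hEdef]; simp
  rcases isLowerSet_cases hJ with rfl|rfl|⟨s, hs1, hs2, hJm⟩
  · rw [hEempty, nu_empty]
    simpa using hε.le
  · rw [hEU, nu_univ, ← hCdef]
    linarith [abs_le.1 hn2]
  · obtain ⟨A, B, hAm, hBm, hA, hB, hEA, hEB, hgap⟩ :
        ∃ A B : Set ℝ, MeasurableSet A ∧ MeasurableSet B ∧ A ⊆ Set.Iio s ∧ Set.Iic s ⊆ B ∧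
          |E A - nu μ v A| ≤ ε/4 ∧ |E B - nu μ v B| ≤ ε/4 ∧
          nu μ v B - nu μ v A ≤ ε/2 := by
      set Γ : Finset ℕ := Finset.Icc 1 (m-1) with hΓ
      set Slt : Finset ℕ := Γ.filter (fun j => t j < s) with hSlt
      set Sge : Finset ℕ := Γ.filter (fun j => s ≤ t j) with hSge
      have htotal : ∀ j ∈ Γ, j ∈ Slt ∨ j ∈ Sge := by
        intro j hj
        rcases lt_or_ge (t j) s with h|h
        · exact Or.inl (Finset.mem_filter.2 ⟨hj, h⟩)
        · exact Or.inr (Finset.mem_filter.2 ⟨hj, h⟩)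
      have hmR : (0:ℝ) < m := by exact_mod_cast Nat.lt_of_lt_of_le Nat.zero_lt_one hm1
      have hval : ∀ j ∈ Γ, nu μ v (Set.Iic (t j)) = j * C / m := fun j hj =>
        ht j (Finset.mem_Icc.1 hj).1 (Finset.mem_Icc.1 hj).2
      have hEgrid : ∀ j ∈ Γ, |E (Set.Iic (t j)) - nu μ v (Set.Iic (t j))| ≤ ε/4 := by
        intro j hj
        rw [hEg j]
        exact hn1 j hj
      have hEuniv : |E Set.univ - nu μ v Set.univ| ≤ ε/4 := by
        rw [hEU, nu_univ, ← hCdef]; exact hn2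
      have hEemp : |E ∅ - nu μ v ∅| ≤ ε/4 := by
        rw [hEempty, nu_empty]; simpa using (by positivity : (0:ℝ) ≤ ε/4)
      by_cases h1 : Slt.Nonempty <;> by_cases h2 : Sge.Nonempty
      · set p := Slt.max' h1 with hp
        set q := Sge.min' h2 with hq
        have hpmem := Slt.max'_mem h1
        have hqmem := Sge.min'_mem h2
        have hpΓ : p ∈ Γ := (Finset.mem_filter.1 hpmem).1
        have hqΓ : q ∈ Γ := (Finset.mem_filter.1 hqmem).1
        have hps : t p < s := (Finset.mem_filter.1 hpmem).2
        have hsq : s ≤ t q := (Finset.mem_filter.1 hqmem).2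
        have hqp : q ≤ p + 1 := by
          by_contra hcon
          push_neg at hcon
          have hj : p + 1 ∈ Γ := by
            rw [hΓ, Finset.mem_Icc] at hpΓ hqΓ ⊢
            omega
          rcases htotal _ hj with h|h
          · have := Slt.le_max' _ h; omega
          · have := Sge.min'_le _ h; omega
        refine ⟨Set.Iic (t p), Set.Iic (t q), measurableSet_Iic, measurableSet_Iic,
          fun x hx => lt_of_le_of_lt hx hps, fun x hx => le_trans hx hsq,
          hEgrid p hpΓ, hEgrid q hqΓ, ?_⟩
        rw [hval p hpΓ, hval q hqΓ]
        have hqpR : (q:ℝ) ≤ (p:ℝ) + 1 := by exact_mod_cast hqp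
        have key : (q:ℝ) * C / m - p * C / m ≤ C / m := by
          have h5 : (q:ℝ) * C / m - p * C / m = ((q:ℝ) - p) * C / m := by ring
          rw [h5]
          exact (div_le_div_iff_of_pos_right hmR).2 (by nlinarith)
        linarith
      · -- Sge empty : B = univ, A = Iic (t (m-1))
        set p := Slt.max' h1 with hp
        have hpmem := Slt.max'_mem h1
        have hpΓ : p ∈ Γ := (Finset.mem_filter.1 hpmem).1
        have hps : t p < s := (Finset.mem_filter.1 hpmem).2
        have hpeq : p = m - 1 := by
          have hm1Γ : m - 1 ∈ Γ := by
            rw [hΓ, Finset.mem_Icc]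
            have : p ∈ Γ := hpΓ
            rw [hΓ, Finset.mem_Icc] at this
            omega
          rcases htotal _ hm1Γ with h|h
          · have h3 := Slt.le_max' _ h
            have h4 : p ∈ Γ := hpΓ
            rw [hΓ, Finset.mem_Icc] at h4
            omega
          · exact absurd ⟨_, h⟩ h2
        refine ⟨Set.Iic (t p), Set.univ, measurableSet_Iic, MeasurableSet.univ,
          fun x hx => lt_of_le_of_lt hx hps, Set.subset_univ _,
          hEgrid p hpΓ, hEuniv, ?_⟩
        rw [hval p hpΓ, nu_univ, ← hCdef, hpeq]
        have hcast : ((m - 1 : ℕ) : ℝ) = (m:ℝ) - 1 := by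
          rw [Nat.cast_sub hm1]; simp
        rw [hcast]
        have key : C - ((m:ℝ) - 1) * C / m = C / m := by
          field_simp
          ring
        linarith
      · -- Slt empty : A = ∅, B = Iic (t q) with q = 1
        set q := Sge.min' h2 with hq
        have hqmem := Sge.min'_mem h2
        have hqΓ : q ∈ Γ := (Finset.mem_filter.1 hqmem).1
        have hsq : s ≤ t q := (Finset.mem_filter.1 hqmem).2
        have hqeq : q = 1 := by
          have h1Γ : 1 ∈ Γ := by
            rw [hΓ, Finset.mem_Icc]
            have : q ∈ Γ := hqΓ
            rw [hΓ, Finset.mem_Icc] at this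
            omega
          rcases htotal _ h1Γ with h|h
          · exact absurd ⟨_, h⟩ h1
          · have h3 := Sge.min'_le _ h
            have h4 : q ∈ Γ := hqΓ
            rw [hΓ, Finset.mem_Icc] at h4
            omega
        refine ⟨∅, Set.Iic (t q), MeasurableSet.empty, measurableSet_Iic,
          Set.empty_subset _, fun x hx => le_trans hx hsq,
          hEemp, hEgrid q hqΓ, ?_⟩
        rw [nu_empty, hval q hqΓ, hqeq]
        simp only [Nat.cast_one, one_mul, sub_zero]
        linarith
      · -- both empty : m = 1
        have hmeq : m = 1 := by
          by_contra hcon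
          have h1Γ : 1 ∈ Γ := by
            rw [hΓ, Finset.mem_Icc]
            omega
          rcases htotal _ h1Γ with h|h
          · exact h1 ⟨_, h⟩
          · exact h2 ⟨_, h⟩
        refine ⟨∅, Set.univ, MeasurableSet.empty, MeasurableSet.univ,
          Set.empty_subset _, Set.subset_univ _, hEemp, hEuniv, ?_⟩
        rw [nu_empty, nu_univ, ← hCdef]
        have : C / (m:ℝ) = C := by rw [hmeq]; simp
        linarith
    have l1 : E A ≤ E J := hEmono _ _ (hA.trans hs1)
    have l2 : E J ≤ E B := hEmono _ _ (hs2.trans hB)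
    have l3 : nu μ v A ≤ nu μ v J := nu_mono hv hv0 hvi hAm hJm (hA.trans hs1)
    have l4 : nu μ v J ≤ nu μ v B := nu_mono hv hv0 hvi hJm hBm (hs2.trans hB)
    have e1 := abs_le.1 hEA
    have e2 := abs_le.1 hEB
    rw [abs_le]
    constructor <;> linarith [e1.1, e1.2, e2.1, e2.2]

lemma nu_def {μ : Measure ℝ} {v : ℝ → ℝ} (S : Set ℝ) :
    nu μ v S = ∫ x, v x * S.indicator (fun _ => (1:ℝ)) x ∂μ := rfl

lemma isLowerSet_measurableSet {S : Set ℝ} (hS : IsLowerSet S) : MeasurableSet S := by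
  rcases isLowerSet_cases hS with rfl|rfl|⟨s, _, _, hm⟩
  exacts [MeasurableSet.empty, MeasurableSet.univ, hm]

end ErgodicGC

open ErgodicGC

/-- Glivenko–Cantelli-type uniform ergodic theorem over intervals: for a stationary ergodic
real sequence `Y_i = f ∘ T^(i-1)` with atomless marginal `μ` of finite second moment, the
empirical averages of `x ↦ x^a 1_I(x)` (for `a = 0, 1, 2`) converge to their expectations
uniformly over all intervals `I`, almost surely. -/
theorem ergodic_unif_intervals
    {Ω : Type*} [MeasurableSpace Ω] (P : Measure Ω) [IsProbabilityMeasure P]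
    (T : Ω → Ω) (hT : Ergodic T P)
    (f : Ω → ℝ) (hf : Measurable f)
    (hatomless : ∀ x : ℝ, P.map f {x} = 0)
    (hmom : Integrable (fun x => x ^ 2) (P.map f))
    (a : ℕ) (ha : a ≤ 2) :
    ∀ᵐ ω ∂P, ∀ ε > (0 : ℝ), ∀ᶠ n : ℕ in atTop, ∀ I : Set ℝ, I.OrdConnected →
      |(1 / (n : ℝ)) * ∑ i ∈ Finset.range n,
          (f (T^[i] ω)) ^ a * I.indicator (fun _ => (1 : ℝ)) (f (T^[i] ω))
        - ∫ x, x ^ a * I.indicator (fun _ => (1 : ℝ)) x ∂(P.map f)| ≤ ε := by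
  classical
  set μ := P.map f with hμ
  haveI : IsProbabilityMeasure μ := Measure.isProbabilityMeasure_map hf.aemeasurable
  have hwm : Measurable (fun x : ℝ => x ^ a) := measurable_id.pow_const a
  have hwi : Integrable (fun x : ℝ => x ^ a) μ := by
    refine Integrable.mono' ((integrable_const (1:ℝ)).add hmom) hwm.aestronglyMeasurable ?_
    filter_upwards with x
    rw [Real.norm_eq_abs, abs_pow]
    simp only [Pi.add_apply]
    rcases le_or_gt (|x|) 1 with h|h
    · have h1 : |x|^a ≤ 1 := pow_le_one₀ (abs_nonneg x) h
      nlinarith [sq_nonneg x]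
    · have h1 : |x|^a ≤ |x|^2 := pow_le_pow_right₀ h.le ha
      have h2 : |x|^2 = x^2 := sq_abs x
      nlinarith [sq_nonneg x]
  set vp : ℝ → ℝ := fun x => max (x^a) 0 with hvp
  set vm : ℝ → ℝ := fun x => max (-(x^a)) 0 with hvm
  have hvpm : Measurable vp := hwm.max measurable_const
  have hvmm : Measurable vm := hwm.neg.max measurable_const
  have hvp0 : ∀ x, 0 ≤ vp x := fun x => le_max_right _ _
  have hvm0 : ∀ x, 0 ≤ vm x := fun x => le_max_right _ _
  have habs : ∀ x : ℝ, |vp x| ≤ |x ^ a| ∧ |vm x| ≤ |x ^ a| := by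
    intro x
    constructor
    · rw [abs_of_nonneg (hvp0 x)]
      exact max_le (le_abs_self _) (abs_nonneg _)
    · rw [abs_of_nonneg (hvm0 x)]
      exact max_le (neg_le_abs _) (abs_nonneg _)
  have hvpi : Integrable vp μ := by
    refine Integrable.mono' hwi.abs hvpm.aestronglyMeasurable ?_
    filter_upwards with x
    rw [Real.norm_eq_abs]
    exact (habs x).1
  have hvmi : Integrable vm μ := by
    refine Integrable.mono' hwi.abs hvmm.aestronglyMeasurable ?_
    filter_upwards with x
    rw [Real.norm_eq_abs]
    exact (habs x).2
  have hsub : ∀ x : ℝ, vp x - vm x = x ^ a := fun x =>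
    max_zero_sub_max_neg_zero_eq_self (x ^ a)
  have hplus : ∀ᵐ ω ∂P, ∀ K : ℕ, ∀ᶠ n : ℕ in atTop, ∀ J : Set ℝ, IsLowerSet J →
      |(1 / (n : ℝ)) * ∑ i ∈ Finset.range n,
          vp (f (T^[i] ω)) * J.indicator (fun _ => (1:ℝ)) (f (T^[i] ω))
        - nu μ vp J| ≤ 1/(K+1) :=
    ae_all_iff.2 fun K => unif_lower_eps hT hf hatomless hvpm hvp0 hvpi (by positivity)
  have hminus : ∀ᵐ ω ∂P, ∀ K : ℕ, ∀ᶠ n : ℕ in atTop, ∀ J : Set ℝ, IsLowerSet J →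
      |(1 / (n : ℝ)) * ∑ i ∈ Finset.range n,
          vm (f (T^[i] ω)) * J.indicator (fun _ => (1:ℝ)) (f (T^[i] ω))
        - nu μ vm J| ≤ 1/(K+1) :=
    ae_all_iff.2 fun K => unif_lower_eps hT hf hatomless hvmm hvm0 hvmi (by positivity)
  filter_upwards [hplus, hminus] with ω Hp Hm
  intro ε hε
  obtain ⟨K, hK⟩ := exists_nat_one_div_lt (show (0:ℝ) < ε/4 by linarith)
  filter_upwards [Hp K, Hm K] with n hnp hnm
  intro I hI
  obtain ⟨J, J', hJ, hJ', hind⟩ := ordConnected_indicator_decomp hI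
  have hJm : MeasurableSet J := isLowerSet_measurableSet hJ
  have hJ'm : MeasurableSet J' := isLowerSet_measurableSet hJ'
  have hpt : ∀ y : ℝ, y ^ a * I.indicator (fun _ => (1:ℝ)) y
      = (vp y * J.indicator (fun _ => (1:ℝ)) y - vp y * J'.indicator (fun _ => (1:ℝ)) y)
        - (vm y * J.indicator (fun _ => (1:ℝ)) y - vm y * J'.indicator (fun _ => (1:ℝ)) y) := by
    intro y
    rw [hind y, ← hsub y]
    ring
  have hsumeq : (1 / (n : ℝ)) * ∑ i ∈ Finset.range n,
        (f (T^[i] ω)) ^ a * I.indicator (fun _ => (1:ℝ)) (f (T^[i] ω))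
      = ((1 / (n : ℝ)) * ∑ i ∈ Finset.range n,
          vp (f (T^[i] ω)) * J.indicator (fun _ => (1:ℝ)) (f (T^[i] ω)))
        - ((1 / (n : ℝ)) * ∑ i ∈ Finset.range n,
          vp (f (T^[i] ω)) * J'.indicator (fun _ => (1:ℝ)) (f (T^[i] ω)))
        - ((1 / (n : ℝ)) * ∑ i ∈ Finset.range n,
          vm (f (T^[i] ω)) * J.indicator (fun _ => (1:ℝ)) (f (T^[i] ω)))
        + ((1 / (n : ℝ)) * ∑ i ∈ Finset.range n,
          vm (f (T^[i] ω)) * J'.indicator (fun _ => (1:ℝ)) (f (T^[i] ω))) := by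
    rw [Finset.sum_congr rfl (fun i _ => hpt (f (T^[i] ω)))]
    rw [Finset.sum_sub_distrib, Finset.sum_sub_distrib, Finset.sum_sub_distrib]
    ring
  have i1 := integrable_mul_indicator (μ := μ) hvpm hvpi hJm
  have i2 := integrable_mul_indicator (μ := μ) hvpm hvpi hJ'm
  have i3 := integrable_mul_indicator (μ := μ) hvmm hvmi hJm
  have i4 := integrable_mul_indicator (μ := μ) hvmm hvmi hJ'm
  have hinteq : ∫ x, x ^ a * I.indicator (fun _ => (1:ℝ)) x ∂μ
      = nu μ vp J - nu μ vp J' - nu μ vm J + nu μ vm J' := by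
    have h1 : (fun x : ℝ => x ^ a * I.indicator (fun _ => (1:ℝ)) x)
        = fun x => (vp x * J.indicator (fun _ => (1:ℝ)) x
            - vp x * J'.indicator (fun _ => (1:ℝ)) x)
          - (vm x * J.indicator (fun _ => (1:ℝ)) x
            - vm x * J'.indicator (fun _ => (1:ℝ)) x) := funext hpt
    have i12 : Integrable (fun x => vp x * J.indicator (fun _ => (1:ℝ)) x
        - vp x * J'.indicator (fun _ => (1:ℝ)) x) μ := i1.sub i2
    have i34 : Integrable (fun x => vm x * J.indicator (fun _ => (1:ℝ)) x
        - vm x * J'.indicator (fun _ => (1:ℝ)) x) μ := i3.sub i4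
    rw [h1, integral_sub i12 i34, integral_sub i1 i2, integral_sub i3 i4,
      nu_def, nu_def, nu_def, nu_def]
    ring
  rw [hsumeq, hinteq]
  have b1 := abs_le.1 (hnp J hJ)
  have b2 := abs_le.1 (hnp J' hJ')
  have b3 := abs_le.1 (hnm J hJ)
  have b4 := abs_le.1 (hnm J' hJ')
  rw [abs_le]
  constructor <;> linarith [b1.1, b1.2, b2.1, b2.2, b3.1, b3.2, b4.1, b4.2]
end

section
/- Let μ be an atomless probability measure on ℝ with ∫ x² dμ(x) < ∞, let a ∈ {0, 1, 2}, and let ε > 0. Then there exists a finite family 𝒥 of intervals of ℝ such that for every interval I ⊆ ℝ there exist J₁, J₂ ∈ 𝒥 with x^a · 1_{J₁}(x) ≤ x^a · 1_I(x) ≤ x^a · 1_{J₂}(x) for all x ∈ ℝ, and ∫ x^a (1_{J₂}(x) − 1_{J₁}(x)) dμ(x) ≤ ε. -/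
set_option linter.unnecessarySimpa false

open MeasureTheory
open scoped NNReal ENNReal

open MeasureTheory Set Filter
open scoped NNReal ENNReal Topology

noncomputable section

namespace BracketAux

lemma abs_pow_le (a : ℕ) (ha : a ≤ 2) (x : ℝ) : |x| ^ a ≤ 1 + x ^ 2 := by
  rcases le_total |x| 1 with h | h
  · have h1 : |x| ^ a ≤ 1 := pow_le_one₀ (abs_nonneg x) h
    nlinarith [sq_nonneg x]
  · have h1 : |x| ^ a ≤ |x| ^ 2 := pow_le_pow_right₀ h ha
    have h2 : |x| ^ 2 = x ^ 2 := sq_abs x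
    nlinarith

lemma integrable_aux {μ : Measure ℝ} [IsProbabilityMeasure μ]
    (hmom : Integrable (fun x => x ^ 2) μ) {f : ℝ → ℝ}
    (hm : AEStronglyMeasurable f μ) (c : ℝ)
    (hb : ∀ x, ‖f x‖ ≤ c * (1 + x ^ 2)) : Integrable f μ := by
  have h1 : Integrable (fun x : ℝ => c * (1 + x ^ 2)) μ :=
    (((integrable_const (1:ℝ)).add hmom).const_mul c)
  refine h1.mono hm (ae_of_all _ fun x => ?_)
  exact (hb x).trans (le_abs_self _)

lemma integrable_weight {μ : Measure ℝ} [IsProbabilityMeasure μ]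
    (hmom : Integrable (fun x => x ^ 2) μ) (a : ℕ) (ha : a ≤ 2) :
    Integrable (fun x : ℝ => |x| ^ a) μ := by
  refine integrable_aux hmom ((continuous_abs.pow a).aestronglyMeasurable) 1 fun x => ?_
  rw [one_mul, Real.norm_eq_abs, abs_of_nonneg (pow_nonneg (abs_nonneg x) a)]
  exact abs_pow_le a ha x

lemma grid (μ : Measure ℝ) [IsProbabilityMeasure μ] [NullSingletonClass μ]
    (hmom : Integrable (fun x => x ^ 2) μ) (a : ℕ) (ha : a ≤ 2)
    (δ : ℝ) (hδ : 0 < δ) :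
    ∃ T : Finset EReal, ⊥ ∈ T ∧ ⊤ ∈ T ∧ ((0:ℝ):EReal) ∈ T ∧
      ∀ A ∈ T, ∀ B ∈ T, (∀ t ∈ T, t ≤ A ∨ B ≤ t) →
        ∫ x in {y : ℝ | A ≤ (y:EReal) ∧ (y:EReal) ≤ B}, |x| ^ a ∂μ ≤ δ := by
  set w : ℝ → ℝ := fun x => |x| ^ a with hw
  have hwint : Integrable w μ := integrable_weight hmom a ha
  have hw0 : ∀ x, 0 ≤ w x := fun x => pow_nonneg (abs_nonneg x) a
  set F : ℝ → ℝ := fun t => ∫ x in Iic t, w x ∂μ with hF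
  have hFmono : Monotone F := fun s t hst =>
    setIntegral_mono_set hwint.integrableOn (ae_of_all _ hw0)
      (HasSubset.Subset.eventuallyLE (Iic_subset_Iic.2 hst))
  have hrepr : ∀ s : ℝ, F s = ∫ x, (Iic s).indicator w x ∂μ := fun s =>
    (integral_indicator measurableSet_Iic).symm
  have hbnd : ∀ (s : ℝ), ∀ᵐ x ∂μ, ‖(Iic s).indicator w x‖ ≤ w x := by
    intro s
    refine ae_of_all _ fun x => ?_
    by_cases hx : x ∈ Iic s <;>
      simp [Set.indicator_of_mem, Set.indicator_of_notMem, hx,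
        Real.norm_eq_abs, abs_of_nonneg (hw0 x), hw0 x]
  have hmeas : ∀ s : ℝ, AEStronglyMeasurable ((Iic s).indicator w) μ := fun s =>
    ((continuous_abs.pow a).aestronglyMeasurable).indicator measurableSet_Iic
  have hFcont : Continuous F := by
    rw [continuous_iff_continuousAt]
    intro t
    have hne : ∀ᵐ x ∂μ, x ≠ t := by
      refine ae_iff.mpr ?_
      simpa using measure_singleton (μ := μ) t
    have key := tendsto_integral_filter_of_dominated_convergence (μ := μ) (l := 𝓝 t)
      (F := fun s x => (Iic s).indicator w x) (f := (Iic t).indicator w) w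
      (Eventually.of_forall hmeas) (Eventually.of_forall hbnd) hwint ?_
    · have : Tendsto (fun s => F s) (𝓝 t) (𝓝 (∫ x, (Iic t).indicator w x ∂μ)) :=
        key.congr fun s => (hrepr s).symm
      rw [← hrepr t] at this
      exact this
    · filter_upwards [hne] with x hx
      rcases lt_or_gt_of_ne hx with h | h
      · refine Tendsto.congr' ?_ tendsto_const_nhds
        filter_upwards [eventually_gt_nhds h] with s hs
        simp [Set.indicator_of_mem, hs.le, h.le]
      · refine Tendsto.congr' ?_ tendsto_const_nhds
        filter_upwards [eventually_lt_nhds h] with s hs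
        simp [Set.indicator_of_notMem, not_le.2 hs, not_le.2 h]
  set M : ℝ := ∫ x, w x ∂μ with hM
  have hbot : Tendsto F atBot (𝓝 0) := by
    have key := tendsto_integral_filter_of_dominated_convergence (μ := μ) (l := atBot)
      (F := fun s x => (Iic s).indicator w x) (f := fun _ => (0:ℝ)) w
      (Eventually.of_forall hmeas) (Eventually.of_forall hbnd) hwint ?_
    · have : Tendsto F atBot (𝓝 (∫ _x, (0:ℝ) ∂μ)) := key.congr fun s => (hrepr s).symm
      simpa using this
    · refine ae_of_all _ fun x => ?_
      refine Tendsto.congr' ?_ tendsto_const_nhds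
      filter_upwards [eventually_lt_atBot x] with s hs
      simp [Set.indicator_of_notMem, not_le.2 hs]
  have htop : Tendsto F atTop (𝓝 M) := by
    have key := tendsto_integral_filter_of_dominated_convergence (μ := μ) (l := atTop)
      (F := fun s x => (Iic s).indicator w x) (f := w) w
      (Eventually.of_forall hmeas) (Eventually.of_forall hbnd) hwint ?_
    · exact key.congr fun s => (hrepr s).symm
    · refine ae_of_all _ fun x => ?_
      refine Tendsto.congr' ?_ tendsto_const_nhds
      filter_upwards [eventually_ge_atTop x] with s hs
      simp [Set.indicator_of_mem, hs]
  obtain ⟨R₁, hR₁⟩ : ∃ s : ℝ, F s < δ := (hbot.eventually_lt_const hδ).exists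
  obtain ⟨R₂, hR₂⟩ : ∃ s : ℝ, M - δ < F s :=
    (htop.eventually_const_lt (by linarith)).exists
  set R : ℝ := max (max (-R₁) R₂) 0 with hR
  have hR0 : 0 ≤ R := le_max_right _ _
  have hFR1 : F (-R) ≤ δ := by
    refine le_trans (hFmono ?_) hR₁.le
    have : -R₁ ≤ R := le_trans (le_max_left _ _) (le_max_left _ _)
    linarith
  have hFR2 : M - δ ≤ F R :=
    le_trans hR₂.le (hFmono (le_trans (le_max_right (-R₁) R₂) (le_max_left _ _)))
  obtain ⟨η, hη0, hηc⟩ := Metric.uniformContinuousOn_iff.1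
    ((isCompact_Icc (a := -(R+1)) (b := R+1)).uniformContinuousOn_of_continuous
      hFcont.continuousOn) δ hδ
  set h : ℝ := min (η/2) 1 with hh
  have hh0 : 0 < h := lt_min (by linarith) one_pos
  have hhη : h < η := lt_of_le_of_lt (min_le_left _ _) (by linarith)
  have hh1 : h ≤ 1 := min_le_right _ _
  set m : ℕ := ⌈R / h⌉₊ with hm
  have hmh_ge : R ≤ m * h := by
    have := Nat.le_ceil (R / h)
    calc R = (R / h) * h := by field_simp
    _ ≤ m * h := by
      apply mul_le_mul_of_nonneg_right this hh0.le
  have hmh_le : (m : ℝ) * h ≤ R + 1 := by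
    have h1 : (m : ℝ) < R / h + 1 := Nat.ceil_lt_add_one (div_nonneg hR0 hh0.le)
    have h2 : (m : ℝ) * h < (R / h + 1) * h := by
      exact mul_lt_mul_of_pos_right h1 hh0
    have h3 : (R / h + 1) * h = R + h := by field_simp
    nlinarith
  set t : ℕ → ℝ := fun k => k * h - m * h with ht
  have htmono : StrictMono t := by
    intro i j hij
    simp only [ht]
    have : (i:ℝ) < j := by exact_mod_cast hij
    nlinarith
  have htK : ∀ k, k ≤ 2*m → t k ∈ Icc (-(R+1)) (R+1) := by
    intro k hk
    constructor
    · simp only [ht]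
      have : (0:ℝ) ≤ (k:ℝ) * h := by positivity
      linarith
    · simp only [ht]
      have hk' : (k:ℝ) ≤ 2*m := by exact_mod_cast hk
      nlinarith
  have hcell : ∀ s u : ℝ, s ≤ u → ∫ x in Icc s u, w x ∂μ = F u - F s := by
    intro s u hsu
    have hun : Iic s ∪ Ioc s u = Iic u := Iic_union_Ioc_eq_Iic hsu
    have h1 : F u = F s + ∫ x in Ioc s u, w x ∂μ := by
      rw [hF]
      simp only
      rw [← hun, setIntegral_union (Iic_disjoint_Ioc le_rfl) measurableSet_Ioc
        hwint.integrableOn hwint.integrableOn]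
    rw [setIntegral_congr_set (Ioc_ae_eq_Icc (μ := μ) (a := s) (b := u)).symm]
    linarith
  have htail2 : ∫ x in Ici (t (2*m)), w x ∂μ = M - F (t (2*m)) := by
    have hun : Iic (t (2*m)) ∪ Ioi (t (2*m)) = univ := Iic_union_Ioi
    have h1 : M = F (t (2*m)) + ∫ x in Ioi (t (2*m)), w x ∂μ := by
      rw [hM, ← setIntegral_univ, ← hun,
        setIntegral_union (Iic_disjoint_Ioi le_rfl) measurableSet_Ioi
          hwint.integrableOn hwint.integrableOn]
    rw [setIntegral_congr_set (Ioi_ae_eq_Ici (μ := μ) (a := t (2*m))).symm]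
    linarith
  refine ⟨insert ⊥ (insert ⊤ ((Finset.range (2*m+1)).image (fun k => ((t k : ℝ) : EReal)))),
    Finset.mem_insert_self _ _,
    Finset.mem_insert_of_mem (Finset.mem_insert_self _ _), ?_, ?_⟩
  · refine Finset.mem_insert_of_mem (Finset.mem_insert_of_mem ?_)
    refine Finset.mem_image.2 ⟨m, Finset.mem_range.2 (by omega), ?_⟩
    norm_num [ht]
  intro A hA B hB hadj
  have hmono2 : ∀ U : Set ℝ, {y : ℝ | A ≤ (y:EReal) ∧ (y:EReal) ≤ B} ⊆ U →
      ∫ x in {y : ℝ | A ≤ (y:EReal) ∧ (y:EReal) ≤ B}, w x ∂μ ≤ ∫ x in U, w x ∂μ :=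
    fun U hU => setIntegral_mono_set hwint.integrableOn (ae_of_all _ hw0)
      (HasSubset.Subset.eventuallyLE hU)
  have ht0mem : ((t 0 : ℝ) : EReal) ∈
      insert ⊥ (insert ⊤ ((Finset.range (2*m+1)).image (fun k => ((t k : ℝ) : EReal)))) := by
    refine Finset.mem_insert_of_mem (Finset.mem_insert_of_mem ?_)
    exact Finset.mem_image.2 ⟨0, Finset.mem_range.2 (by omega), rfl⟩
  have htmmem : ((t (2*m) : ℝ) : EReal) ∈
      insert ⊥ (insert ⊤ ((Finset.range (2*m+1)).image (fun k => ((t k : ℝ) : EReal)))) := by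
    refine Finset.mem_insert_of_mem (Finset.mem_insert_of_mem ?_)
    exact Finset.mem_image.2 ⟨2*m, Finset.mem_range.2 (by omega), rfl⟩
  have htail1' : F (t 0) ≤ δ := by
    refine le_trans (hFmono ?_) hFR1
    simp only [ht]
    push_cast
    linarith
  by_cases hB0 : B ≤ ((t 0 : ℝ) : EReal)
  · refine le_trans (hmono2 (Iic (t 0)) ?_) ?_
    · intro x hx
      exact EReal.coe_le_coe_iff.1 (hx.2.trans hB0)
    · exact htail1'
  · have hA0 : ((t 0 : ℝ) : EReal) ≤ A := (hadj _ ht0mem).resolve_right hB0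
    by_cases hAmax : ((t (2*m) : ℝ) : EReal) ≤ A
    · refine le_trans (hmono2 (Ici (t (2*m))) ?_) ?_
      · intro x hx
        exact EReal.coe_le_coe_iff.1 (hAmax.trans hx.1)
      · rw [htail2]
        have : F R ≤ F (t (2*m)) := by
          refine hFmono ?_
          simp only [ht]
          push_cast
          linarith
        linarith
    · have hBmax : B ≤ ((t (2*m) : ℝ) : EReal) := (hadj _ htmmem).resolve_left hAmax
      rcases Finset.mem_insert.1 hA with rfl | hA'
      · exact absurd (le_bot_iff.1 hA0) (EReal.coe_ne_bot _)
      rcases Finset.mem_insert.1 hA' with rfl | hA''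
      · -- A = ⊤ : the set is empty
        refine le_trans (hmono2 (Iic (t 0)) ?_) htail1'
        intro x hx
        exact absurd (top_le_iff.1 hx.1) (EReal.coe_ne_top x)
      obtain ⟨i, hi, rfl⟩ := Finset.mem_image.1 hA''
      have hi' : i < 2*m+1 := Finset.mem_range.1 hi
      have hilt : i < 2*m := by
        rcases Nat.lt_or_ge i (2*m) with h' | h'
        · exact h'
        · exfalso
          have : i = 2*m := by omega
          subst this
          exact hAmax le_rfl
      have hnext : ((t (i+1) : ℝ) : EReal) ∈
          insert ⊥ (insert ⊤ ((Finset.range (2*m+1)).image (fun k => ((t k : ℝ) : EReal)))) := by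
        refine Finset.mem_insert_of_mem (Finset.mem_insert_of_mem ?_)
        exact Finset.mem_image.2 ⟨i+1, Finset.mem_range.2 (by omega), rfl⟩
      have hBnext : B ≤ ((t (i+1) : ℝ) : EReal) := by
        refine (hadj _ hnext).resolve_left ?_
        rw [EReal.coe_le_coe_iff]
        exact not_le.2 (htmono (Nat.lt_succ_self i))
      refine le_trans (hmono2 (Icc (t i) (t (i+1))) ?_) ?_
      · intro x hx
        exact ⟨EReal.coe_le_coe_iff.1 hx.1, EReal.coe_le_coe_iff.1 (hx.2.trans hBnext)⟩
      · rw [hcell _ _ (htmono (Nat.lt_succ_self i)).le]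
        have hdist : dist (t (i+1)) (t i) < η := by
          rw [Real.dist_eq]
          have : t (i+1) - t i = h := by
            simp only [ht]
            push_cast
            ring
          rw [this, abs_of_pos hh0]
          exact hhη
        have h1 := hηc (t (i+1)) (htK _ (by omega)) (t i) (htK _ (by omega)) hdist
        rw [Real.dist_eq] at h1
        have := abs_lt.1 h1
        linarith



def eI (A B : EReal) (s₁ s₂ : Bool) : Set ℝ :=
  {x : ℝ | (if s₁ then A < (x : EReal) else A ≤ (x : EReal)) ∧
    (if s₂ then (x : EReal) < B else (x : EReal) ≤ B)}

lemma eI_ordConnected (A B : EReal) (s₁ s₂ : Bool) : (eI A B s₁ s₂).OrdConnected := by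
  constructor
  intro x hx y hy z hz
  have hxz : (x : EReal) ≤ (z : EReal) := EReal.coe_le_coe_iff.2 hz.1
  have hzy : (z : EReal) ≤ (y : EReal) := EReal.coe_le_coe_iff.2 hz.2
  cases s₁ <;> cases s₂ <;>
    simp only [eI, mem_setOf_eq, if_true, if_false, Bool.false_eq_true] at hx hy ⊢
  · exact ⟨hx.1.trans hxz, hzy.trans hy.2⟩
  · exact ⟨hx.1.trans hxz, lt_of_le_of_lt hzy hy.2⟩
  · exact ⟨lt_of_lt_of_le hx.1 hxz, hzy.trans hy.2⟩
  · exact ⟨lt_of_lt_of_le hx.1 hxz, lt_of_le_of_lt hzy hy.2⟩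

lemma ind_mul_le_ind_mul (a : ℕ) {S U : Set ℝ}
    (h : ∀ x : ℝ, x ∈ S → x ∉ U → x ^ a ≤ 0)
    (h' : ∀ x : ℝ, x ∈ U → x ∉ S → 0 ≤ x ^ a) (x : ℝ) :
    x ^ a * S.indicator (fun _ => (1 : ℝ)) x ≤ x ^ a * U.indicator (fun _ => (1 : ℝ)) x := by
  by_cases hs : x ∈ S
  · by_cases hu : x ∈ U
    · simp [hs, hu]
    · simp only [Set.indicator_of_mem hs, Set.indicator_of_notMem hu, mul_one, mul_zero]
      exact h x hs hu
  · by_cases hu : x ∈ U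
    · simp only [Set.indicator_of_notMem hs, Set.indicator_of_mem hu, mul_one, mul_zero]
      exact h' x hu hs
    · simp [hs, hu]

lemma pt_bound (a : ℕ) {J₁ J₂ Dp Dq : Set ℝ}
    (h21 : ∀ x : ℝ, x ∈ J₂ → x ∉ J₁ → x ∈ Dp ∪ Dq)
    (h12 : ∀ x : ℝ, x ∈ J₁ → x ∉ J₂ → x ∈ Dp ∪ Dq) (x : ℝ) :
    x ^ a * (J₂.indicator (fun _ => (1 : ℝ)) x - J₁.indicator (fun _ => (1 : ℝ)) x)
      ≤ |x| ^ a * (Dp.indicator (fun _ => (1 : ℝ)) x + Dq.indicator (fun _ => (1 : ℝ)) x) := by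
  have hp : ∀ (D : Set ℝ), (0:ℝ) ≤ D.indicator (fun _ => (1 : ℝ)) x := fun D =>
    Set.indicator_nonneg (fun _ _ => zero_le_one) x
  have hr : (0:ℝ) ≤ |x| ^ a * (Dp.indicator (fun _ => (1 : ℝ)) x
      + Dq.indicator (fun _ => (1 : ℝ)) x) :=
    mul_nonneg (pow_nonneg (abs_nonneg x) a) (add_nonneg (hp _) (hp _))
  have habs : x ^ a ≤ |x| ^ a := by rw [← abs_pow]; exact le_abs_self _
  have hnabs : -(x ^ a) ≤ |x| ^ a := by rw [← abs_pow]; exact neg_le_abs _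
  have key : ∀ x' : ℝ, x' ∈ Dp ∪ Dq →
      (1:ℝ) ≤ Dp.indicator (fun _ => (1 : ℝ)) x' + Dq.indicator (fun _ => (1 : ℝ)) x' := by
    intro x' hx'
    have hp' : ∀ (D : Set ℝ), (0:ℝ) ≤ D.indicator (fun _ => (1 : ℝ)) x' := fun D =>
      Set.indicator_nonneg (fun _ _ => zero_le_one) x'
    rcases hx' with hD | hD
    · have := Set.indicator_of_mem hD (fun _ => (1:ℝ)); rw [this]; linarith [hp' Dq]
    · have := Set.indicator_of_mem hD (fun _ => (1:ℝ)); rw [this]; linarith [hp' Dp]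
  by_cases h2 : x ∈ J₂ <;> by_cases h1 : x ∈ J₁
  · simpa [h1, h2] using hr
  · have hk := key x (h21 x h2 h1)
    simp only [Set.indicator_of_mem h2, Set.indicator_of_notMem h1, sub_zero, mul_one]
    nlinarith [pow_nonneg (abs_nonneg x) a]
  · have hk := key x (h12 x h1 h2)
    simp only [Set.indicator_of_notMem h2, Set.indicator_of_mem h1, zero_sub, mul_one,
      mul_neg]
    nlinarith [pow_nonneg (abs_nonneg x) a]
  · simpa [h1, h2] using hr

lemma abs_pow_le' (a : ℕ) (ha : a ≤ 2) (x : ℝ) : |x| ^ a ≤ 1 + x ^ 2 := by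
  rcases le_total |x| 1 with h | h
  · have h1 : |x| ^ a ≤ 1 := pow_le_one₀ (abs_nonneg x) h
    nlinarith [sq_nonneg x]
  · have h1 : |x| ^ a ≤ |x| ^ 2 := pow_le_pow_right₀ h ha
    have h2 : |x| ^ 2 = x ^ 2 := sq_abs x
    nlinarith

lemma integrable_aux' {μ : Measure ℝ} [IsProbabilityMeasure μ]
    (hmom : Integrable (fun x => x ^ 2) μ) {f : ℝ → ℝ}
    (hm : AEStronglyMeasurable f μ) (c : ℝ)
    (hb : ∀ x, ‖f x‖ ≤ c * (1 + x ^ 2)) : Integrable f μ := by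
  have h1 : Integrable (fun x : ℝ => c * (1 + x ^ 2)) μ :=
    (((integrable_const (1:ℝ)).add hmom).const_mul c)
  refine h1.mono hm (ae_of_all _ fun x => ?_)
  exact (hb x).trans (le_abs_self _)

lemma integral_bound {μ : Measure ℝ} [IsProbabilityMeasure μ]
    (hmom : Integrable (fun x => x ^ 2) μ) (a : ℕ) (ha : a ≤ 2)
    {J₁ J₂ Dp Dq : Set ℝ} (m1 : MeasurableSet J₁) (m2 : MeasurableSet J₂)
    (mp : MeasurableSet Dp) (mq : MeasurableSet Dq)
    (hpt : ∀ x : ℝ, x ^ a * (J₂.indicator (fun _ => (1 : ℝ)) x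
        - J₁.indicator (fun _ => (1 : ℝ)) x)
      ≤ |x| ^ a * (Dp.indicator (fun _ => (1 : ℝ)) x + Dq.indicator (fun _ => (1 : ℝ)) x)) :
    ∫ x, x ^ a * (J₂.indicator (fun _ => (1 : ℝ)) x - J₁.indicator (fun _ => (1 : ℝ)) x) ∂μ
      ≤ (∫ x in Dp, |x| ^ a ∂μ) + ∫ x in Dq, |x| ^ a ∂μ := by
  have hind01 : ∀ (D : Set ℝ) (x : ℝ), D.indicator (fun _ => (1:ℝ)) x = 0 ∨
      D.indicator (fun _ => (1:ℝ)) x = 1 := by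
    intro D x
    by_cases h : x ∈ D
    · right; simp [h]
    · left; simp [h]
  have habs : ∀ x : ℝ, |x ^ a| ≤ 1 + x ^ 2 := by
    intro x
    rw [abs_pow]
    exact abs_pow_le' a ha x
  have int1 : Integrable (fun x => x ^ a * (J₂.indicator (fun _ => (1 : ℝ)) x
      - J₁.indicator (fun _ => (1 : ℝ)) x)) μ := by
    refine integrable_aux' hmom ?_ 1 ?_
    · exact ((measurable_id.pow_const a).mul
        ((measurable_const.indicator m2).sub (measurable_const.indicator m1))).aestronglyMeasurable
    · intro x
      rw [Real.norm_eq_abs, abs_mul, one_mul]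
      have hd : |J₂.indicator (fun _ => (1 : ℝ)) x - J₁.indicator (fun _ => (1 : ℝ)) x| ≤ 1 := by
        rcases hind01 J₂ x with h2 | h2 <;> rcases hind01 J₁ x with h1 | h1 <;>
          rw [h1, h2] <;> norm_num
      calc |x ^ a| * |J₂.indicator (fun _ => (1 : ℝ)) x - J₁.indicator (fun _ => (1 : ℝ)) x|
          ≤ |x ^ a| * 1 := mul_le_mul_of_nonneg_left hd (abs_nonneg _)
        _ = |x ^ a| := mul_one _
        _ ≤ 1 + x ^ 2 := habs x
  have intp : Integrable (fun x => |x| ^ a * Dp.indicator (fun _ => (1 : ℝ)) x) μ := by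
    refine integrable_aux' hmom ?_ 1 ?_
    · exact (((measurable_abs).pow_const a).mul
        (measurable_const.indicator mp)).aestronglyMeasurable
    · intro x
      rw [Real.norm_eq_abs, abs_mul, one_mul, abs_pow, abs_abs]
      have hd : |Dp.indicator (fun _ => (1 : ℝ)) x| ≤ 1 := by
        rcases hind01 Dp x with h | h <;> rw [h] <;> norm_num
      calc |x| ^ a * |Dp.indicator (fun _ => (1 : ℝ)) x|
          ≤ |x| ^ a * 1 := mul_le_mul_of_nonneg_left hd (pow_nonneg (abs_nonneg _) _)
        _ = |x| ^ a := mul_one _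
        _ ≤ 1 + x ^ 2 := by rw [← abs_pow]; exact habs x
  have intq : Integrable (fun x => |x| ^ a * Dq.indicator (fun _ => (1 : ℝ)) x) μ := by
    refine integrable_aux' hmom ?_ 1 ?_
    · exact (((measurable_abs).pow_const a).mul
        (measurable_const.indicator mq)).aestronglyMeasurable
    · intro x
      rw [Real.norm_eq_abs, abs_mul, one_mul, abs_pow, abs_abs]
      have hd : |Dq.indicator (fun _ => (1 : ℝ)) x| ≤ 1 := by
        rcases hind01 Dq x with h | h <;> rw [h] <;> norm_num
      calc |x| ^ a * |Dq.indicator (fun _ => (1 : ℝ)) x|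
          ≤ |x| ^ a * 1 := mul_le_mul_of_nonneg_left hd (pow_nonneg (abs_nonneg _) _)
        _ = |x| ^ a := mul_one _
        _ ≤ 1 + x ^ 2 := by rw [← abs_pow]; exact habs x
  have int2 : Integrable (fun x => |x| ^ a * (Dp.indicator (fun _ => (1 : ℝ)) x
      + Dq.indicator (fun _ => (1 : ℝ)) x)) μ := by
    have : (fun x => |x| ^ a * (Dp.indicator (fun _ => (1 : ℝ)) x
        + Dq.indicator (fun _ => (1 : ℝ)) x))
        = fun x => |x| ^ a * Dp.indicator (fun _ => (1 : ℝ)) x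
          + |x| ^ a * Dq.indicator (fun _ => (1 : ℝ)) x := by
      ext x; ring
    rw [this]
    exact intp.add intq
  have step1 := integral_mono int1 int2 hpt
  have hsplit : ∫ x, |x| ^ a * (Dp.indicator (fun _ => (1 : ℝ)) x
      + Dq.indicator (fun _ => (1 : ℝ)) x) ∂μ
      = (∫ x, |x| ^ a * Dp.indicator (fun _ => (1 : ℝ)) x ∂μ)
        + ∫ x, |x| ^ a * Dq.indicator (fun _ => (1 : ℝ)) x ∂μ := by
    rw [← integral_add intp intq]
    congr 1
    ext x
    ring
  have hDp : ∫ x, |x| ^ a * Dp.indicator (fun _ => (1 : ℝ)) x ∂μ = ∫ x in Dp, |x| ^ a ∂μ := by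
    rw [← integral_indicator mp]
    congr 1
    ext x
    by_cases h : x ∈ Dp <;> simp [h]
  have hDq : ∫ x, |x| ^ a * Dq.indicator (fun _ => (1 : ℝ)) x ∂μ = ∫ x in Dq, |x| ^ a ∂μ := by
    rw [← integral_indicator mq]
    congr 1
    ext x
    by_cases h : x ∈ Dq <;> simp [h]
  rw [hsplit, hDp, hDq] at step1
  exact step1


end BracketAux

end



/-- Bracketing lemma: for an atomless probability measure `μ` on `ℝ` with finite second
moment, `a ∈ {0, 1, 2}` and `ε > 0`, there is a finite family of intervals bracketing, in
`L¹(μ)`-distance `ε`, all the functions `x ↦ x^a 1_I(x)` for `I` an arbitrary interval. -/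
theorem bracketing_intervals
    (μ : Measure ℝ) [IsProbabilityMeasure μ] [NullSingletonClass μ]
    (hmom : Integrable (fun x => x ^ 2) μ)
    (a : ℕ) (ha : a ≤ 2) (ε : ℝ) (hε : 0 < ε) :
    ∃ 𝒥 : Finset (Set ℝ), (∀ J ∈ 𝒥, J.OrdConnected) ∧
      ∀ I : Set ℝ, I.OrdConnected →
        ∃ J₁ ∈ 𝒥, ∃ J₂ ∈ 𝒥,
          (∀ x : ℝ, x ^ a * J₁.indicator (fun _ => (1 : ℝ)) x
              ≤ x ^ a * I.indicator (fun _ => (1 : ℝ)) x ∧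
            x ^ a * I.indicator (fun _ => (1 : ℝ)) x
              ≤ x ^ a * J₂.indicator (fun _ => (1 : ℝ)) x) ∧
          ∫ x, x ^ a * (J₂.indicator (fun _ => (1 : ℝ)) x
              - J₁.indicator (fun _ => (1 : ℝ)) x) ∂μ ≤ ε := by
  classical
  obtain ⟨T, hbotT, htopT, hzeroT, hcellT⟩ := BracketAux.grid μ hmom a ha (ε/2) (by linarith)
  set 𝒥 : Finset (Set ℝ) := (T ×ˢ T ×ˢ (Finset.univ : Finset (Bool × Bool))).image
    (fun pr => BracketAux.eI pr.1 pr.2.1 pr.2.2.1 pr.2.2.2) with h𝒥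
  have hmem𝒥 : ∀ A ∈ T, ∀ B ∈ T, ∀ s₁ s₂ : Bool, BracketAux.eI A B s₁ s₂ ∈ 𝒥 := by
    intro A hA B hB s₁ s₂
    refine Finset.mem_image.2 ⟨(A, B, s₁, s₂), ?_, rfl⟩
    simp [Finset.mem_product, hA, hB]
  refine ⟨𝒥, ?_, ?_⟩
  · intro J hJ
    obtain ⟨pr, _, rfl⟩ := Finset.mem_image.1 hJ
    exact BracketAux.eI_ordConnected _ _ _ _
  intro I hI
  -- endpoints of I in EReal
  set p : EReal := sInf (Real.toEReal '' I) with hp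
  set q : EReal := sSup (Real.toEReal '' I) with hq
  have hI1 : ∀ x ∈ I, p ≤ (x : EReal) ∧ (x : EReal) ≤ q := fun x hx =>
    ⟨sInf_le ⟨x, hx, rfl⟩, le_sSup ⟨x, hx, rfl⟩⟩
  have hI2 : ∀ x : ℝ, p < (x : EReal) → (x : EReal) < q → x ∈ I := by
    intro x h1 h2
    obtain ⟨y', hy', hylt⟩ : ∃ y' ∈ Real.toEReal '' I, y' < (x : EReal) := by
      by_contra hcon
      push_neg at hcon
      exact absurd (le_sInf hcon) (not_le.2 h1)
    obtain ⟨y, hy, rfl⟩ := hy'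
    obtain ⟨z', hz', hltz⟩ : ∃ z' ∈ Real.toEReal '' I, (x : EReal) < z' := by
      by_contra hcon
      push_neg at hcon
      exact absurd (sSup_le hcon) (not_le.2 h2)
    obtain ⟨z, hz, rfl⟩ := hz'
    exact hI.out hy hz ⟨(EReal.coe_lt_coe_iff.1 hylt).le, (EReal.coe_lt_coe_iff.1 hltz).le⟩
  -- up / down rounding to the grid
  have hbotF : ∀ r : EReal, (T.filter (· ≤ r)).Nonempty := fun r =>
    ⟨⊥, Finset.mem_filter.2 ⟨hbotT, bot_le⟩⟩
  have htopF : ∀ r : EReal, (T.filter (r ≤ ·)).Nonempty := fun r =>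
    ⟨⊤, Finset.mem_filter.2 ⟨htopT, le_top⟩⟩
  have hexd : ∀ r : EReal, ∃ d, d ∈ T ∧ d ≤ r ∧ ∀ u ∈ T, u ≤ r → u ≤ d := by
    intro r
    refine ⟨(T.filter (· ≤ r)).max' (hbotF r),
      (Finset.mem_filter.1 ((T.filter (· ≤ r)).max'_mem (hbotF r))).1,
      (Finset.mem_filter.1 ((T.filter (· ≤ r)).max'_mem (hbotF r))).2,
      fun u hu h => Finset.le_max' (T.filter (· ≤ r)) u (Finset.mem_filter.2 ⟨hu, h⟩)⟩
  have hexu : ∀ r : EReal, ∃ d, d ∈ T ∧ r ≤ d ∧ ∀ u ∈ T, r ≤ u → d ≤ u := by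
    intro r
    refine ⟨(T.filter (r ≤ ·)).min' (htopF r),
      (Finset.mem_filter.1 ((T.filter (r ≤ ·)).min'_mem (htopF r))).1,
      (Finset.mem_filter.1 ((T.filter (r ≤ ·)).min'_mem (htopF r))).2,
      fun u hu h => Finset.min'_le (T.filter (r ≤ ·)) u (Finset.mem_filter.2 ⟨hu, h⟩)⟩
  choose down hdown_mem hdown_le hdown_max using hexd
  choose up hup_mem hle_up hup_min using hexu
  have hadjT : ∀ r : EReal, ∀ u ∈ T, u ≤ down r ∨ up r ≤ u := by
    intro r u hu
    rcases le_total u r with h | h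
    · exact Or.inl (hdown_max r u hu h)
    · exact Or.inr (hup_min r u hu h)
  have hDset : ∀ A B : EReal, BracketAux.eI A B false false
      = {y : ℝ | A ≤ (y : EReal) ∧ (y : EReal) ≤ B} := by
    intro A B
    ext x
    simp [BracketAux.eI]
  have hD : ∀ r : EReal,
      ∫ x in BracketAux.eI (down r) (up r) false false, |x| ^ a ∂μ ≤ ε/2 := by
    intro r
    rw [hDset]
    exact hcellT _ (hdown_mem r) _ (hup_mem r) (hadjT r)
  have hmeasD : ∀ (A B : EReal) (s₁ s₂ : Bool), MeasurableSet (BracketAux.eI A B s₁ s₂) :=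
    fun A B s₁ s₂ => (BracketAux.eI_ordConnected A B s₁ s₂).measurableSet
  by_cases ha1 : a = 1
  · -- odd case a = 1
    subst ha1
    by_cases hq0 : q ≤ ((0:ℝ) : EReal)
    · -- Case A : I ⊆ (-∞, 0]
      refine ⟨BracketAux.eI (down p) (min (up q) ((0:ℝ):EReal)) false false, ?_,
        BracketAux.eI (up p) (down q) true true, hmem𝒥 _ (hup_mem p) _ (hdown_mem q) _ _, ?_, ?_⟩
      · rcases le_total (up q) ((0:ℝ):EReal) with h | h
        · rw [min_eq_left h]; exact hmem𝒥 _ (hdown_mem p) _ (hup_mem q) _ _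
        · rw [min_eq_right h]; exact hmem𝒥 _ (hdown_mem p) _ hzeroT _ _
      · -- pointwise inequalities
        have hIle0 : ∀ x ∈ I, x ≤ 0 := fun x hx =>
          EReal.coe_le_coe_iff.1 ((hI1 x hx).2.trans hq0)
        have hsub2 : BracketAux.eI (up p) (down q) true true ⊆ I := by
          intro x hx
          simp only [BracketAux.eI, mem_setOf_eq, if_true] at hx
          exact hI2 x (lt_of_le_of_lt (hle_up p) hx.1) (lt_of_lt_of_le hx.2 (hdown_le q))
        have hsub1 : I ⊆ BracketAux.eI (down p) (min (up q) ((0:ℝ):EReal)) false false := by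
          intro x hx
          simp only [BracketAux.eI, mem_setOf_eq, if_false, Bool.false_eq_true]
          exact ⟨(hdown_le p).trans (hI1 x hx).1,
            le_min ((hI1 x hx).2.trans (hle_up q)) (EReal.coe_le_coe_iff.2 (hIle0 x hx))⟩
        have hJ1le0 : ∀ x ∈ BracketAux.eI (down p) (min (up q) ((0:ℝ):EReal)) false false,
            x ≤ 0 := by
          intro x hx
          simp only [BracketAux.eI, mem_setOf_eq, if_false, Bool.false_eq_true] at hx
          exact EReal.coe_le_coe_iff.1 (hx.2.trans (min_le_right _ _))
        intro x
        constructor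
        · refine BracketAux.ind_mul_le_ind_mul 1 ?_ ?_ x
          · intro y hy _
            rw [pow_one]
            exact hJ1le0 y hy
          · intro y hy hy'
            exact absurd (hsub1 hy) hy'
        · refine BracketAux.ind_mul_le_ind_mul 1 ?_ ?_ x
          · intro y hy hy'
            rw [pow_one]
            exact hIle0 y hy
          · intro y hy hy'
            exact absurd (hsub2 hy) hy'
      · -- integral bound
        have hptb := BracketAux.pt_bound 1
          (J₁ := BracketAux.eI (down p) (min (up q) ((0:ℝ):EReal)) false false)
          (J₂ := BracketAux.eI (up p) (down q) true true)
          (Dp := BracketAux.eI (down p) (up p) false false)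
          (Dq := BracketAux.eI (down q) (up q) false false) ?_ ?_
        · have := BracketAux.integral_bound hmom 1 (by omega)
            (hmeasD _ _ _ _) (hmeasD _ _ _ _) (hmeasD _ _ _ _) (hmeasD _ _ _ _) hptb
          have h1 := hD p
          have h2 := hD q
          linarith
        · -- J₂ \ J₁ :  J₂ ⊆ J₁
          intro x hx2 hx1
          exfalso
          apply hx1
          simp only [BracketAux.eI, mem_setOf_eq, if_true] at hx2
          simp only [BracketAux.eI, mem_setOf_eq, if_false, Bool.false_eq_true]
          have hxI : x ∈ I := hI2 x (lt_of_le_of_lt (hle_up p) hx2.1)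
            (lt_of_lt_of_le hx2.2 (hdown_le q))
          refine ⟨(hdown_le p).trans (hI1 x hxI).1,
            le_min ((hI1 x hxI).2.trans (hle_up q)) ?_⟩
          exact EReal.coe_le_coe_iff.2 (EReal.coe_le_coe_iff.1 ((hI1 x hxI).2.trans hq0))
        · -- J₁ \ J₂
          intro x hx1 hx2
          simp only [BracketAux.eI, mem_setOf_eq, if_true] at hx2
          simp only [BracketAux.eI, mem_setOf_eq, if_false, Bool.false_eq_true] at hx1 ⊢
          push_neg at hx2
          rcases le_or_gt ((x:EReal)) (up p) with h | h
          · exact Or.inl ⟨hx1.1, h⟩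
          · exact Or.inr ⟨hx2 h, hx1.2.trans (min_le_left _ _)⟩
    · by_cases hp0 : ((0:ℝ) : EReal) ≤ p
      · -- Case B : I ⊆ [0, ∞)
        refine ⟨BracketAux.eI (up p) (down q) true true, hmem𝒥 _ (hup_mem p) _ (hdown_mem q) _ _,
          BracketAux.eI (max (down p) ((0:ℝ):EReal)) (up q) false false, ?_, ?_, ?_⟩
        · rcases le_total (down p) ((0:ℝ):EReal) with h | h
          · rw [max_eq_right h]; exact hmem𝒥 _ hzeroT _ (hup_mem q) _ _
          · rw [max_eq_left h]; exact hmem𝒥 _ (hdown_mem p) _ (hup_mem q) _ _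
        · have hIge0 : ∀ x ∈ I, 0 ≤ x := fun x hx =>
            EReal.coe_le_coe_iff.1 (hp0.trans (hI1 x hx).1)
          have hsub1 : BracketAux.eI (up p) (down q) true true ⊆ I := by
            intro x hx
            simp only [BracketAux.eI, mem_setOf_eq, if_true] at hx
            exact hI2 x (lt_of_le_of_lt (hle_up p) hx.1) (lt_of_lt_of_le hx.2 (hdown_le q))
          have hsub2 : I ⊆ BracketAux.eI (max (down p) ((0:ℝ):EReal)) (up q) false false := by
            intro x hx
            simp only [BracketAux.eI, mem_setOf_eq, if_false, Bool.false_eq_true]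
            exact ⟨max_le ((hdown_le p).trans (hI1 x hx).1)
              (EReal.coe_le_coe_iff.2 (hIge0 x hx)), (hI1 x hx).2.trans (hle_up q)⟩
          have hJ2ge0 : ∀ x ∈ BracketAux.eI (max (down p) ((0:ℝ):EReal)) (up q) false false,
              0 ≤ x := by
            intro x hx
            simp only [BracketAux.eI, mem_setOf_eq, if_false, Bool.false_eq_true] at hx
            exact EReal.coe_le_coe_iff.1 ((le_max_right _ _).trans hx.1)
          intro x
          constructor
          · refine BracketAux.ind_mul_le_ind_mul 1 ?_ ?_ x
            · intro y hy hy'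
              exact absurd (hsub1 hy) hy'
            · intro y hy _
              rw [pow_one]
              exact hIge0 y hy
          · refine BracketAux.ind_mul_le_ind_mul 1 ?_ ?_ x
            · intro y hy hy'
              exact absurd (hsub2 hy) hy'
            · intro y hy _
              rw [pow_one]
              exact hJ2ge0 y hy
        · have hptb := BracketAux.pt_bound 1
            (J₁ := BracketAux.eI (up p) (down q) true true)
            (J₂ := BracketAux.eI (max (down p) ((0:ℝ):EReal)) (up q) false false)
            (Dp := BracketAux.eI (down p) (up p) false false)
            (Dq := BracketAux.eI (down q) (up q) false false) ?_ ?_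
          · have := BracketAux.integral_bound hmom 1 (by omega)
              (hmeasD _ _ _ _) (hmeasD _ _ _ _) (hmeasD _ _ _ _) (hmeasD _ _ _ _) hptb
            have h1 := hD p
            have h2 := hD q
            linarith
          · intro x hx2 hx1
            simp only [BracketAux.eI, mem_setOf_eq, if_true] at hx1
            simp only [BracketAux.eI, mem_setOf_eq, if_false, Bool.false_eq_true] at hx2 ⊢
            push_neg at hx1
            rcases le_or_gt ((x:EReal)) (up p) with h | h
            · exact Or.inl ⟨(le_max_left _ _).trans hx2.1, h⟩
            · exact Or.inr ⟨hx1 h, hx2.2⟩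
          · -- J₁ ⊆ J₂
            intro x hx1 hx2
            exfalso
            apply hx2
            simp only [BracketAux.eI, mem_setOf_eq, if_true] at hx1
            simp only [BracketAux.eI, mem_setOf_eq, if_false, Bool.false_eq_true]
            refine ⟨max_le ((hdown_le p).trans ((hle_up p).trans hx1.1.le))
              (hp0.trans ((hle_up p).trans hx1.1.le)), (hx1.2.le).trans ((hdown_le q).trans (hle_up q))⟩
      · -- Case C : p < 0 < q
        have h0q : ((0:ℝ):EReal) < q := not_le.1 hq0
        have hp0' : p < ((0:ℝ):EReal) := not_le.1 hp0
        have hdq0 : ((0:ℝ):EReal) ≤ down q := hdown_max q _ hzeroT h0q.le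
        have hup0 : up p ≤ ((0:ℝ):EReal) := hup_min p _ hzeroT hp0'.le
        refine ⟨BracketAux.eI (down p) (down q) false true,
          hmem𝒥 _ (hdown_mem p) _ (hdown_mem q) _ _,
          BracketAux.eI (up p) (up q) true false,
          hmem𝒥 _ (hup_mem p) _ (hup_mem q) _ _, ?_, ?_⟩
        · intro x
          constructor
          · refine BracketAux.ind_mul_le_ind_mul 1 ?_ ?_ x
            · intro y hy hy'
              rw [pow_one]
              by_contra hpos
              push_neg at hpos
              simp only [BracketAux.eI, mem_setOf_eq, if_true, if_false,
                Bool.false_eq_true] at hy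
              exact hy' (hI2 y (hp0'.trans (EReal.coe_lt_coe_iff.2 hpos))
                (lt_of_lt_of_le hy.2 (hdown_le q)))
            · intro y hy hy'
              rw [pow_one]
              by_contra hneg
              push_neg at hneg
              apply hy'
              simp only [BracketAux.eI, mem_setOf_eq, if_true, if_false, Bool.false_eq_true]
              exact ⟨(hdown_le p).trans (hI1 y hy).1,
                lt_of_lt_of_le (EReal.coe_lt_coe_iff.2 hneg) hdq0⟩
          · refine BracketAux.ind_mul_le_ind_mul 1 ?_ ?_ x
            · intro y hy hy'
              rw [pow_one]
              by_contra hpos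
              push_neg at hpos
              apply hy'
              simp only [BracketAux.eI, mem_setOf_eq, if_true, if_false, Bool.false_eq_true]
              exact ⟨lt_of_le_of_lt hup0 (EReal.coe_lt_coe_iff.2 hpos),
                (hI1 y hy).2.trans (hle_up q)⟩
            · intro y hy hy'
              rw [pow_one]
              by_contra hneg
              push_neg at hneg
              simp only [BracketAux.eI, mem_setOf_eq, if_true, if_false,
                Bool.false_eq_true] at hy
              exact hy' (hI2 y (lt_of_le_of_lt (hle_up p) hy.1)
                (lt_of_lt_of_le (EReal.coe_lt_coe_iff.2 hneg) h0q.le))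
        · have hptb := BracketAux.pt_bound 1
            (J₁ := BracketAux.eI (down p) (down q) false true)
            (J₂ := BracketAux.eI (up p) (up q) true false)
            (Dp := BracketAux.eI (down p) (up p) false false)
            (Dq := BracketAux.eI (down q) (up q) false false) ?_ ?_
          · have := BracketAux.integral_bound hmom 1 (by omega)
              (hmeasD _ _ _ _) (hmeasD _ _ _ _) (hmeasD _ _ _ _) (hmeasD _ _ _ _) hptb
            have h1 := hD p
            have h2 := hD q
            linarith
          · intro x hx2 hx1
            simp only [BracketAux.eI, mem_setOf_eq, if_true, if_false,
              Bool.false_eq_true] at hx1 hx2 ⊢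
            push_neg at hx1
            rcases le_or_gt (down p) ((x:EReal)) with h | h
            · exact Or.inr ⟨hx1 h, hx2.2⟩
            · exact absurd ((hdown_le p).trans ((hle_up p).trans hx2.1.le)) (not_le.2 h)
          · intro x hx1 hx2
            simp only [BracketAux.eI, mem_setOf_eq, if_true, if_false,
              Bool.false_eq_true] at hx1 hx2 ⊢
            push_neg at hx2
            rcases le_or_gt ((x:EReal)) (up p) with h | h
            · exact Or.inl ⟨hx1.1, h⟩
            · exact absurd (hx1.2.le.trans ((hdown_le q).trans (hle_up q))) (not_le.2 (hx2 h))
  · -- even case : a = 0 or a = 2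
    have hpow : ∀ x : ℝ, 0 ≤ x ^ a := by
      rcases (by omega : a = 0 ∨ a = 2) with rfl | rfl
      · intro x; simp
      · intro x; positivity
    refine ⟨BracketAux.eI (up p) (down q) true true, hmem𝒥 _ (hup_mem p) _ (hdown_mem q) _ _,
      BracketAux.eI (down p) (up q) false false, hmem𝒥 _ (hdown_mem p) _ (hup_mem q) _ _,
      ?_, ?_⟩
    · have hsub1 : BracketAux.eI (up p) (down q) true true ⊆ I := by
        intro x hx
        simp only [BracketAux.eI, mem_setOf_eq, if_true] at hx
        exact hI2 x (lt_of_le_of_lt (hle_up p) hx.1) (lt_of_lt_of_le hx.2 (hdown_le q))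
      have hsub2 : I ⊆ BracketAux.eI (down p) (up q) false false := by
        intro x hx
        simp only [BracketAux.eI, mem_setOf_eq, if_false, Bool.false_eq_true]
        exact ⟨(hdown_le p).trans (hI1 x hx).1, (hI1 x hx).2.trans (hle_up q)⟩
      intro x
      constructor
      · refine BracketAux.ind_mul_le_ind_mul a ?_ ?_ x
        · intro y hy hy'
          exact absurd (hsub1 hy) hy'
        · intro y _ _
          exact hpow y
      · refine BracketAux.ind_mul_le_ind_mul a ?_ ?_ x
        · intro y hy hy'
          exact absurd (hsub2 hy) hy'
        · intro y _ _
          exact hpow y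
    · have hptb := BracketAux.pt_bound a
        (J₁ := BracketAux.eI (up p) (down q) true true)
        (J₂ := BracketAux.eI (down p) (up q) false false)
        (Dp := BracketAux.eI (down p) (up p) false false)
        (Dq := BracketAux.eI (down q) (up q) false false) ?_ ?_
      · have := BracketAux.integral_bound hmom a ha
          (hmeasD _ _ _ _) (hmeasD _ _ _ _) (hmeasD _ _ _ _) (hmeasD _ _ _ _) hptb
        have h1 := hD p
        have h2 := hD q
        linarith
      · intro x hx2 hx1
        simp only [BracketAux.eI, mem_setOf_eq, if_true, if_false,
          Bool.false_eq_true] at hx1 hx2 ⊢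
        push_neg at hx1
        rcases le_or_gt ((x:EReal)) (up p) with h | h
        · exact Or.inl ⟨hx2.1, h⟩
        · exact Or.inr ⟨hx1 h, hx2.2⟩
      · -- J₁ ⊆ J₂
        intro x hx1 hx2
        exfalso
        apply hx2
        simp only [BracketAux.eI, mem_setOf_eq, if_true] at hx1
        simp only [BracketAux.eI, mem_setOf_eq, if_false, Bool.false_eq_true]
        exact ⟨(hdown_le p).trans ((hle_up p).trans hx1.1.le),
          (hx1.2.le).trans ((hdown_le q).trans (hle_up q))⟩
end

section
/- Let (Ω, 𝓕, P) be a probability space, T : Ω → Ω an ergodic measure-preserving map, and f : Ω → ℝ measurable with law μ. For i ≥ 1 set Y_i = f ∘ T^{i−1}. Let 𝒢 be a family of Borel functions g : ℝ → ℝ, each μ-integrable, such that for every ε > 0 there exists a finite set B_ε of pairs (l, u) of μ-integrable Borel functions with ∫ (u − l) dμ ≤ ε for each pair, and such that every g ∈ 𝒢 satisfies l(x) ≤ g(x) ≤ u(x) for all x ∈ ℝ for some pair (l, u) ∈ B_ε. Then for P-almost every ω, sup_{g ∈ 𝒢} | (1/n) Σ_{i=1}^n g(Y_i(ω)) − ∫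 g dμ | → 0 as n → ∞. -/
open MeasureTheory ProbabilityTheory Filter
open scoped NNReal ENNReal

open scoped Topology

section Aux

variable {Ω : Type*} [MeasurableSpace Ω]

/-- max of the first Birkhoff sums `S_1, ..., S_{N+1}`. -/
noncomputable def birkMax (T : Ω → Ω) (g : Ω → ℝ) : ℕ → Ω → ℝ
  | 0 => g
  | (N+1) => fun ω => max (birkMax T g N ω) (birkhoffSum T g (N+2) ω)

lemma birkMax_exists (T : Ω → Ω) (g : Ω → ℝ) (N : ℕ) (ω : Ω) :
    ∃ k, 1 ≤ k ∧ k ≤ N + 1 ∧ birkMax T g N ω = birkhoffSum T g k ω := by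
  induction N with
  | zero => exact ⟨1, le_refl _, le_refl _, (birkhoffSum_one T g ω).symm⟩
  | succ N ih =>
    obtain ⟨k, hk1, hk2, hk3⟩ := ih
    rcases le_total (birkMax T g N ω) (birkhoffSum T g (N+2) ω) with h | h
    · exact ⟨N+2, by omega, by omega, max_eq_right h⟩
    · exact ⟨k, hk1, by omega, (max_eq_left h).trans hk3⟩

lemma birkhoffSum_le_birkMax (T : Ω → Ω) (g : Ω → ℝ) (N : ℕ) (ω : Ω) :
    ∀ k, 1 ≤ k → k ≤ N + 1 → birkhoffSum T g k ω ≤ birkMax T g N ω := by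
  induction N with
  | zero =>
    intro k h1 h2
    have : k = 1 := by omega
    subst this
    rw [birkhoffSum_one]
    exact le_refl _
  | succ N ih =>
    intro k h1 h2
    rcases Nat.lt_or_ge k (N+2) with h | h
    · exact le_trans (ih k h1 (by omega)) (le_max_left _ _)
    · have : k = N + 2 := by omega
      subst this
      exact le_max_right _ _

lemma birkMax_measurable {T : Ω → Ω} {g : Ω → ℝ} (hT : Measurable T) (hg : Measurable g)
    (N : ℕ) : Measurable (birkMax T g N) := by
  induction N with
  | zero => exact hg
  | succ N ih =>
    exact ih.max (Finset.measurable_sum _ fun i _ => hg.comp (hT.iterate i))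

lemma birkMax_integrable {P : Measure Ω} {T : Ω → Ω} {g : Ω → ℝ}
    (hT : MeasurePreserving T P P) (hg : Measurable g) (hgi : Integrable g P)
    (N : ℕ) : Integrable (birkMax T g N) P := by
  have hS : ∀ n : ℕ, Integrable (birkhoffSum T g n) P := by
    intro n
    apply integrable_finset_sum
    intro i _
    exact ((hT.iterate i).integrable_comp hgi.aestronglyMeasurable).mpr hgi
  induction N with
  | zero => exact hgi
  | succ N ih => exact ih.sup (hS (N+2))

lemma birkMax_le (T : Ω → Ω) (g : Ω → ℝ) (N : ℕ) (ω : Ω) :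
    birkMax T g N ω ≤ g ω + max (birkMax T g N (T ω)) 0 := by
  obtain ⟨k, hk1, hk2, hk3⟩ := birkMax_exists T g N ω
  rw [hk3]
  obtain ⟨m, rfl⟩ : ∃ m, k = m + 1 := ⟨k - 1, by omega⟩
  rw [birkhoffSum_succ']
  rcases Nat.eq_zero_or_pos m with rfl | hm
  · rw [birkhoffSum_zero]
    exact add_le_add_right (le_max_right _ _) _
  · exact add_le_add_right
      (le_trans (birkhoffSum_le_birkMax T g N (T ω) m hm (by omega)) (le_max_left _ _)) _

lemma birkMax_mono (T : Ω → Ω) (g : Ω → ℝ) (ω : Ω) :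
    Monotone fun N => birkMax T g N ω := by
  apply monotone_nat_of_le_succ
  intro N
  exact le_max_left _ _



variable {Ω : Type*} [MeasurableSpace Ω]

/-- Garsia's maximal ergodic lemma. -/
lemma maximal_ergodic {P : Measure Ω} [IsProbabilityMeasure P] {T : Ω → Ω} {g : Ω → ℝ}
    (hT : MeasurePreserving T P P) (hg : Measurable g) (hgi : Integrable g P) (N : ℕ) :
    0 ≤ ∫ ω in {ω | 0 < birkMax T g N ω}, g ω ∂P := by
  set M := birkMax T g N with hM
  set E := {ω | 0 < M ω} with hE
  have hMm : Measurable M := birkMax_measurable hT.measurable hg N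
  have hEm : MeasurableSet E := measurableSet_lt measurable_const hMm
  have hMi : Integrable M P := birkMax_integrable hT hg hgi N
  have hMTi : Integrable (fun ω => max (M (T ω)) 0) P := by
    have : Integrable (fun ω => max (M ω) 0) P := hMi.sup (integrable_const 0)
    exact (hT.integrable_comp this.aestronglyMeasurable).mpr this
  -- pointwise inequality
  have key : ∀ ω, M ω - max (M (T ω)) 0 ≤ g ω := fun ω => by
    have := birkMax_le T g N ω
    linarith
  have step1 : ∫ ω in E, (M ω - max (M (T ω)) 0) ∂P ≤ ∫ ω in E, g ω ∂P := by
    apply setIntegral_mono (hMi.sub hMTi).integrableOn hgi.integrableOn key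
  have step2 : ∫ ω in E, (M ω - max (M (T ω)) 0) ∂P
      = ∫ ω in E, M ω ∂P - ∫ ω in E, max (M (T ω)) 0 ∂P :=
    integral_sub hMi.integrableOn hMTi.integrableOn
  have step3 : ∫ ω in E, M ω ∂P = ∫ ω, max (M ω) 0 ∂P := by
    have h1 : ∫ ω in E, M ω ∂P = ∫ ω in E, max (M ω) 0 ∂P := by
      apply setIntegral_congr_fun hEm
      intro ω hω
      exact (max_eq_left (le_of_lt hω)).symm
    have h2 : ∫ ω in Eᶜ, max (M ω) 0 ∂P = 0 := by
      rw [setIntegral_congr_fun hEm.compl (g := fun _ => (0:ℝ))]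
      · simp
      · intro ω hω
        simp only [Set.mem_compl_iff, hE, Set.mem_setOf_eq, not_lt] at hω
        exact max_eq_right hω
    have h3 := integral_add_compl hEm (hMi.sup (integrable_const 0))
    simp only [Pi.sup_apply, Pi.zero_apply] at h3 ⊢
    rw [h1, ← h3, h2, add_zero]
  have step4 : ∫ ω in E, max (M (T ω)) 0 ∂P ≤ ∫ ω, max (M (T ω)) 0 ∂P :=
    setIntegral_le_integral hMTi (Filter.Eventually.of_forall fun ω => le_max_right _ _)
  have step5 : ∫ ω, max (M (T ω)) 0 ∂P = ∫ ω, max (M ω) 0 ∂P := by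
    have : ∫ ω, max (M ω) 0 ∂(P.map T) = ∫ ω, max (M ω) 0 ∂P := by rw [hT.map_eq]
    rw [← this, integral_map hT.measurable.aemeasurable
      (hMm.max measurable_const).aestronglyMeasurable]
  have : (0:ℝ) ≤ ∫ ω in E, (M ω - max (M (T ω)) 0) ∂P := by
    rw [step2, step3]
    linarith [step4.trans_eq step5]
  linarith

variable {Ω : Type*} [MeasurableSpace Ω]

/-- The set where Birkhoff sums frequently exceed `n * q`. -/
def freqSet (T : Ω → Ω) (g : Ω → ℝ) (q : ℝ) : Set Ω :=
  {ω | ∀ m : ℕ, ∃ n, m ≤ n ∧ (n : ℝ) * q < birkhoffSum T g n ω}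

lemma freqSet_measurable {T : Ω → Ω} {g : Ω → ℝ} (hT : Measurable T) (hg : Measurable g)
    (q : ℝ) : MeasurableSet (freqSet T g q) := by
  have hS : ∀ n : ℕ, Measurable (birkhoffSum T g n) := fun n =>
    Finset.measurable_sum _ fun i _ => hg.comp (hT.iterate i)
  have : freqSet T g q = ⋂ m : ℕ, ⋃ n : ℕ, ⋃ _ : m ≤ n,
      {ω | (n : ℝ) * q < birkhoffSum T g n ω} := by
    ext ω
    simp [freqSet]
  rw [this]
  exact MeasurableSet.iInter fun m => MeasurableSet.iUnion fun n =>
    MeasurableSet.iUnion fun _ => measurableSet_lt measurable_const (hS n)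

lemma exists_linear_ge {b a c : ℝ} (hab : a < b) : ∃ m0 : ℕ, ∀ n : ℕ, m0 ≤ n →
    c ≤ (n : ℝ) * (b - a) := by
  obtain ⟨m0, hm0⟩ := exists_nat_ge (c / (b - a))
  refine ⟨m0, fun n hn => ?_⟩
  have hba : (0:ℝ) < b - a := by linarith
  have : c / (b - a) ≤ (n : ℝ) := hm0.trans (by exact_mod_cast hn)
  calc c = c / (b - a) * (b - a) := by field_simp
  _ ≤ (n : ℝ) * (b - a) := by nlinarith

lemma freqSet_step1 {T : Ω → Ω} {g : Ω → ℝ} {a b : ℝ} (hab : a < b) {ω : Ω}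
    (h : ω ∈ freqSet T g b) : T ω ∈ freqSet T g a := by
  intro m
  obtain ⟨m0, hm0⟩ := exists_linear_ge (c := g ω - a) hab
  obtain ⟨n, hn1, hn2⟩ := h (max (m + 1) m0)
  obtain ⟨k, rfl⟩ : ∃ k, n = k + 1 := ⟨n - 1, by omega⟩
  rw [birkhoffSum_succ'] at hn2
  refine ⟨k, by omega, ?_⟩
  have h1 : g ω - a ≤ ((k:ℝ) + 1) * (b - a) := by
    have := hm0 (k+1) (by omega)
    push_cast at this ⊢
    linarith
  push_cast at hn2 ⊢
  nlinarith

lemma freqSet_step2 {T : Ω → Ω} {g : Ω → ℝ} {a b : ℝ} (hab : a < b) {ω : Ω}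
    (h : T ω ∈ freqSet T g b) : ω ∈ freqSet T g a := by
  intro m
  obtain ⟨m0, hm0⟩ := exists_linear_ge (c := a - g ω) hab
  obtain ⟨n, hn1, hn2⟩ := h (max m m0)
  refine ⟨n + 1, by omega, ?_⟩
  rw [birkhoffSum_succ']
  have h1 : a - g ω ≤ (n:ℝ) * (b - a) := hm0 n (by omega)
  push_cast
  nlinarith

lemma ae_eventually_birkhoffSum_le {P : Measure Ω} [IsProbabilityMeasure P] {T : Ω → Ω}
    {g : Ω → ℝ} (hT : Ergodic T P) (hg : Measurable g) (hgi : Integrable g P)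
    (hzero : ∫ ω, g ω ∂P = 0) {ε : ℝ} (hε : 0 < ε) :
    ∀ᵐ ω ∂P, ∀ᶠ n : ℕ in atTop, birkhoffSum T g n ω ≤ n * ε := by
  set D := ⋂ (q : ℚ) (_ : (q : ℝ) < ε), freqSet T g q with hD
  have hDm : MeasurableSet D := MeasurableSet.iInter fun q => MeasurableSet.iInter fun _ =>
    freqSet_measurable hT.measurable hg q
  have hinv : T ⁻¹' D = D := by
    ext ω
    simp only [hD, Set.mem_iInter, Set.mem_preimage]
    constructor
    · intro h q hq
      obtain ⟨q', hq'1, hq'2⟩ := exists_rat_btwn hq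
      exact freqSet_step2 (by exact_mod_cast hq'1) (h q' hq'2)
    · intro h q hq
      obtain ⟨q', hq'1, hq'2⟩ := exists_rat_btwn hq
      exact freqSet_step1 (by exact_mod_cast hq'1) (h q' hq'2)
  rcases hT.toPreErgodic.ae_empty_or_univ hDm hinv with hcase | hcase
  · -- D is null: a.e. ω is not in D
    have hnm : ∀ᵐ ω ∂P, ω ∉ D :=
      (measure_eq_zero_iff_ae_notMem (s := D)).mp (ae_eq_empty.mp hcase)
    filter_upwards [hnm] with ω hω
    simp only [hD, Set.mem_iInter, not_forall] at hω
    obtain ⟨q, hq, hωq⟩ := hω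
    simp only [freqSet, Set.mem_setOf_eq, not_forall, not_exists, not_and, not_lt] at hωq
    obtain ⟨m, hm⟩ := hωq
    rw [eventually_atTop]
    refine ⟨m, fun n hn => ?_⟩
    refine (hm n hn).trans ?_
    exact mul_le_mul_of_nonneg_left (le_of_lt hq) (Nat.cast_nonneg n)
  · -- D has full measure: contradiction
    exfalso
    obtain ⟨q0, hq0a, hq0b⟩ := exists_rat_btwn hε
    have hq0pos : (0:ℝ) < (q0:ℝ) := hq0a
    set g' := fun ω => g ω - (q0:ℝ) with hg'
    have hg'm : Measurable g' := hg.sub measurable_const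
    have hg'i : Integrable g' P := hgi.sub (integrable_const _)
    have hS' : ∀ (n : ℕ) (ω : Ω), birkhoffSum T g' n ω = birkhoffSum T g n ω - n * q0 := by
      intro n ω
      simp [birkhoffSum, hg', Finset.sum_sub_distrib, mul_comm]
    set EN := fun N : ℕ => {ω | 0 < birkMax T g' N ω} with hEN
    have hENm : ∀ N, MeasurableSet (EN N) := fun N =>
      measurableSet_lt measurable_const (birkMax_measurable hT.measurable hg'm N)
    have hmono : Monotone EN := by
      intro a b hab ω hω
      exact lt_of_lt_of_le hω (birkMax_mono T g' ω hab)
    have hFE : freqSet T g q0 ⊆ ⋃ N, EN N := by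
      intro ω hω
      obtain ⟨n, hn1, hn2⟩ := hω 1
      obtain ⟨k, rfl⟩ : ∃ k, n = k + 1 := ⟨n - 1, by omega⟩
      have hpos : 0 < birkhoffSum T g' (k+1) ω := by
        rw [hS']
        linarith
      have := birkhoffSum_le_birkMax T g' k ω (k+1) (by omega) (le_refl _)
      exact Set.mem_iUnion.mpr ⟨k, lt_of_lt_of_le hpos this⟩
    have haeD : ∀ᵐ ω ∂P, ω ∈ D := by
      have h0 : P Dᶜ = 0 := ae_eq_univ.mp hcase
      exact MeasureTheory.ae_iff.mpr (by simpa [Set.compl_def] using h0)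
    have haeE : ∀ᵐ ω ∂P, ω ∈ ⋃ N, EN N := by
      filter_upwards [haeD] with ω hω
      apply hFE
      exact Set.mem_iInter.mp (Set.mem_iInter.mp hω q0) hq0b
    have hrestr : P.restrict (⋃ N, EN N) = P := Measure.restrict_eq_self_of_ae_mem haeE
    have htend := tendsto_setIntegral_of_monotone hENm hmono
      (f := g') (by rw [IntegrableOn, hrestr]; exact hg'i)
    have hnonneg : ∀ N, 0 ≤ ∫ ω in EN N, g' ω ∂P := fun N =>
      maximal_ergodic hT.toMeasurePreserving hg'm hg'i N
    have hlim : 0 ≤ ∫ ω in ⋃ N, EN N, g' ω ∂P :=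
      ge_of_tendsto htend (Filter.Eventually.of_forall hnonneg)
    rw [hrestr] at hlim
    have : ∫ ω, g' ω ∂P = -(q0:ℝ) := by
      rw [hg']
      rw [integral_sub hgi (integrable_const _), hzero, integral_const]
      simp
    rw [this] at hlim
    linarith

lemma birkhoffSum_sub_const (T : Ω → Ω) (g : Ω → ℝ) (c : ℝ) (n : ℕ) (ω : Ω) :
    birkhoffSum T (fun x => g x - c) n ω = birkhoffSum T g n ω - n * c := by
  simp [birkhoffSum, Finset.sum_sub_distrib, mul_comm]

lemma birkhoffSum_neg' (T : Ω → Ω) (g : Ω → ℝ) (n : ℕ) (ω : Ω) :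
    birkhoffSum T (fun x => -(g x)) n ω = -birkhoffSum T g n ω := by
  simp [birkhoffSum]

/-- Birkhoff's pointwise ergodic theorem. -/
lemma birkhoff_ergodic {P : Measure Ω} [IsProbabilityMeasure P] {T : Ω → Ω} {g : Ω → ℝ}
    (hT : Ergodic T P) (hg : Measurable g) (hgi : Integrable g P) :
    ∀ᵐ ω ∂P, Tendsto (fun n : ℕ => birkhoffSum T g n ω / n) atTop (𝓝 (∫ ω, g ω ∂P)) := by
  set c := ∫ ω, g ω ∂P with hc
  set g0 := fun ω => g ω - c with hg0
  have hg0m : Measurable g0 := hg.sub measurable_const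
  have hg0i : Integrable g0 P := hgi.sub (integrable_const _)
  have hzero : ∫ ω, g0 ω ∂P = 0 := by
    rw [hg0]
    rw [integral_sub hgi (integrable_const _), integral_const]
    simp [hc]
  have hzero' : ∫ ω, -(g0 ω) ∂P = 0 := by rw [integral_neg, hzero, neg_zero]
  have key : ∀ᵐ ω ∂P, ∀ k : ℕ,
      (∀ᶠ n : ℕ in atTop, birkhoffSum T g0 n ω ≤ n * (1/((k:ℝ)+1))) ∧
      (∀ᶠ n : ℕ in atTop, birkhoffSum T (fun x => -(g0 x)) n ω ≤ n * (1/((k:ℝ)+1))) := by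
    rw [ae_all_iff]
    intro k
    have hk : (0:ℝ) < 1/((k:ℝ)+1) := by positivity
    exact (ae_eventually_birkhoffSum_le hT hg0m hg0i hzero hk).and
      (ae_eventually_birkhoffSum_le hT (hg0m.neg) (hg0i.neg) hzero' hk)
  filter_upwards [key] with ω hω
  have h0 : Tendsto (fun n : ℕ => birkhoffSum T g0 n ω / n) atTop (𝓝 0) := by
    rw [Metric.tendsto_atTop]
    intro ε hε
    obtain ⟨k, hk⟩ := exists_nat_one_div_lt hε
    obtain ⟨N1, hN1⟩ := eventually_atTop.mp (hω k).1
    obtain ⟨N2, hN2⟩ := eventually_atTop.mp (hω k).2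
    refine ⟨max (max N1 N2) 1, fun n hn => ?_⟩
    have hn1 : N1 ≤ n := le_trans (le_max_left _ _) (le_trans (le_max_left _ _) hn)
    have hn2 : N2 ≤ n := le_trans (le_max_right _ _) (le_trans (le_max_left _ _) hn)
    have hnpos : (0:ℝ) < n := by
      have : 1 ≤ n := le_trans (le_max_right _ _) hn
      exact_mod_cast this
    have hb1 := hN1 n hn1
    have hb2 := hN2 n hn2
    rw [birkhoffSum_neg'] at hb2
    have habs : |birkhoffSum T g0 n ω| ≤ n * (1/((k:ℝ)+1)) :=
      abs_le.mpr ⟨by linarith, hb1⟩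
    have habs2 : |birkhoffSum T g0 n ω / n| < ε := by
      rw [abs_div, abs_of_nonneg (le_of_lt hnpos), div_lt_iff₀ hnpos]
      nlinarith
    rw [Real.dist_eq, sub_zero]
    exact habs2
  have h1 := h0.add (tendsto_const_nhds (x := c))
  rw [zero_add] at h1
  apply h1.congr'
  filter_upwards [eventually_ge_atTop 1] with n hn
  have hnne : (n:ℝ) ≠ 0 := by
    have : (0:ℝ) < n := by exact_mod_cast hn
    linarith
  have hsum : birkhoffSum T g0 n ω = birkhoffSum T g n ω - n * c :=
    birkhoffSum_sub_const T g c n ω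
  rw [hsum]
  field_simp
  ring
end Aux

/-- Uniform ergodic theorem under finite `L¹(μ)` bracketing: for a stationary ergodic real
sequence `Y_i = f ∘ T^(i-1)` with marginal `μ`, and a family `𝒢` of integrable Borel
functions admitting finite `ε`-brackets in `L¹(μ)` for every `ε > 0`, the empirical averages
converge to the expectations uniformly over `𝒢`, almost surely. -/
theorem ergodic_unif_bracketing
    {Ω : Type*} [MeasurableSpace Ω] (P : Measure Ω) [IsProbabilityMeasure P]
    (T : Ω → Ω) (hT : Ergodic T P)
    (f : Ω → ℝ) (hf : Measurable f)
    (𝒢 : Set (ℝ → ℝ))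
    (h𝒢 : ∀ g ∈ 𝒢, Measurable g ∧ Integrable g (P.map f))
    (hbracket : ∀ ε > (0 : ℝ), ∃ B : Finset ((ℝ → ℝ) × (ℝ → ℝ)),
      (∀ p ∈ B, Measurable p.1 ∧ Measurable p.2 ∧
        Integrable p.1 (P.map f) ∧ Integrable p.2 (P.map f) ∧
        ∫ x, (p.2 x - p.1 x) ∂(P.map f) ≤ ε) ∧
      ∀ g ∈ 𝒢, ∃ p ∈ B, ∀ x : ℝ, p.1 x ≤ g x ∧ g x ≤ p.2 x) :
    ∀ᵐ ω ∂P, ∀ ε > (0 : ℝ), ∀ᶠ n : ℕ in atTop, ∀ g ∈ 𝒢,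
      |(1 / (n : ℝ)) * ∑ i ∈ Finset.range n, g (f (T^[i] ω))
        - ∫ x, g x ∂(P.map f)| ≤ ε := by
  have hbr : ∀ k : ℕ, ∃ B : Finset ((ℝ → ℝ) × (ℝ → ℝ)),
      (∀ p ∈ B, Measurable p.1 ∧ Measurable p.2 ∧
        Integrable p.1 (P.map f) ∧ Integrable p.2 (P.map f) ∧
        ∫ x, (p.2 x - p.1 x) ∂(P.map f) ≤ 1/((k:ℝ)+1)) ∧
      ∀ g ∈ 𝒢, ∃ p ∈ B, ∀ x : ℝ, p.1 x ≤ g x ∧ g x ≤ p.2 x := fun k =>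
    hbracket (1/((k:ℝ)+1)) (by positivity)
  choose B hB1 hB2 using hbr
  -- transfer integrals and integrability through `f`
  have hint : ∀ (h : ℝ → ℝ), Measurable h → Integrable h (P.map f) →
      Integrable (h ∘ f) P ∧ ∫ x, h x ∂(P.map f) = ∫ ω, (h ∘ f) ω ∂P := fun h hm hi =>
    ⟨(integrable_map_measure hm.aestronglyMeasurable hf.aemeasurable).mp hi,
     integral_map hf.aemeasurable hm.aestronglyMeasurable⟩
  have key : ∀ᵐ ω ∂P, ∀ k : ℕ, ∀ p ∈ (B k : Set ((ℝ → ℝ) × (ℝ → ℝ))),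
      Tendsto (fun n : ℕ => birkhoffSum T (p.1 ∘ f) n ω / n) atTop
        (𝓝 (∫ x, p.1 x ∂(P.map f))) ∧
      Tendsto (fun n : ℕ => birkhoffSum T (p.2 ∘ f) n ω / n) atTop
        (𝓝 (∫ x, p.2 x ∂(P.map f))) := by
    rw [ae_all_iff]
    intro k
    rw [ae_ball_iff (B k).countable_toSet]
    intro p hp
    rw [Finset.mem_coe] at hp
    obtain ⟨hm1, hm2, hi1, hi2, -⟩ := hB1 k p hp
    obtain ⟨hci1, heq1⟩ := hint p.1 hm1 hi1
    obtain ⟨hci2, heq2⟩ := hint p.2 hm2 hi2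
    rw [heq1, heq2]
    exact (birkhoff_ergodic hT (hm1.comp hf) hci1).and
      (birkhoff_ergodic hT (hm2.comp hf) hci2)
  filter_upwards [key] with ω hω
  intro ε hε
  obtain ⟨k, hk⟩ := exists_nat_one_div_lt (half_pos hε)
  have hev : ∀ᶠ n : ℕ in atTop, ∀ p ∈ B k,
      |birkhoffSum T (p.1 ∘ f) n ω / n - ∫ x, p.1 x ∂(P.map f)| ≤ ε/2 ∧
      |birkhoffSum T (p.2 ∘ f) n ω / n - ∫ x, p.2 x ∂(P.map f)| ≤ ε/2 := by
    rw [eventually_all_finset]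
    intro p hp
    obtain ⟨h1, h2⟩ := hω k p (Finset.mem_coe.mpr hp)
    have e1 := Metric.tendsto_atTop.mp h1 (ε/2) (half_pos hε)
    have e2 := Metric.tendsto_atTop.mp h2 (ε/2) (half_pos hε)
    obtain ⟨N1, hN1⟩ := e1
    obtain ⟨N2, hN2⟩ := e2
    rw [eventually_atTop]
    refine ⟨max N1 N2, fun n hn => ⟨?_, ?_⟩⟩
    · have := hN1 n (le_trans (le_max_left _ _) hn)
      rw [Real.dist_eq] at this
      linarith
    · have := hN2 n (le_trans (le_max_right _ _) hn)
      rw [Real.dist_eq] at this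
      linarith
  filter_upwards [hev, eventually_ge_atTop 1] with n hn hn1
  intro g hg
  obtain ⟨p, hp, hbrk⟩ := hB2 k g hg
  obtain ⟨hm1, hm2, hi1, hi2, hbd⟩ := hB1 k p hp
  obtain ⟨hb1, hb2⟩ := hn p hp
  have hnpos : (0:ℝ) < n := by exact_mod_cast hn1
  -- sums comparison
  have hsum_le1 : birkhoffSum T (p.1 ∘ f) n ω ≤ ∑ i ∈ Finset.range n, g (f (T^[i] ω)) :=
    Finset.sum_le_sum fun i _ => (hbrk (f (T^[i] ω))).1
  have hsum_le2 : (∑ i ∈ Finset.range n, g (f (T^[i] ω))) ≤ birkhoffSum T (p.2 ∘ f) n ω :=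
    Finset.sum_le_sum fun i _ => (hbrk (f (T^[i] ω))).2
  have havg : (1 / (n : ℝ)) * ∑ i ∈ Finset.range n, g (f (T^[i] ω))
      = (∑ i ∈ Finset.range n, g (f (T^[i] ω))) / n := by
    rw [one_div, inv_mul_eq_div]
  -- integral comparisons
  have hIul : ∫ x, p.2 x ∂(P.map f) - ∫ x, p.1 x ∂(P.map f) ≤ 1/((k:ℝ)+1) := by
    rw [← integral_sub hi2 hi1]
    exact hbd
  have hIlg : ∫ x, p.1 x ∂(P.map f) ≤ ∫ x, g x ∂(P.map f) :=
    integral_mono hi1 (h𝒢 g hg).2 fun x => (hbrk x).1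
  have hIgu : ∫ x, g x ∂(P.map f) ≤ ∫ x, p.2 x ∂(P.map f) :=
    integral_mono (h𝒢 g hg).2 hi2 fun x => (hbrk x).2
  have hdiv1 : birkhoffSum T (p.1 ∘ f) n ω / n
      ≤ (∑ i ∈ Finset.range n, g (f (T^[i] ω))) / n := by gcongr
  have hdiv2 : (∑ i ∈ Finset.range n, g (f (T^[i] ω))) / n
      ≤ birkhoffSum T (p.2 ∘ f) n ω / n := by gcongr
  rw [havg]
  rw [abs_le] at hb1 hb2 ⊢
  obtain ⟨hb1l, hb1r⟩ := hb1
  obtain ⟨hb2l, hb2r⟩ := hb2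
  constructor
  · linarith
  · linarith
end

section
/- Let n ≥ 1, y_1, …, y_n ∈ ℝ and k ≥ 1. For an assignment x : {1, …, n} → {1, …, k}, set σ̂²_x = (1/n) Σ_{j : I_j ≠ ∅} Σ_{i ∈ I_j} (y_i − m̂_j)², where I_j = {i : x_i = j} and m̂_j is the average of the y_i over I_j. Then there exists a partition (I_1, …, I_k) of ℝ into k pairwise disjoint intervals whose union is ℝ such that the assignment x defined by x_i = j if and only if y_i ∈ I_j satisfies σ̂²_x = min over all assignments x' : {1, …, n} → {1, …, k} of σ̂²_{x'}. In other words, the minimal within-cluster sum of squares over all k-clusterings of real data is achieved by a clustering into intervals. -/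
open scoped BigOperators

/-- `1/n` times the within-cluster sum of squared deviations from cluster means, for the
clustering of `y` induced by the assignment `x` (empty clusters contribute `0`). -/
noncomputable def withinSS (n k : ℕ) (y : Fin n → ℝ) (x : Fin n → Fin k) : ℝ :=
  (1 / (n : ℝ)) * ∑ j : Fin k, ∑ i ∈ Finset.univ.filter (fun i => x i = j),
    (y i - (∑ i' ∈ Finset.univ.filter (fun i' => x i' = j), y i') /
      ((Finset.univ.filter (fun i' => x i' = j)).card : ℝ)) ^ 2


open Classical

/-- index of a nearest center, ties broken to smallest index -/
noncomputable def nearIdx {k : ℕ} (hk : 0 < k) (c : Fin k → ℝ) (t : ℝ) : Fin k :=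
  (Finset.univ.filter (fun j => ∀ j', (t - c j)^2 ≤ (t - c j')^2)).min' (by
    obtain ⟨j, -, hj⟩ := Finset.exists_min_image (Finset.univ : Finset (Fin k))
      (fun j => (t - c j)^2) ⟨⟨0, hk⟩, Finset.mem_univ _⟩
    exact ⟨j, Finset.mem_filter.mpr ⟨Finset.mem_univ _, fun j' => hj j' (Finset.mem_univ _)⟩⟩)

lemma nearIdx_mem {k : ℕ} (hk : 0 < k) (c : Fin k → ℝ) (t : ℝ) :
    ∀ j', (t - c (nearIdx hk c t))^2 ≤ (t - c j')^2 := by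
  have := Finset.min'_mem (Finset.univ.filter (fun j => ∀ j', (t - c j)^2 ≤ (t - c j')^2))
    (by
    obtain ⟨j, -, hj⟩ := Finset.exists_min_image (Finset.univ : Finset (Fin k))
      (fun j => (t - c j)^2) ⟨⟨0, hk⟩, Finset.mem_univ _⟩
    exact ⟨j, Finset.mem_filter.mpr ⟨Finset.mem_univ _, fun j' => hj j' (Finset.mem_univ _)⟩⟩)
  exact (Finset.mem_filter.mp this).2

lemma nearIdx_le {k : ℕ} (hk : 0 < k) (c : Fin k → ℝ) (t : ℝ) (j : Fin k)
    (hj : ∀ j', (t - c j)^2 ≤ (t - c j')^2) : nearIdx hk c t ≤ j :=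
  Finset.min'_le _ _ (Finset.mem_filter.mpr ⟨Finset.mem_univ _, hj⟩)

lemma affine_key (cj cj' t₁ t t₂ : ℝ) (h₁ : t₁ ≤ t) (h₂ : t ≤ t₂)
    (ha : (t₁ - cj)^2 ≤ (t₁ - cj')^2) (hb : (t₂ - cj)^2 ≤ (t₂ - cj')^2) :
    (t - cj)^2 ≤ (t - cj')^2 := by
  rcases eq_or_lt_of_le (h₁.trans h₂) with h | h
  · have ht : t = t₁ := le_antisymm (h ▸ h₂) h₁
    rw [ht]; exact ha
  · nlinarith [mul_nonneg (sub_nonneg.2 h₂) (sub_nonneg.2 ha),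
      mul_nonneg (sub_nonneg.2 h₁) (sub_nonneg.2 hb), h]

lemma nearIdx_ordConn {k : ℕ} (hk : 0 < k) (c : Fin k → ℝ) {t₁ t t₂ : ℝ} {j : Fin k}
    (h₁ : t₁ ≤ t) (h₂ : t ≤ t₂) (e₁ : nearIdx hk c t₁ = j) (e₂ : nearIdx hk c t₂ = j) :
    nearIdx hk c t = j := by
  have hmem : ∀ j', (t - c j)^2 ≤ (t - c j')^2 := by
    intro j'
    exact affine_key _ _ _ _ _ h₁ h₂ (e₁ ▸ nearIdx_mem hk c t₁ j') (e₂ ▸ nearIdx_mem hk c t₂ j')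
  have hle : nearIdx hk c t ≤ j := nearIdx_le hk c t j hmem
  rcases eq_or_lt_of_le hle with h | h
  · exact h
  · exfalso
    set j₂ := nearIdx hk c t with hj₂
    have h1 : (t - c j₂)^2 ≤ (t - c j)^2 := nearIdx_mem hk c t j
    have h2 : (t - c j)^2 ≤ (t - c j₂)^2 := hmem j₂
    have heq : (t - c j₂)^2 = (t - c j)^2 := le_antisymm h1 h2
    rcases lt_trichotomy (c j) (c j₂) with hc | hc | hc
    · -- slope of s ↦ (s-cj₂)² - (s-cj)² is 2(cj - cj₂) < 0 ; value 0 at t, ≥0 at t₂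
      -- forces t₂ = t
      have g2 : (t₂ - c j)^2 ≤ (t₂ - c j₂)^2 := e₂ ▸ nearIdx_mem hk c t₂ j₂
      have ht2 : t₂ = t := by nlinarith
      have : j₂ = j := by rw [hj₂, ← ht2, e₂]
      exact absurd this (ne_of_lt h)
    · have : nearIdx hk c t₁ ≤ j₂ := by
        apply nearIdx_le
        intro j'
        have := e₁ ▸ nearIdx_mem hk c t₁ j'
        calc (t₁ - c j₂)^2 = (t₁ - c j)^2 := by rw [hc]
        _ ≤ (t₁ - c j')^2 := this
      rw [e₁] at this
      exact absurd this (not_le.mpr h)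
    · have g1 : (t₁ - c j)^2 ≤ (t₁ - c j₂)^2 := e₁ ▸ nearIdx_mem hk c t₁ j₂
      have ht1 : t₁ = t := by nlinarith
      have : j₂ = j := by rw [hj₂, ← ht1, e₁]
      exact absurd this (ne_of_lt h)

lemma sum_sq_mean_le {ι : Type*} (S : Finset ι) (w : ι → ℝ) (c : ℝ) :
    ∑ i ∈ S, (w i - (∑ i' ∈ S, w i') / (S.card : ℝ))^2 ≤ ∑ i ∈ S, (w i - c)^2 := by
  rcases S.eq_empty_or_nonempty with rfl | hS
  · simp
  · set μ := (∑ i' ∈ S, w i') / (S.card : ℝ) with hμ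
    have hcard : (S.card : ℝ) ≠ 0 := Nat.cast_ne_zero.mpr hS.card_ne_zero
    have hsum : ∑ i' ∈ S, w i' = (S.card : ℝ) * μ := by rw [hμ]; field_simp
    have key : ∑ i ∈ S, ((w i - c)^2 - (w i - μ)^2) = (S.card : ℝ) * (μ - c)^2 := by
      have hcong : ∑ i ∈ S, ((w i - c)^2 - (w i - μ)^2)
          = ∑ i ∈ S, ((μ - c) * (2 * w i) + (-(μ - c) * (c + μ))) :=
        Finset.sum_congr rfl (fun i _ => by ring)
      rw [hcong, Finset.sum_add_distrib, ← Finset.mul_sum, Finset.sum_const, nsmul_eq_mul,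
        ← Finset.mul_sum, hsum]
      ring
    have h2 : ∑ i ∈ S, ((w i - c)^2 - (w i - μ)^2) ≥ 0 := by
      rw [key]; exact mul_nonneg (Nat.cast_nonneg _) (sq_nonneg _)
    rw [Finset.sum_sub_distrib] at h2
    linarith

/-- The minimal within-cluster sum of squares over all `k`-clusterings of real data is
achieved by a clustering of `ℝ` into `k` intervals. -/
theorem kmeans_optimal_intervals
    (n k : ℕ) (hn : 1 ≤ n) (hk : 1 ≤ k) (y : Fin n → ℝ) :
    ∃ I : Fin k → Set ℝ,
      (∀ j, (I j).OrdConnected) ∧ Pairwise (Function.onFun Disjoint I) ∧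
      (⋃ j, I j) = Set.univ ∧
      ∃ x : Fin n → Fin k,
        (∀ i : Fin n, ∀ j : Fin k, x i = j ↔ y i ∈ I j) ∧
        ∀ x' : Fin n → Fin k, withinSS n k y x ≤ withinSS n k y x' := by
  have hk' : 0 < k := hk
  haveI : Nonempty (Fin k) := ⟨⟨0, hk'⟩⟩
  -- minimizer over all assignments
  obtain ⟨x₀, hx₀⟩ := Finite.exists_min (withinSS n k y)
  -- centers = cluster means of x₀
  set c : Fin k → ℝ := fun j =>
    (∑ i' ∈ Finset.univ.filter (fun i' => x₀ i' = j), y i') /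
      ((Finset.univ.filter (fun i' => x₀ i' = j)).card : ℝ) with hc
  set g : ℝ → Fin k := nearIdx hk' c with hg
  refine ⟨fun j => g ⁻¹' {j}, ?_, ?_, ?_, fun i => g (y i), fun i j => Iff.rfl, ?_⟩
  · intro j
    constructor
    intro t₁ h₁ t₂ h₂ t ht
    exact nearIdx_ordConn hk' c ht.1 ht.2 h₁ h₂
  · intro j j' hne
    simp only [Function.onFun, Set.disjoint_left]
    intro t htj htj'
    exact hne ((htj.symm.trans htj') ▸ rfl)
  · ext t
    simp only [Set.mem_iUnion, Set.mem_univ, iff_true]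
    exact ⟨g t, rfl⟩
  · intro x'
    refine le_trans ?_ (hx₀ x')
    set x : Fin n → Fin k := fun i => g (y i) with hx
    -- step 1: withinSS x ≤ (1/n) * ∑ i, (y i - c (x i))^2
    have step1 : withinSS n k y x ≤ (1 / (n : ℝ)) * ∑ i, (y i - c (x i))^2 := by
      rw [withinSS]
      apply mul_le_mul_of_nonneg_left _ (by positivity)
      rw [← Finset.sum_fiberwise (Finset.univ) x (fun i => (y i - c (x i))^2)]
      apply Finset.sum_le_sum
      intro j _
      calc ∑ i ∈ Finset.univ.filter (fun i => x i = j),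
            (y i - (∑ i' ∈ Finset.univ.filter (fun i' => x i' = j), y i') /
              ((Finset.univ.filter (fun i' => x i' = j)).card : ℝ)) ^ 2
          ≤ ∑ i ∈ Finset.univ.filter (fun i => x i = j), (y i - c j)^2 :=
            sum_sq_mean_le _ y (c j)
        _ = ∑ i ∈ Finset.univ.filter (fun i => x i = j), (y i - c (x i))^2 := by
            apply Finset.sum_congr rfl
            intro i hi
            rw [(Finset.mem_filter.mp hi).2]
    -- step 2: pointwise nearest-center
    have step2 : (1 / (n : ℝ)) * ∑ i, (y i - c (x i))^2
        ≤ (1 / (n : ℝ)) * ∑ i, (y i - c (x₀ i))^2 := by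
      apply mul_le_mul_of_nonneg_left _ (by positivity)
      apply Finset.sum_le_sum
      intro i _
      exact nearIdx_mem hk' c (y i) (x₀ i)
    -- step 3: rewrite RHS as withinSS x₀
    have step3 : (1 / (n : ℝ)) * ∑ i, (y i - c (x₀ i))^2 = withinSS n k y x₀ := by
      rw [withinSS]
      congr 1
      rw [← Finset.sum_fiberwise (Finset.univ) x₀ (fun i => (y i - c (x₀ i))^2)]
      apply Finset.sum_congr rfl
      intro j _
      apply Finset.sum_congr rfl
      intro i hi
      rw [(Finset.mem_filter.mp hi).2, hc]
    calc withinSS n k y x ≤ _ := step1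
      _ ≤ _ := step2
      _ = _ := step3
end

section
/- Let k ≥ 1 be an integer, β_1, …, β_k > 0, α_{2,1}, …, α_{2,k} ∈ ℝ, and α_1 ∈ ℝ with α_1 − Σ_{j=1}^k α_{2,j}²/β_j > 0. For η < 0 and θ ∈ ℝ define A(η, θ) = −θ²/(4η) − (1/2) log(−2η). Then the Lebesgue integral ∫_{(−∞,0)} ∫_{ℝ^k} exp( α_1 η + Σ_{j=1}^k α_{2,j} θ_j − Σ_{j=1}^k β_j A(η, θ_j) ) dθ_1 ⋯ dθ_k dη equals 2^{k + (Σ_{j=1}^k β_j)/2} · π^{k/2} · Γ( (Σ_{j=1}^k β_j + k + 2)/2 ) / ( (∏_{j=1}^k √β_j) · ( α_1 − Σ_{j=1}^k α_{2,j}²/β_j )^{(Σ_{j=1}^k β_j + k + 2)/2} ). -/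
open MeasureTheory
open scoped BigOperators

lemma gauss_lin (b c : ℝ) (hb : 0 < b) :
    ∫ x : ℝ, Real.exp (-b * x ^ 2 + c * x)
      = Real.sqrt (Real.pi / b) * Real.exp (c ^ 2 / (4 * b)) := by
  have hb' : (-(b:ℂ)).re < 0 := by simpa using hb
  have h := integral_cexp_quadratic hb' (c : ℂ) 0
  have h2 : ∫ x : ℝ, Complex.exp (-(b:ℂ) * x ^ 2 + c * x + 0) =
      ((∫ x : ℝ, Real.exp (-b * x ^ 2 + c * x) : ℝ) : ℂ) := by
    rw [show (fun x : ℝ => Complex.exp (-(b:ℂ) * x ^ 2 + c * x + 0))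
        = fun x : ℝ => ((Real.exp (-b * x ^ 2 + c * x) : ℝ) : ℂ) from funext fun x => by
      rw [Complex.ofReal_exp]; push_cast; ring_nf]
    exact integral_ofReal
  rw [h2] at h
  have h3 : ((Real.sqrt (Real.pi / b) * Real.exp (c ^ 2 / (4 * b)) : ℝ) : ℂ)
      = (↑Real.pi / -(-(b:ℂ))) ^ (1 / 2 : ℂ) * Complex.exp (0 - (c:ℂ) ^ 2 / (4 * -(b:ℂ))) := by
    rw [Complex.ofReal_mul, Complex.ofReal_exp, Real.sqrt_eq_rpow,
      Complex.ofReal_cpow (by positivity)]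
    push_cast
    rw [neg_neg]
    congr 1
    rw [zero_sub, mul_neg, div_neg, neg_neg]
  rw [← h3] at h
  exact_mod_cast h

lemma inner_int (k : ℕ) (β : Fin k → ℝ) (hβ : ∀ j, 0 < β j)
    (α2 : Fin k → ℝ) (α1 : ℝ) {η : ℝ} (hη : η < 0) :
    (∫ θ : Fin k → ℝ, Real.exp (α1 * η + (∑ j, α2 j * θ j)
        - ∑ j, β j * (-(θ j) ^ 2 / (4 * η) - (1 / 2) * Real.log (-2 * η))))
      = ((2 : ℝ) ^ ((k : ℝ) + (∑ j, β j) / 2) * Real.pi ^ ((k : ℝ) / 2)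
          / (∏ j, Real.sqrt (β j)))
        * ((-η) ^ (((∑ j, β j) + (k : ℝ)) / 2)
          * Real.exp (-((α1 - ∑ j, (α2 j) ^ 2 / β j) * -η))) := by
  have hη0 : (0:ℝ) < -η := by linarith
  have hηne : η ≠ 0 := ne_of_lt hη
  have hb : ∀ j, 0 < β j / (-4 * η) := fun j => div_pos (hβ j) (by linarith)
  -- rewrite the exponent
  have hrw : ∀ θ : Fin k → ℝ,
      α1 * η + (∑ j, α2 j * θ j)
        - ∑ j, β j * (-(θ j) ^ 2 / (4 * η) - (1 / 2) * Real.log (-2 * η))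
      = (α1 * η + (∑ j, β j) * ((1 / 2) * Real.log (-2 * η)))
        + ∑ j, (-(β j / (-4 * η)) * (θ j) ^ 2 + α2 j * (θ j)) := by
    intro θ
    simp only [mul_sub, Finset.sum_sub_distrib, ← Finset.sum_mul, Finset.sum_add_distrib]
    have : (∑ j, -(β j / (-4 * η)) * (θ j) ^ 2)
        = ∑ j, -(β j * (-(θ j) ^ 2 / (4 * η))) :=
      Finset.sum_congr rfl fun j _ => by field_simp
    rw [this, Finset.sum_neg_distrib]
    ring
  simp_rw [hrw, Real.exp_add, Real.exp_sum]
  rw [MeasureTheory.integral_const_mul,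
    integral_fintype_prod_volume_eq_prod
      (f := fun j (x : ℝ) => Real.exp (-(β j / (-4 * η)) * x ^ 2 + α2 j * x))]
  have hg : ∀ j, (∫ x : ℝ, Real.exp (-(β j / (-4 * η)) * x ^ 2 + α2 j * x))
      = Real.sqrt (Real.pi * (-4 * η) / β j) * Real.exp (-η * ((α2 j) ^ 2 / β j)) := by
    intro j
    rw [gauss_lin _ _ (hb j)]
    congr 2
    · rw [div_div_eq_mul_div]
    · field_simp
  simp_rw [hg]
  rw [Finset.prod_mul_distrib, ← Real.exp_sum, ← Finset.mul_sum]
  -- now pure positive algebra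
  have hsq : ∀ j, Real.sqrt (Real.pi * (-4 * η) / β j)
      = Real.sqrt (Real.pi * (-4 * η)) / Real.sqrt (β j) := fun j =>
    Real.sqrt_div (by nlinarith [Real.pi_pos] : (0:ℝ) ≤ Real.pi * (-4 * η)) _
  simp_rw [hsq]
  rw [Finset.prod_div_distrib, Finset.prod_const, Finset.card_univ, Fintype.card_fin]
  have hsqpow : (Real.sqrt (Real.pi * (-4 * η))) ^ k
      = Real.pi ^ ((k : ℝ) / 2) * (2 : ℝ) ^ (k : ℝ) * (-η) ^ ((k : ℝ) / 2) := by
    rw [Real.sqrt_eq_rpow, ← Real.rpow_natCast (_ ^ (1/2 : ℝ)) k,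
      ← Real.rpow_mul (by nlinarith [Real.pi_pos] : (0:ℝ) ≤ Real.pi * (-4 * η))]
    have h4 : Real.pi * (-4 * η) = Real.pi * (4 * -η) := by ring
    rw [h4, Real.mul_rpow Real.pi_nonneg (by positivity),
      Real.mul_rpow (by norm_num) hη0.le]
    have h42 : (4 : ℝ) ^ (1 / 2 * (k : ℝ)) = (2:ℝ) ^ (k : ℝ) := by
      rw [show (4:ℝ) = (2:ℝ) ^ (2:ℝ) by
        rw [show (2:ℝ) = ((2:ℕ):ℝ) by norm_num, Real.rpow_natCast]; norm_num,
        ← Real.rpow_mul (by norm_num)]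
      congr 1
      ring
    rw [h42]
    ring_nf
  rw [hsqpow]
  have hlog : Real.exp ((∑ j, β j) * ((1 / 2) * Real.log (-2 * η)))
      = (-2 * η) ^ ((∑ j, β j) / 2) := by
    rw [Real.rpow_def_of_pos (by linarith : (0:ℝ) < -2 * η)]
    congr 1
    ring
  rw [hlog]
  have h2η : (-2 * η) ^ ((∑ j, β j) / 2)
      = (2:ℝ) ^ ((∑ j, β j) / 2) * (-η) ^ ((∑ j, β j) / 2) := by
    rw [show (-2 * η : ℝ) = 2 * -η by ring, Real.mul_rpow (by norm_num) hη0.le]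
  rw [h2η]
  have h2add : (2:ℝ) ^ ((k : ℝ) + (∑ j, β j) / 2)
      = (2:ℝ) ^ (k : ℝ) * (2:ℝ) ^ ((∑ j, β j) / 2) := Real.rpow_add (by norm_num) _ _
  have hηadd : (-η) ^ (((∑ j, β j) + (k : ℝ)) / 2)
      = (-η) ^ ((∑ j, β j) / 2) * (-η) ^ ((k : ℝ) / 2) := by
    rw [← Real.rpow_add hη0]
    ring_nf
  rw [h2add, hηadd]
  have hexp : Real.exp (α1 * η) * Real.exp (-η * ∑ j, (α2 j) ^ 2 / β j)
      = Real.exp (-((α1 - ∑ j, (α2 j) ^ 2 / β j) * -η)) := by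
    rw [← Real.exp_add]
    congr 1
    ring
  rw [← hexp]
  ring

/-- Normalizing constant of the conjugate exponential prior for Gaussian emissions with
unknown common variance: with `A(η, θ) = -θ²/(4η) - (1/2) log(-2η)`, the integral of
`exp(α₁ η + ∑ⱼ α₂ⱼ θⱼ - ∑ⱼ βⱼ A(η, θⱼ))` over `η < 0`, `θ ∈ ℝᵏ` equals the stated
closed-form expression involving the Gamma function. -/
theorem conjugate_prior_normalizing_constant
    (k : ℕ) (hk : 1 ≤ k)
    (β : Fin k → ℝ) (hβ : ∀ j, 0 < β j)
    (α2 : Fin k → ℝ) (α1 : ℝ)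
    (hα : 0 < α1 - ∑ j, (α2 j) ^ 2 / β j) :
    (∫ η in Set.Iio (0 : ℝ), ∫ θ : Fin k → ℝ,
        Real.exp (α1 * η + (∑ j, α2 j * θ j)
          - ∑ j, β j * (-(θ j) ^ 2 / (4 * η) - (1 / 2) * Real.log (-2 * η))))
      = (2 : ℝ) ^ ((k : ℝ) + (∑ j, β j) / 2) * Real.pi ^ ((k : ℝ) / 2) *
          Real.Gamma (((∑ j, β j) + (k : ℝ) + 2) / 2) /
        ((∏ j, Real.sqrt (β j)) *
          (α1 - ∑ j, (α2 j) ^ 2 / β j) ^ (((∑ j, β j) + (k : ℝ) + 2) / 2)) := by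
  set B := ∑ j, β j with hB
  set S := ∑ j, (α2 j) ^ 2 / β j with hS
  set P := ∏ j, Real.sqrt (β j) with hP
  set r := α1 - S with hr
  set a := (B + (k : ℝ) + 2) / 2 with ha
  have hP0 : 0 < P := Finset.prod_pos fun j _ => Real.sqrt_pos.mpr (hβ j)
  have hB0 : 0 < B := Finset.sum_pos (fun j _ => hβ j) (Finset.univ_nonempty_iff.mpr
    (by exact Fin.pos_iff_nonempty.mp (by omega)))
  have ha0 : 0 < a := by
    have : (0:ℝ) < (k : ℝ) := by exact_mod_cast Nat.pos_of_ne_zero (by omega)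
    rw [ha]; positivity
  have step1 : (∫ η in Set.Iio (0 : ℝ), ∫ θ : Fin k → ℝ,
        Real.exp (α1 * η + (∑ j, α2 j * θ j)
          - ∑ j, β j * (-(θ j) ^ 2 / (4 * η) - (1 / 2) * Real.log (-2 * η))))
      = ∫ η in Set.Iio (0 : ℝ),
          ((2 : ℝ) ^ ((k : ℝ) + B / 2) * Real.pi ^ ((k : ℝ) / 2) / P)
            * ((-η) ^ ((B + (k : ℝ)) / 2) * Real.exp (-(r * -η))) := by
    refine setIntegral_congr_fun measurableSet_Iio fun η hη => ?_
    exact inner_int k β hβ α2 α1 hη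
  rw [step1, MeasureTheory.integral_const_mul,
    setIntegral_congr_set MeasureTheory.Iio_ae_eq_Iic,
    integral_comp_neg_Iic 0 (fun x => x ^ ((B + (k : ℝ)) / 2) * Real.exp (-(r * x)))]
  rw [neg_zero]
  have haux : ((B + (k : ℝ)) / 2) = a - 1 := by rw [ha]; ring
  rw [haux, Real.integral_rpow_mul_exp_neg_mul_Ioi ha0 hα]
  have hra : (0:ℝ) < r ^ a := Real.rpow_pos_of_pos hα a
  rw [Real.div_rpow (by norm_num) hα.le, Real.one_rpow]
  field_simp
end
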